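/- arXiv:2404.00755 — 9 statements merged into one kernel-verified Lean document; each statement's English description precedes it below -/
import Mathlib

section
/- Let N ≥ 1, c > 0, and for i = 1,…,N let m_i, ω_i > 0 and let f_i : ℝ³ → [0,∞) be integrable, writing p_i⁰ = √((c·m_i)² + |p|²). Define A⁰ = Σ_{i=1}^N ω_i ∫ f_i(p) dp and A⃗ = Σ_{i=1}^N ω_i ∫ (p/p_i⁰) f_i(p) dp ∈ ℝ³. Then (A⁰)² − |A⃗|² ≥ (Σ_{i=1}^N ω_i · c·m_i · ∫ f_i(p)/p_i⁰ dp)². -/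
open MeasureTheory
open scoped BigOperators

private lemma aux_final (t b : ℝ) (x : EuclideanSpace ℝ (Fin 3)) (hb : 0 ≤ b)
    (key : ∀ (v : EuclideanSpace ℝ (Fin 3)) (lam : ℝ), 0 ≤ lam → ‖v‖ ^ 2 + lam ^ 2 ≤ 1 →
      b * lam ≤ t - (inner ℝ x v : ℝ)) :
    b ^ 2 ≤ t ^ 2 - ‖x‖ ^ 2 := by
  rcases eq_or_lt_of_le (Real.sqrt_nonneg (‖x‖ ^ 2 + b ^ 2)) with hs | hs
  · have h0 : ‖x‖ ^ 2 + b ^ 2 = 0 := (Real.sqrt_eq_zero (by positivity)).mp hs.symm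
    have hb0 : b = 0 := by nlinarith [sq_nonneg ‖x‖, sq_nonneg b]
    have hx0 : ‖x‖ = 0 := by nlinarith [sq_nonneg ‖x‖, sq_nonneg b, norm_nonneg x]
    rw [hb0, hx0]
    nlinarith [sq_nonneg t]
  · set s : ℝ := Real.sqrt (‖x‖ ^ 2 + b ^ 2) with hsdef
    have hs2 : s ^ 2 = ‖x‖ ^ 2 + b ^ 2 := Real.sq_sqrt (by positivity)
    have hs0 : s ≠ 0 := ne_of_gt hs
    have hv : ‖(s⁻¹ • x : EuclideanSpace ℝ (Fin 3))‖ = s⁻¹ * ‖x‖ := by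
      rw [norm_smul, Real.norm_eq_abs, abs_of_pos (inv_pos.2 hs)]
    have h1 : ‖(s⁻¹ • x : EuclideanSpace ℝ (Fin 3))‖ ^ 2 + (b / s) ^ 2 ≤ 1 := by
      rw [hv]
      have e : (s⁻¹ * ‖x‖) ^ 2 + (b / s) ^ 2 = (‖x‖ ^ 2 + b ^ 2) / s ^ 2 := by
        field_simp
      rw [e, ← hs2, div_self (pow_ne_zero 2 hs0)]
    have hk := key (s⁻¹ • x) (b / s) (div_nonneg hb hs.le) h1
    rw [real_inner_smul_right, real_inner_self_eq_norm_sq] at hk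
    have hts : s ≤ t := by
      have h3 : b * (b / s) + s⁻¹ * ‖x‖ ^ 2 = s := by
        field_simp
        nlinarith [hs2]
      linarith
    nlinarith [hs2, hs.le, hts]

theorem stmt_2 (N : ℕ) (hN : 1 ≤ N) (c : ℝ) (hc : 0 < c)
    (m ω : Fin N → ℝ) (hm : ∀ i, 0 < m i) (hω : ∀ i, 0 < ω i)
    (f : Fin N → EuclideanSpace ℝ (Fin 3) → ℝ)
    (hint : ∀ i, Integrable (f i)) (hnn : ∀ i p, 0 ≤ f i p) :
    (∑ i, ω i * (c * m i) * ∫ p, f i p / Real.sqrt ((c * m i) ^ 2 + ‖p‖ ^ 2)) ^ 2 ≤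
      (∑ i, ω i * ∫ p, f i p) ^ 2 -
        ‖∑ i, ω i • ∫ p : EuclideanSpace ℝ (Fin 3),
            (f i p / Real.sqrt ((c * m i) ^ 2 + ‖p‖ ^ 2)) • p‖ ^ 2 := by
  have hcm : ∀ i : Fin N, 0 < c * m i := fun i => mul_pos hc (hm i)
  have hsqpos : ∀ (i : Fin N) (p : EuclideanSpace ℝ (Fin 3)),
      0 < Real.sqrt ((c * m i) ^ 2 + ‖p‖ ^ 2) := by
    intro i p
    apply Real.sqrt_pos.2
    nlinarith [sq_nonneg ‖p‖, sq_nonneg (c * m i), hcm i]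
  set g : Fin N → EuclideanSpace ℝ (Fin 3) → ℝ :=
    fun i p => f i p / Real.sqrt ((c * m i) ^ 2 + ‖p‖ ^ 2) with hgdef
  show (∑ i, ω i * (c * m i) * ∫ p, g i p) ^ 2 ≤
      (∑ i, ω i * ∫ p, f i p) ^ 2 -
        ‖∑ i, ω i • ∫ p : EuclideanSpace ℝ (Fin 3), g i p • p‖ ^ 2
  have hgnn : ∀ i p, 0 ≤ g i p := fun i p =>
    div_nonneg (hnn i p) (hsqpos i p).le
  have hcont : ∀ i : Fin N, Continuous fun p : EuclideanSpace ℝ (Fin 3) =>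
      (Real.sqrt ((c * m i) ^ 2 + ‖p‖ ^ 2))⁻¹ := by
    intro i
    exact (Real.continuous_sqrt.comp (by continuity)).inv₀ (fun p => (hsqpos i p).ne')
  have hgmeas : ∀ i, AEStronglyMeasurable (g i) volume := by
    intro i
    have : g i = fun p => f i p * (Real.sqrt ((c * m i) ^ 2 + ‖p‖ ^ 2))⁻¹ := by
      funext p; rw [hgdef]; simp [div_eq_mul_inv]
    rw [this]
    exact (hint i).aestronglyMeasurable.mul (hcont i).aestronglyMeasurable
  have hgle : ∀ (i : Fin N) (p : EuclideanSpace ℝ (Fin 3)),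
      g i p * Real.sqrt ((c * m i) ^ 2 + ‖p‖ ^ 2) = f i p := by
    intro i p
    exact div_mul_cancel₀ (f i p) (hsqpos i p).ne'
  have hnormle : ∀ (i : Fin N) (p : EuclideanSpace ℝ (Fin 3)),
      ‖p‖ ≤ Real.sqrt ((c * m i) ^ 2 + ‖p‖ ^ 2) := by
    intro i p
    rw [Real.le_sqrt (norm_nonneg p) (by positivity)]
    nlinarith [sq_nonneg (c * m i)]
  have hcmle : ∀ (i : Fin N) (p : EuclideanSpace ℝ (Fin 3)),
      c * m i ≤ Real.sqrt ((c * m i) ^ 2 + ‖p‖ ^ 2) := by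
    intro i p
    rw [Real.le_sqrt (hcm i).le (by positivity)]
    nlinarith [sq_nonneg ‖p‖]
  have hgint : ∀ i, Integrable (g i) := by
    intro i
    refine ((hint i).const_mul ((c * m i)⁻¹)).mono (hgmeas i) ?_
    filter_upwards with p
    rw [Real.norm_eq_abs, Real.norm_eq_abs, abs_of_nonneg (hgnn i p),
      abs_of_nonneg (mul_nonneg (inv_nonneg.2 (hcm i).le) (hnn i p))]
    rw [hgdef]
    show f i p / Real.sqrt ((c * m i) ^ 2 + ‖p‖ ^ 2) ≤ (c * m i)⁻¹ * f i p
    rw [div_le_iff₀ (hsqpos i p)]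
    calc f i p = (c * m i)⁻¹ * f i p * (c * m i) := by
          field_simp
          exact (mul_div_cancel_right₀ _ (hm i).ne').symm
    _ ≤ (c * m i)⁻¹ * f i p * Real.sqrt ((c * m i) ^ 2 + ‖p‖ ^ 2) :=
          mul_le_mul_of_nonneg_left (hcmle i p)
            (mul_nonneg (inv_nonneg.2 (hcm i).le) (hnn i p))
  have hvint : ∀ i, Integrable (fun p : EuclideanSpace ℝ (Fin 3) => g i p • p) := by
    intro i
    refine (hint i).mono ((hgmeas i).smul aestronglyMeasurable_id) ?_
    filter_upwards with p
    rw [norm_smul, Real.norm_eq_abs, abs_of_nonneg (hgnn i p), Real.norm_eq_abs,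
      abs_of_nonneg (hnn i p)]
    calc g i p * ‖p‖ ≤ g i p * Real.sqrt ((c * m i) ^ 2 + ‖p‖ ^ 2) :=
          mul_le_mul_of_nonneg_left (hnormle i p) (hgnn i p)
    _ = f i p := hgle i p
  set t : ℝ := ∑ i, ω i * ∫ p, f i p with htdef
  set b : ℝ := ∑ i, ω i * (c * m i) * ∫ p, g i p with hbdef
  set x : EuclideanSpace ℝ (Fin 3) := ∑ i, ω i • ∫ p, g i p • p with hxdef
  have hb : 0 ≤ b := by
    rw [hbdef]
    apply Finset.sum_nonneg
    intro i _
    exact mul_nonneg (mul_nonneg (hω i).le (hcm i).le) (integral_nonneg (hgnn i))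
  have key : ∀ (v : EuclideanSpace ℝ (Fin 3)) (lam : ℝ), 0 ≤ lam → ‖v‖ ^ 2 + lam ^ 2 ≤ 1 →
      b * lam ≤ t - (inner ℝ x v : ℝ) := by
    intro v lam hlam hvl
    have hinner : (inner ℝ x v : ℝ) = ∑ i, ω i * ∫ p, g i p * (inner ℝ p v : ℝ) := by
      rw [hxdef, sum_inner]
      refine Finset.sum_congr rfl fun i _ => ?_
      rw [real_inner_smul_left]
      congr 1
      rw [real_inner_comm, ← integral_inner (hvint i) v]
      refine integral_congr_ae (Filter.Eventually.of_forall fun p => ?_)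
      show (inner ℝ v (g i p • p) : ℝ) = g i p * (inner ℝ p v : ℝ)
      rw [real_inner_smul_right, real_inner_comm]
    rw [hinner, htdef, hbdef, Finset.sum_mul, ← Finset.sum_sub_distrib]
    apply Finset.sum_le_sum
    intro i _
    have hipint : Integrable (fun p : EuclideanSpace ℝ (Fin 3) => g i p * (inner ℝ p v : ℝ)) := by
      have : (fun p : EuclideanSpace ℝ (Fin 3) => g i p * (inner ℝ p v : ℝ))
          = fun p => (inner ℝ (g i p • p) v : ℝ) := by
        funext p; rw [real_inner_smul_left]
      rw [this]
      exact (hvint i).inner_const v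
    have hpt : ∀ p : EuclideanSpace ℝ (Fin 3),
        (c * m i) * lam * g i p ≤ f i p - g i p * (inner ℝ p v : ℝ) := by
      intro p
      have hip : (inner ℝ p v : ℝ) ≤ ‖p‖ * ‖v‖ := real_inner_le_norm p v
      have hkey : (inner ℝ p v : ℝ) + (c * m i) * lam ≤
          Real.sqrt ((c * m i) ^ 2 + ‖p‖ ^ 2) := by
        rcases le_or_gt ((inner ℝ p v : ℝ) + (c * m i) * lam) 0 with h | h
        · linarith [(hsqpos i p).le]
        · rw [Real.le_sqrt h.le (by positivity)]
          have h0 : 0 ≤ (c * m i) * lam := mul_nonneg (hcm i).le hlam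
          have h1 : (inner ℝ p v : ℝ) + (c * m i) * lam ≤ ‖p‖ * ‖v‖ + (c * m i) * lam := by
            linarith
          have h2 : ((inner ℝ p v : ℝ) + (c * m i) * lam) ^ 2
              ≤ (‖p‖ * ‖v‖ + (c * m i) * lam) ^ 2 := pow_le_pow_left₀ h.le h1 2
          have h3 : (‖p‖ * ‖v‖ + (c * m i) * lam) ^ 2
              ≤ ((c * m i) ^ 2 + ‖p‖ ^ 2) * (‖v‖ ^ 2 + lam ^ 2) := by
            nlinarith [sq_nonneg ((c * m i) * ‖v‖ - ‖p‖ * lam)]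
          have h4 : ((c * m i) ^ 2 + ‖p‖ ^ 2) * (‖v‖ ^ 2 + lam ^ 2)
              ≤ (c * m i) ^ 2 + ‖p‖ ^ 2 := by
            nlinarith [sq_nonneg (c * m i), sq_nonneg ‖p‖]
          linarith
      have hmul := mul_le_mul_of_nonneg_left hkey (hgnn i p)
      calc (c * m i) * lam * g i p
          = g i p * ((inner ℝ p v : ℝ) + (c * m i) * lam) - g i p * (inner ℝ p v : ℝ) := by ring
      _ ≤ g i p * Real.sqrt ((c * m i) ^ 2 + ‖p‖ ^ 2) - g i p * (inner ℝ p v : ℝ) := by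
          linarith
      _ = f i p - g i p * (inner ℝ p v : ℝ) := by rw [hgle]
    have hmain : (c * m i) * lam * ∫ p, g i p
        ≤ (∫ p, f i p) - ∫ p, g i p * (inner ℝ p v : ℝ) := by
      rw [← integral_const_mul, ← integral_sub (hint i) hipint]
      exact integral_mono ((hgint i).const_mul _) ((hint i).sub hipint) hpt
    have h2 := mul_le_mul_of_nonneg_left hmain (hω i).le
    rw [mul_sub] at h2
    have e1 : ω i * ((c * m i) * lam * ∫ p, g i p)
        = ω i * (c * m i) * (∫ p, g i p) * lam := by ring
    linarith [h2, e1.symm.le, e1.le]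
  exact aux_final t b x hb key
end

section
/- Let N ≥ 1, c > 0, and for i = 1,…,N let m_i, ω_i > 0, a_{i,ℓ} > 0, a_{i,u} > 0, and let f_i : ℝ³ → [0,∞) be integrable with a_{i,ℓ} ≤ ∫ f_i(p)/p_i⁰ dp and ∫ f_i(p) dp ≤ a_{i,u}, where p_i⁰ = √((c·m_i)² + |p|²). Define A⁰ = Σ_i ω_i ∫ f_i dp and A⃗ = Σ_i ω_i ∫ (p/p_i⁰) f_i dp. Then (A⁰)² − |A⃗|² > 0 and the auxiliary velocity Ũ := c · A⃗ / √((A⁰)² − |A⃗|²) ∈ ℝ³ satisfies |Ũ| ≤ (max_{i} a_{i,u}) / (min_{i} m_i a_{i,ℓ}). -/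
open MeasureTheory
open scoped BigOperators

noncomputable abbrev E3 := EuclideanSpace ℝ (Fin 3)

lemma sqrt_pos' (cm : ℝ) (hcm : 0 < cm) (p : E3) : 0 < Real.sqrt (cm ^ 2 + ‖p‖ ^ 2) :=
  Real.sqrt_pos.2 (by positivity)

lemma cm_le_sqrt (cm : ℝ) (hcm : 0 < cm) (p : E3) : cm ≤ Real.sqrt (cm ^ 2 + ‖p‖ ^ 2) := by
  rw [Real.le_sqrt hcm.le (by positivity)]; nlinarith [sq_nonneg ‖p‖]

lemma norm_le_sqrt (cm : ℝ) (p : E3) : ‖p‖ ≤ Real.sqrt (cm ^ 2 + ‖p‖ ^ 2) := by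
  rw [Real.le_sqrt (norm_nonneg p) (by positivity)]; nlinarith [sq_nonneg cm]

lemma cont_sqrt (cm : ℝ) :
    Continuous (fun p : E3 => Real.sqrt (cm ^ 2 + ‖p‖ ^ 2)) := by
  fun_prop

lemma meas_ratio (cm : ℝ) (f : E3 → ℝ) (hint : Integrable f) :
    AEStronglyMeasurable (fun p : E3 => f p / Real.sqrt (cm ^ 2 + ‖p‖ ^ 2)) volume :=
  (hint.aestronglyMeasurable.aemeasurable.div
    (cont_sqrt cm).aemeasurable).aestronglyMeasurable

lemma int_vec (cm : ℝ) (hcm : 0 < cm) (f : E3 → ℝ) (hint : Integrable f)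
    (hnn : ∀ p, 0 ≤ f p) :
    Integrable (fun p : E3 => (f p / Real.sqrt (cm ^ 2 + ‖p‖ ^ 2)) • p) := by
  apply hint.mono' ((meas_ratio cm f hint).smul aestronglyMeasurable_id)
  filter_upwards with p
  have h1 := sqrt_pos' cm hcm p
  have h2 := norm_le_sqrt cm p
  show ‖(f p / Real.sqrt (cm ^ 2 + ‖p‖ ^ 2)) • p‖ ≤ f p
  rw [norm_smul, Real.norm_eq_abs, abs_div, abs_of_nonneg (hnn p),
    abs_of_nonneg (Real.sqrt_nonneg _), div_mul_eq_mul_div, div_le_iff₀ h1]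
  simpa using mul_le_mul_of_nonneg_left h2 (hnn p)

lemma int_scal (cm : ℝ) (hcm : 0 < cm) (f : E3 → ℝ) (hint : Integrable f)
    (hnn : ∀ p, 0 ≤ f p) :
    Integrable (fun p : E3 => f p * cm / Real.sqrt (cm ^ 2 + ‖p‖ ^ 2)) := by
  apply hint.mono' (((hint.aestronglyMeasurable.aemeasurable.mul_const cm).div
    (cont_sqrt cm).aemeasurable).aestronglyMeasurable)
  filter_upwards with p
  have h1 := sqrt_pos' cm hcm p
  have h2 := cm_le_sqrt cm hcm p
  show ‖f p * cm / Real.sqrt (cm ^ 2 + ‖p‖ ^ 2)‖ ≤ f p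
  rw [Real.norm_eq_abs, abs_div, abs_of_nonneg (mul_nonneg (hnn p) hcm.le),
    abs_of_nonneg (Real.sqrt_nonneg _), div_le_iff₀ h1]
  exact mul_le_mul_of_nonneg_left h2 (hnn p)

lemma int_scal' (cm : ℝ) (hcm : 0 < cm) (f : E3 → ℝ) (hint : Integrable f)
    (hnn : ∀ p, 0 ≤ f p) :
    Integrable (fun p : E3 => f p / Real.sqrt (cm ^ 2 + ‖p‖ ^ 2)) := by
  apply (hint.const_mul cm⁻¹).mono' (meas_ratio cm f hint)
  filter_upwards with p
  have h1 := sqrt_pos' cm hcm p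
  have h2 := cm_le_sqrt cm hcm p
  rw [Real.norm_eq_abs, abs_div, abs_of_nonneg (hnn p),
    abs_of_nonneg (Real.sqrt_nonneg _), div_le_iff₀ h1]
  rw [inv_mul_eq_div, div_mul_eq_mul_div, le_div_iff₀ hcm]
  nlinarith [hnn p, mul_le_mul_of_nonneg_left h2 (hnn p)]

lemma key_ineq (cm : ℝ) (hcm : 0 < cm) (f : E3 → ℝ) (hint : Integrable f)
    (hnn : ∀ p, 0 ≤ f p) :
    ‖(∫ p : E3, (f p / Real.sqrt (cm ^ 2 + ‖p‖ ^ 2)) • p)‖ ^ 2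
      + (∫ p : E3, f p * cm / Real.sqrt (cm ^ 2 + ‖p‖ ^ 2)) ^ 2
      ≤ (∫ p : E3, f p) ^ 2 := by
  set P : E3 → ℝ := fun p => Real.sqrt (cm ^ 2 + ‖p‖ ^ 2) with hP
  set e := (WithLp.prodContinuousLinearEquiv 2 ℝ E3 ℝ)
  set g : E3 → WithLp 2 (E3 × ℝ) :=
    fun p => e.symm ((f p / P p) • p, f p * cm / P p) with hg
  have hpair : Integrable (fun p : E3 => ((f p / P p) • p, f p * cm / P p)) :=
    (int_vec cm hcm f hint hnn).prodMk (int_scal cm hcm f hint hnn)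
  have hgint : Integrable g :=
    (e.symm.toContinuousLinearMap.integrable_comp hpair)
  have hInt : ∫ p, g p =
      e.symm (∫ p : E3, (f p / P p) • p, ∫ p : E3, f p * cm / P p) := by
    have h2 := ContinuousLinearMap.integral_comp_comm e.symm.toContinuousLinearMap hpair
    rw [hg]
    rw [show (fun p => e.symm ((f p / P p) • p, f p * cm / P p))
        = fun p => e.symm.toContinuousLinearMap ((f p / P p) • p, f p * cm / P p) from rfl]
    rw [h2, integral_pair (int_vec cm hcm f hint hnn) (int_scal cm hcm f hint hnn)]
    rfl
  have hnormg : ∀ p, ‖g p‖ = f p := by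
    intro p
    have h1 : 0 < P p := sqrt_pos' cm hcm p
    rw [hg, WithLp.prod_norm_eq_of_L2]
    have hfst : (e.symm ((f p / P p) • p, f p * cm / P p)).fst = (f p / P p) • p := rfl
    have hsnd : (e.symm ((f p / P p) • p, f p * cm / P p)).snd = f p * cm / P p := rfl
    rw [hfst, hsnd, norm_smul, Real.norm_eq_abs (f p / P p), abs_div,
      abs_of_nonneg (hnn p), abs_of_nonneg h1.le,
      Real.norm_eq_abs (f p * cm / P p),
      abs_of_nonneg (div_nonneg (mul_nonneg (hnn p) hcm.le) h1.le)]
    have hPsq : P p ^ 2 = cm ^ 2 + ‖p‖ ^ 2 := Real.sq_sqrt (by positivity)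
    have hX : (f p / P p * ‖p‖) ^ 2 + (f p * cm / P p) ^ 2 = f p ^ 2 := by
      field_simp
      rw [hPsq]; ring
    rw [hX]
    exact Real.sqrt_sq (hnn p)
  have hle : ‖∫ p, g p‖ ≤ ∫ p, f p := by
    calc ‖∫ p, g p‖ ≤ ∫ p, ‖g p‖ := norm_integral_le_integral_norm g
    _ = ∫ p, f p := by simp_rw [hnormg]
  rw [hInt] at hle
  have hsq := WithLp.prod_norm_sq_eq_of_L2
    (e.symm (∫ p : E3, (f p / P p) • p, ∫ p : E3, f p * cm / P p))
  have hfst : (e.symm (∫ p : E3, (f p / P p) • p, ∫ p : E3, f p * cm / P p)).fst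
      = ∫ p : E3, (f p / P p) • p := rfl
  have hsnd : (e.symm (∫ p : E3, (f p / P p) • p, ∫ p : E3, f p * cm / P p)).snd
      = ∫ p : E3, f p * cm / P p := rfl
  rw [hfst, hsnd, Real.norm_eq_abs, sq_abs] at hsq
  show ‖∫ p : E3, (f p / P p) • p‖ ^ 2 + (∫ p : E3, f p * cm / P p) ^ 2
      ≤ (∫ p : E3, f p) ^ 2
  rw [← hsq]
  nlinarith [hle, norm_nonneg
    (e.symm (∫ p : E3, (f p / P p) • p, ∫ p : E3, f p * cm / P p))]

-- sq comparison helper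
lemma le_of_sq_le_sq' {x y : ℝ} (h : x ^ 2 ≤ y ^ 2) (hx : 0 ≤ x) (hy : 0 ≤ y) : x ≤ y := by
  nlinarith

theorem stmt_4 (N : ℕ) (hN : 1 ≤ N) (c : ℝ) (hc : 0 < c)
    (m ω al au : Fin N → ℝ) (hm : ∀ i, 0 < m i) (hω : ∀ i, 0 < ω i)
    (hal : ∀ i, 0 < al i) (hau : ∀ i, 0 < au i)
    (f : Fin N → EuclideanSpace ℝ (Fin 3) → ℝ)
    (hint : ∀ i, Integrable (f i)) (hnn : ∀ i p, 0 ≤ f i p)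
    (hlow : ∀ i, al i ≤ ∫ p, f i p / Real.sqrt ((c * m i) ^ 2 + ‖p‖ ^ 2))
    (hup : ∀ i, (∫ p, f i p) ≤ au i)
    (A0 : ℝ) (Avec : EuclideanSpace ℝ (Fin 3))
    (hA0 : A0 = ∑ i, ω i * ∫ p, f i p)
    (hAv : Avec = ∑ i, ω i • ∫ p : EuclideanSpace ℝ (Fin 3),
        (f i p / Real.sqrt ((c * m i) ^ 2 + ‖p‖ ^ 2)) • p) :
    0 < A0 ^ 2 - ‖Avec‖ ^ 2 ∧
      ‖(c / Real.sqrt (A0 ^ 2 - ‖Avec‖ ^ 2)) • Avec‖ ≤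
        (⨆ i, au i) / (⨅ i, m i * al i) := by
  haveI : NeZero N := ⟨by omega⟩
  -- abbreviations
  set a : Fin N → ℝ := fun i => ∫ p : E3, f i p with ha
  set v : Fin N → E3 := fun i =>
    ∫ p : E3, (f i p / Real.sqrt ((c * m i) ^ 2 + ‖p‖ ^ 2)) • p with hv
  set r : Fin N → ℝ := fun i =>
    ∫ p : E3, f i p / Real.sqrt ((c * m i) ^ 2 + ‖p‖ ^ 2) with hr
  set b : Fin N → ℝ := fun i =>
    ∫ p : E3, f i p * (c * m i) / Real.sqrt ((c * m i) ^ 2 + ‖p‖ ^ 2) with hb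
  have hcm : ∀ i, 0 < c * m i := fun i => mul_pos hc (hm i)
  have hbr : ∀ i, b i = (c * m i) * r i := by
    intro i
    rw [hb, hr]
    simp only
    rw [show (fun p : E3 => f i p * (c * m i) / Real.sqrt ((c * m i) ^ 2 + ‖p‖ ^ 2))
        = fun p : E3 => (c * m i) * (f i p / Real.sqrt ((c * m i) ^ 2 + ‖p‖ ^ 2)) from
        funext fun p => by ring]
    exact integral_const_mul _ _
  have hb_pos : ∀ i, 0 < b i := fun i => by
    rw [hbr i]; exact mul_pos (hcm i) (lt_of_lt_of_le (hal i) (hlow i))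
  have ha_nn : ∀ i, 0 ≤ a i := fun i => integral_nonneg (hnn i)
  have hkey : ∀ i, ‖v i‖ ^ 2 + b i ^ 2 ≤ a i ^ 2 := fun i =>
    key_ineq (c * m i) (hcm i) (f i) (hint i) (hnn i)
  -- the four-vector sum
  set e := (WithLp.prodContinuousLinearEquiv 2 ℝ E3 ℝ)
  set B : ℝ := ∑ i, ω i * b i with hB
  have hBpos : 0 < B := by
    rw [hB]
    exact Finset.sum_pos (fun i _ => mul_pos (hω i) (hb_pos i)) Finset.univ_nonempty
  set S : WithLp 2 (E3 × ℝ) := e.symm (Avec, B) with hS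
  have hpairsum : (∑ i, ω i • ((v i, b i) : E3 × ℝ))
      = ((∑ i, ω i • v i : E3), (∑ i, ω i * b i : ℝ)) :=
    Prod.ext (by simp [Prod.fst_sum]) (by simp [Prod.snd_sum, smul_eq_mul])
  have hSsum : S = ∑ i, ω i • e.symm (v i, b i) := by
    rw [hS, hAv, hB, ← hpairsum, map_sum]
    exact Finset.sum_congr rfl fun i _ => e.symm.map_smul (ω i) _
  have hSnorm : ‖S‖ ≤ A0 := by
    rw [hSsum, hA0]
    calc ‖∑ i, ω i • e.symm (v i, b i)‖ ≤ ∑ i, ‖ω i • e.symm (v i, b i)‖ :=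
          norm_sum_le _ _
    _ ≤ ∑ i, ω i * a i := by
        apply Finset.sum_le_sum
        intro i _
        rw [norm_smul, Real.norm_eq_abs, abs_of_nonneg (hω i).le]
        apply mul_le_mul_of_nonneg_left _ (hω i).le
        apply le_of_sq_le_sq' _ (norm_nonneg _) (ha_nn i)
        have hsq := WithLp.prod_norm_sq_eq_of_L2 (e.symm (v i, b i))
        have hfst : (e.symm (v i, b i)).fst = v i := rfl
        have hsnd : (e.symm (v i, b i)).snd = b i := rfl
        rw [hfst, hsnd, Real.norm_eq_abs, sq_abs] at hsq
        rw [hsq]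
        exact hkey i
    _ = ∑ i, ω i * ∫ p, f i p := rfl
  have hSnormsq : ‖S‖ ^ 2 = ‖Avec‖ ^ 2 + B ^ 2 := by
    have hsq := WithLp.prod_norm_sq_eq_of_L2 S
    have hfst : S.fst = Avec := rfl
    have hsnd : S.snd = B := rfl
    rw [hfst, hsnd, Real.norm_eq_abs, sq_abs] at hsq
    exact hsq
  have hA0nn : 0 ≤ A0 := le_trans (norm_nonneg S) hSnorm
  have hmain : ‖Avec‖ ^ 2 + B ^ 2 ≤ A0 ^ 2 := by
    rw [← hSnormsq]
    exact pow_le_pow_left₀ (norm_nonneg S) hSnorm 2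
  have hD : 0 < A0 ^ 2 - ‖Avec‖ ^ 2 := by nlinarith [hBpos]
  refine ⟨hD, ?_⟩
  -- bound on the velocity
  have hsqrtD : B ≤ Real.sqrt (A0 ^ 2 - ‖Avec‖ ^ 2) := by
    rw [Real.le_sqrt hBpos.le hD.le]
    nlinarith
  have hAvA0 : ‖Avec‖ ≤ A0 := le_of_sq_le_sq' (by nlinarith) (norm_nonneg _) hA0nn
  -- sup and inf facts
  set Sup : ℝ := ⨆ i, au i with hSup
  set Inf : ℝ := ⨅ i, m i * al i with hInf
  obtain ⟨j, -, hj⟩ := Finset.exists_min_image Finset.univ (fun i => m i * al i)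
    ⟨⟨0, by omega⟩, Finset.mem_univ _⟩
  have hInfpos : 0 < Inf := lt_of_lt_of_le (mul_pos (hm j) (hal j))
    (le_ciInf fun i => hj i (Finset.mem_univ i))
  have hInfle : ∀ i, Inf ≤ m i * al i := fun i =>
    ciInf_le (Set.Finite.bddBelow (Set.finite_range _)) i
  have hSuple : ∀ i, au i ≤ Sup := fun i =>
    le_ciSup (Set.Finite.bddAbove (Set.finite_range _)) i
  set W : ℝ := ∑ i, ω i with hW
  have hWpos : 0 < W :=
    Finset.sum_pos (fun i _ => hω i) Finset.univ_nonempty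
  have hA0up : A0 ≤ Sup * W := by
    rw [hA0, hW, Finset.mul_sum]
    apply Finset.sum_le_sum
    intro i _
    rw [mul_comm (Sup) (ω i)]
    exact mul_le_mul_of_nonneg_left ((hup i).trans (hSuple i)) (hω i).le
  have hBlow : c * Inf * W ≤ B := by
    rw [hB, hW, Finset.mul_sum]
    apply Finset.sum_le_sum
    intro i _
    rw [mul_comm (c * Inf) (ω i)]
    apply mul_le_mul_of_nonneg_left _ (hω i).le
    have hri : m i * al i ≤ m i * r i :=
      mul_le_mul_of_nonneg_left (hlow i) (hm i).le
    calc c * Inf ≤ c * (m i * al i) :=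
          mul_le_mul_of_nonneg_left (hInfle i) hc.le
    _ ≤ c * (m i * r i) := mul_le_mul_of_nonneg_left hri hc.le
    _ = b i := by rw [hbr i]; ring
  -- final computation
  rw [norm_smul, Real.norm_eq_abs,
    abs_of_nonneg (div_nonneg hc.le (Real.sqrt_nonneg _))]
  have step1 : c / Real.sqrt (A0 ^ 2 - ‖Avec‖ ^ 2) * ‖Avec‖ ≤ c * A0 / B := by
    rw [div_mul_eq_mul_div]
    apply div_le_div₀ (mul_nonneg hc.le hA0nn) _ hBpos hsqrtD
    exact mul_le_mul_of_nonneg_left hAvA0 hc.le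
  have step2 : c * A0 / B ≤ Sup / Inf := by
    have hSuppos : 0 < Sup := (hau j).trans_le (hSuple j)
    have h1 : c * A0 ≤ c * (Sup * W) := mul_le_mul_of_nonneg_left hA0up hc.le
    have h2 : (0:ℝ) < c * Inf * W := mul_pos (mul_pos hc hInfpos) hWpos
    calc c * A0 / B ≤ c * (Sup * W) / (c * Inf * W) :=
          div_le_div₀ (mul_nonneg hc.le (mul_nonneg hSuppos.le hWpos.le)) h1 h2 hBlow
    _ = Sup / Inf := by
        rw [show c * (Sup * W) = Sup * (c * W) by ring,
          show c * Inf * W = Inf * (c * W) by ring,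
          mul_div_mul_right _ _ (mul_pos hc hWpos).ne']
  exact step1.trans step2
end

section
/- Let N ≥ 1, c > 0, and for i = 1,…,N let m_i, ω_i > 0, a_{i,ℓ} > 0, a_{i,u} > 0, and let f_i : ℝ³ → [0,∞) be integrable with a_{i,ℓ} ≤ ∫ f_i(p)/p_i⁰ dp and ∫ f_i(p) dp ≤ a_{i,u}, where p_i⁰ = √((c·m_i)² + |p|²). Define Φ_i(β) = (∫ e^{−cβ p_i⁰} dp)/(∫ e^{−cβ p_i⁰} dp/p_i⁰) for β > 0. Suppose β̃ > 0 satisfies Σ_{i=1}^N ω_i Φ_i(β̃) ∫ f_i(p)/p_i⁰ dp = √((Σ_i ω_i ∫ f_i dp)² − |Σ_i ω_i ∫ (p/p_i⁰) f_i dp|²). Then there exists j ∈ {1,…,N} with Φ_j(β̃) ≤ 2 a_{j,u}/a_{j,ℓ}. -/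
open MeasureTheory
open scoped BigOperators

theorem stmt_5 (N : ℕ) (hN : 1 ≤ N) (c : ℝ) (hc : 0 < c)
    (m ω al au : Fin N → ℝ) (hm : ∀ i, 0 < m i) (hω : ∀ i, 0 < ω i)
    (hal : ∀ i, 0 < al i) (hau : ∀ i, 0 < au i)
    (f : Fin N → EuclideanSpace ℝ (Fin 3) → ℝ)
    (hint : ∀ i, Integrable (f i)) (hnn : ∀ i p, 0 ≤ f i p)
    (hlow : ∀ i, al i ≤ ∫ p, f i p / Real.sqrt ((c * m i) ^ 2 + ‖p‖ ^ 2))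
    (hup : ∀ i, (∫ p, f i p) ≤ au i)
    (Φ : Fin N → ℝ → ℝ)
    (hΦ : ∀ i β, Φ i β =
      (∫ p : EuclideanSpace ℝ (Fin 3),
          Real.exp (-(c * β) * Real.sqrt ((c * m i) ^ 2 + ‖p‖ ^ 2))) /
        ∫ p : EuclideanSpace ℝ (Fin 3),
          Real.exp (-(c * β) * Real.sqrt ((c * m i) ^ 2 + ‖p‖ ^ 2)) /
            Real.sqrt ((c * m i) ^ 2 + ‖p‖ ^ 2))
    (β : ℝ) (hβ : 0 < β)
    (heq : ∑ i, ω i * Φ i β * ∫ p, f i p / Real.sqrt ((c * m i) ^ 2 + ‖p‖ ^ 2) =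
      Real.sqrt ((∑ i, ω i * ∫ p, f i p) ^ 2 -
        ‖∑ i, ω i • ∫ p : EuclideanSpace ℝ (Fin 3),
            (f i p / Real.sqrt ((c * m i) ^ 2 + ‖p‖ ^ 2)) • p‖ ^ 2)) :
    ∃ j, Φ j β ≤ 2 * au j / al j := by
  by_contra hcon
  push_neg at hcon
  set S := ∑ i, ω i * ∫ p, f i p with hS
  have hSnn : 0 ≤ S := Finset.sum_nonneg fun i _ =>
    mul_nonneg (hω i).le (integral_nonneg (hnn i))
  have hsqrt : Real.sqrt ((∑ i, ω i * ∫ p, f i p) ^ 2 -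
      ‖∑ i, ω i • ∫ p : EuclideanSpace ℝ (Fin 3),
          (f i p / Real.sqrt ((c * m i) ^ 2 + ‖p‖ ^ 2)) • p‖ ^ 2) ≤ S := by
    calc Real.sqrt _ ≤ Real.sqrt (S ^ 2) :=
          Real.sqrt_le_sqrt (sub_le_self _ (sq_nonneg _))
      _ = S := Real.sqrt_sq hSnn
  have hterm : ∀ i : Fin N, 2 * (ω i * au i) <
      ω i * Φ i β * ∫ p, f i p / Real.sqrt ((c * m i) ^ 2 + ‖p‖ ^ 2) := by
    intro i
    have h1 : 2 * au i / al i < Φ i β := hcon i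
    have hpos : 0 < 2 * au i / al i :=
      div_pos (mul_pos two_pos (hau i)) (hal i)
    have h2 : (2 * au i / al i) * al i <
        Φ i β * ∫ p, f i p / Real.sqrt ((c * m i) ^ 2 + ‖p‖ ^ 2) :=
      mul_lt_mul h1 (hlow i) (hal i) (le_trans hpos.le h1.le)
    rw [div_mul_cancel₀ _ (hal i).ne'] at h2
    calc 2 * (ω i * au i) = ω i * (2 * au i) := by ring
      _ < ω i * (Φ i β * ∫ p, f i p / Real.sqrt ((c * m i) ^ 2 + ‖p‖ ^ 2)) :=
          (mul_lt_mul_iff_right₀ (hω i)).2 h2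
      _ = ω i * Φ i β * ∫ p, f i p / Real.sqrt ((c * m i) ^ 2 + ‖p‖ ^ 2) := by ring
  have hne : (Finset.univ : Finset (Fin N)).Nonempty := by
    have : Nonempty (Fin N) := ⟨⟨0, hN⟩⟩
    exact Finset.univ_nonempty
  have hsum : ∑ i, 2 * (ω i * au i) <
      ∑ i, ω i * Φ i β * ∫ p, f i p / Real.sqrt ((c * m i) ^ 2 + ‖p‖ ^ 2) :=
    Finset.sum_lt_sum_of_nonempty hne fun i _ => hterm i
  have h2S : 2 * S ≤ ∑ i, 2 * (ω i * au i) := by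
    rw [hS, Finset.mul_sum]
    refine Finset.sum_le_sum fun i _ => ?_
    have := mul_le_mul_of_nonneg_left (hup i) (hω i).le
    nlinarith [hω i]
  have : 2 * S < S := by
    calc 2 * S ≤ ∑ i, 2 * (ω i * au i) := h2S
      _ < _ := hsum
      _ ≤ S := heq ▸ hsqrt
  linarith
end

section
/- Let c, m > 0 and write p⁰ = √((cm)² + |p|²) for p ∈ ℝ³. Let 0 < β_ℓ ≤ β_u, U_u ≥ 0, a_u > 0. Set C₁ = a_u / ∫ e^{−c β_u q⁰} dq/q⁰ and C₂ = β_ℓ(√(c² + U_u²) − U_u). Then for every α ∈ [0, a_u], every β ∈ [β_ℓ, β_u], every U ∈ ℝ³ with |U| ≤ U_u, and every p ∈ ℝ³: (α / ∫ e^{−cβ q⁰} dq/q⁰) · e^{−β(√(c²+|U|²)·p⁰ − ⟨U,p⟩)} ≤ C₁ e^{−C₂ p⁰}. -/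
open MeasureTheory

lemma quartic_le_exp (x : ℝ) (hx : 0 ≤ x) : x ^ 4 ≤ 256 * Real.exp x := by
  have h : x / 4 ≤ Real.exp (x / 4) := by
    have := Real.add_one_le_exp (x / 4); linarith
  have h3 : (x / 4) ^ 4 ≤ (Real.exp (x / 4)) ^ 4 :=
    pow_le_pow_left₀ (by positivity) h 4
  have h4 : (Real.exp (x / 4)) ^ 4 = Real.exp x := by
    rw [← Real.exp_nat_mul]; norm_num; ring
  rw [h4] at h3
  nlinarith

lemma sqrt_add_le_aux {a r : ℝ} (ha : 0 ≤ a) (hr : 0 ≤ r) :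
    a ≤ Real.sqrt (a ^ 2 + r ^ 2) := by
  have := Real.sqrt_le_sqrt (show a ^ 2 ≤ a ^ 2 + r ^ 2 by nlinarith)
  rwa [Real.sqrt_sq ha] at this

lemma sqrt_add_le_aux' {a r : ℝ} (ha : 0 ≤ a) (hr : 0 ≤ r) :
    a ≤ Real.sqrt (r ^ 2 + a ^ 2) := by
  rw [add_comm]; exact sqrt_add_le_aux ha hr

lemma sqrt_sub_antitone {c u v : ℝ} (hc : 0 < c) (hu : 0 ≤ u) (huv : u ≤ v) :
    Real.sqrt (c ^ 2 + v ^ 2) - v ≤ Real.sqrt (c ^ 2 + u ^ 2) - u := by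
  have hv : (0:ℝ) ≤ v := hu.trans huv
  have hA2 : Real.sqrt (c ^ 2 + u ^ 2) ^ 2 = c ^ 2 + u ^ 2 := Real.sq_sqrt (by positivity)
  have hB2 : Real.sqrt (c ^ 2 + v ^ 2) ^ 2 = c ^ 2 + v ^ 2 := Real.sq_sqrt (by positivity)
  have hAu : u ≤ Real.sqrt (c ^ 2 + u ^ 2) := sqrt_add_le_aux' hu hc.le
  have hBv : v ≤ Real.sqrt (c ^ 2 + v ^ 2) := sqrt_add_le_aux' hv hc.le
  have hAB : Real.sqrt (c ^ 2 + u ^ 2) ≤ Real.sqrt (c ^ 2 + v ^ 2) :=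
    Real.sqrt_le_sqrt (by nlinarith)
  have hA0 : 0 < Real.sqrt (c ^ 2 + u ^ 2) := Real.sqrt_pos.2 (by positivity)
  nlinarith [mul_pos hA0 (lt_of_lt_of_le hA0 hAB)]

lemma juttner_integrable {a b : ℝ} (ha : 0 < a) (hb : 0 < b) :
    Integrable (fun q : EuclideanSpace ℝ (Fin 3) =>
      Real.exp (-b * Real.sqrt (a ^ 2 + ‖q‖ ^ 2)) / Real.sqrt (a ^ 2 + ‖q‖ ^ 2)) := by
  have h4 : (Module.finrank ℝ (EuclideanSpace ℝ (Fin 3)) : ℝ) < 4 := by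
    simp [finrank_euclideanSpace]; norm_num
  have base := (integrable_one_add_norm (μ := (volume : Measure (EuclideanSpace ℝ (Fin 3)))) h4).const_mul
    ((8 * (1 + 256 / b ^ 4)) / a)
  refine base.mono' ?_ (Filter.Eventually.of_forall fun q => ?_)
  · apply Continuous.aestronglyMeasurable
    apply Continuous.div (by fun_prop) (by fun_prop)
    intro x; positivity
  · set r := ‖q‖
    have hr0 : 0 ≤ r := norm_nonneg q
    have hs0 : 0 < Real.sqrt (a ^ 2 + r ^ 2) := Real.sqrt_pos.2 (by positivity)
    have hsa : a ≤ Real.sqrt (a ^ 2 + r ^ 2) := sqrt_add_le_aux ha.le hr0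
    have hsr : r ≤ Real.sqrt (a ^ 2 + r ^ 2) := sqrt_add_le_aux' hr0 ha.le
    have hfpos : 0 ≤ Real.exp (-b * Real.sqrt (a ^ 2 + r ^ 2)) / Real.sqrt (a ^ 2 + r ^ 2) := by
      positivity
    rw [Real.norm_of_nonneg hfpos]
    have h1 : Real.exp (-b * Real.sqrt (a ^ 2 + r ^ 2)) ≤ Real.exp (-b * r) :=
      Real.exp_le_exp.2 (by nlinarith)
    have h2 : Real.exp (-b * Real.sqrt (a ^ 2 + r ^ 2)) / Real.sqrt (a ^ 2 + r ^ 2)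
        ≤ Real.exp (-b * r) / a :=
      div_le_div₀ (Real.exp_pos _).le h1 ha hsa
    refine h2.trans ?_
    have h1r : (0:ℝ) < 1 + r := by linarith
    rw [Real.rpow_neg h1r.le, show ((4:ℝ) = (4:ℕ)) by norm_num, Real.rpow_natCast]
    have e2 : (b * r) ^ 4 ≤ 256 * Real.exp (b * r) := quartic_le_exp _ (by positivity)
    have hmul : Real.exp (-b * r) * Real.exp (b * r) = 1 := by
      rw [← Real.exp_add]; simp
    have e3 : r ^ 4 * Real.exp (-b * r) ≤ 256 / b ^ 4 := by
      rw [le_div_iff₀ (pow_pos hb 4)]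
      nlinarith [mul_le_mul_of_nonneg_right e2 (Real.exp_pos (-b * r)).le,
        Real.exp_pos (-b * r), Real.exp_pos (b * r)]
    have e1 : Real.exp (-b * r) ≤ 1 := Real.exp_le_one_iff.2 (by nlinarith)
    have hpow : (1 + r) ^ 4 ≤ 8 * (1 + r ^ 4) := by
      nlinarith [sq_nonneg r, sq_nonneg (r - 1), sq_nonneg (r ^ 2 - 1), sq_nonneg (r ^ 2 - r)]
    have key : Real.exp (-b * r) * (1 + r) ^ 4 ≤ 8 * (1 + 256 / b ^ 4) := by
      nlinarith [Real.exp_pos (-b * r), mul_le_mul_of_nonneg_left hpow (Real.exp_pos (-b * r)).le]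
    have step : Real.exp (-b * r) ≤ 8 * (1 + 256 / b ^ 4) * ((1 + r) ^ 4)⁻¹ := by
      rw [← div_eq_mul_inv, le_div_iff₀ (by positivity)]
      linarith [key]
    have heq : 8 * (1 + 256 / b ^ 4) / a * ((1 + r) ^ 4)⁻¹
        = (8 * (1 + 256 / b ^ 4) * ((1 + r) ^ 4)⁻¹) / a := by ring
    rw [heq]
    gcongr

lemma juttner_pos {a b : ℝ} (ha : 0 < a) (hb : 0 < b) :
    0 < ∫ q : EuclideanSpace ℝ (Fin 3),
      Real.exp (-b * Real.sqrt (a ^ 2 + ‖q‖ ^ 2)) / Real.sqrt (a ^ 2 + ‖q‖ ^ 2) := by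
  refine (integral_pos_iff_support_of_nonneg (fun q => ?_) (juttner_integrable ha hb)).2 ?_
  · have : 0 < Real.sqrt (a ^ 2 + ‖q‖ ^ 2) := Real.sqrt_pos.2 (by positivity)
    positivity
  · have hsupp : (Function.support fun q : EuclideanSpace ℝ (Fin 3) =>
        Real.exp (-b * Real.sqrt (a ^ 2 + ‖q‖ ^ 2)) / Real.sqrt (a ^ 2 + ‖q‖ ^ 2)) = Set.univ := by
      refine Set.eq_univ_of_forall fun q => ?_
      have hs : 0 < Real.sqrt (a ^ 2 + ‖q‖ ^ 2) := Real.sqrt_pos.2 (by positivity)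
      exact (by positivity : (0:ℝ) < Real.exp (-b * Real.sqrt (a ^ 2 + ‖q‖ ^ 2)) / Real.sqrt (a ^ 2 + ‖q‖ ^ 2)).ne'
    rw [hsupp]
    exact isOpen_univ.measure_pos _ ⟨0, trivial⟩

lemma exp_arg_bound {β βl d E p0 : ℝ} (hβl : βl ≤ β) (hβ0 : 0 < β) (hd : 0 ≤ d)
    (hp0 : 0 ≤ p0) (hE : d * p0 ≤ E) : -β * E ≤ -(βl * d) * p0 := by
  nlinarith [mul_le_mul_of_nonneg_left hE hβ0.le,
    mul_le_mul_of_nonneg_right hβl (mul_nonneg hd hp0)]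

set_option maxHeartbeats 1000000 in
theorem stmt_8 (c m : ℝ) (hc : 0 < c) (hm : 0 < m)
    (βl βu : ℝ) (hβl : 0 < βl) (hβlu : βl ≤ βu)
    (Uu au : ℝ) (hUu : 0 ≤ Uu) (hau : 0 < au)
    (C1 C2 : ℝ)
    (hC1 : C1 = au / ∫ q : EuclideanSpace ℝ (Fin 3),
      Real.exp (-(c * βu) * Real.sqrt ((c * m) ^ 2 + ‖q‖ ^ 2)) /
        Real.sqrt ((c * m) ^ 2 + ‖q‖ ^ 2))
    (hC2 : C2 = βl * (Real.sqrt (c ^ 2 + Uu ^ 2) - Uu)) :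
    ∀ α ∈ Set.Icc (0 : ℝ) au, ∀ β ∈ Set.Icc βl βu,
      ∀ U : EuclideanSpace ℝ (Fin 3), ‖U‖ ≤ Uu →
      ∀ p : EuclideanSpace ℝ (Fin 3),
        (α / ∫ q : EuclideanSpace ℝ (Fin 3),
            Real.exp (-(c * β) * Real.sqrt ((c * m) ^ 2 + ‖q‖ ^ 2)) /
              Real.sqrt ((c * m) ^ 2 + ‖q‖ ^ 2)) *
          Real.exp (-β * (Real.sqrt (c ^ 2 + ‖U‖ ^ 2) *
            Real.sqrt ((c * m) ^ 2 + ‖p‖ ^ 2) - (inner ℝ U p : ℝ))) ≤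
        C1 * Real.exp (-C2 * Real.sqrt ((c * m) ^ 2 + ‖p‖ ^ 2)) := by
  intro α hα β hβ U hU p
  have hcm : 0 < c * m := mul_pos hc hm
  have hβpos : 0 < β := lt_of_lt_of_le hβl hβ.1
  have hcβ : 0 < c * β := mul_pos hc hβpos
  have hcβu : 0 < c * βu := mul_pos hc (lt_of_lt_of_le hβl hβlu)
  set Iβ := ∫ q : EuclideanSpace ℝ (Fin 3),
      Real.exp (-(c * β) * Real.sqrt ((c * m) ^ 2 + ‖q‖ ^ 2)) /
        Real.sqrt ((c * m) ^ 2 + ‖q‖ ^ 2) with hIβ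
  set Iu := ∫ q : EuclideanSpace ℝ (Fin 3),
      Real.exp (-(c * βu) * Real.sqrt ((c * m) ^ 2 + ‖q‖ ^ 2)) /
        Real.sqrt ((c * m) ^ 2 + ‖q‖ ^ 2) with hIu
  have hIu_pos : 0 < Iu := juttner_pos hcm hcβu
  have hmono : Iu ≤ Iβ := by
    refine integral_mono (juttner_integrable hcm hcβu) (juttner_integrable hcm hcβ)
      fun q => ?_
    have hs : 0 < Real.sqrt ((c * m) ^ 2 + ‖q‖ ^ 2) := Real.sqrt_pos.2 (by positivity)
    have : Real.exp (-(c * βu) * Real.sqrt ((c * m) ^ 2 + ‖q‖ ^ 2))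
        ≤ Real.exp (-(c * β) * Real.sqrt ((c * m) ^ 2 + ‖q‖ ^ 2)) := by
      apply Real.exp_le_exp.2
      have : c * β ≤ c * βu := by nlinarith [hβ.2]
      nlinarith
    exact div_le_div_of_nonneg_right this hs.le
  have hfrac : α / Iβ ≤ C1 := by
    rw [hC1]
    exact div_le_div₀ hau.le hα.2 hIu_pos hmono
  -- exponent bound
  set p0 := Real.sqrt ((c * m) ^ 2 + ‖p‖ ^ 2) with hp0
  have hp0_nonneg : 0 ≤ p0 := Real.sqrt_nonneg _
  have hpnorm : ‖p‖ ≤ p0 := sqrt_add_le_aux' (norm_nonneg p) hcm.le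
  have hinner : (inner ℝ U p : ℝ) ≤ ‖U‖ * ‖p‖ := real_inner_le_norm U p
  have hUA : ‖U‖ ≤ Real.sqrt (c ^ 2 + ‖U‖ ^ 2) := sqrt_add_le_aux' (norm_nonneg U) hc.le
  have hd0 : 0 ≤ Real.sqrt (c ^ 2 + Uu ^ 2) - Uu := by
    have := sqrt_add_le_aux' hUu hc.le
    linarith
  have hdec : Real.sqrt (c ^ 2 + Uu ^ 2) - Uu ≤ Real.sqrt (c ^ 2 + ‖U‖ ^ 2) - ‖U‖ :=
    sqrt_sub_antitone hc (norm_nonneg U) hU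
  have hE : (Real.sqrt (c ^ 2 + Uu ^ 2) - Uu) * p0
      ≤ Real.sqrt (c ^ 2 + ‖U‖ ^ 2) * p0 - (inner ℝ U p : ℝ) := by
    have h1 : (inner ℝ U p : ℝ) ≤ ‖U‖ * p0 := by
      calc (inner ℝ U p : ℝ) ≤ ‖U‖ * ‖p‖ := hinner
        _ ≤ ‖U‖ * p0 := by nlinarith [norm_nonneg U]
    nlinarith
  have hexp : Real.exp (-β * (Real.sqrt (c ^ 2 + ‖U‖ ^ 2) * p0 - (inner ℝ U p : ℝ)))
      ≤ Real.exp (-C2 * p0) := by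
    apply Real.exp_le_exp.2
    rw [hC2]
    exact exp_arg_bound hβ.1 hβpos hd0 hp0_nonneg hE
  have hC1nn : 0 ≤ C1 := by rw [hC1]; exact div_nonneg hau.le hIu_pos.le
  calc α / Iβ * Real.exp (-β * (Real.sqrt (c ^ 2 + ‖U‖ ^ 2) * p0 - (inner ℝ U p : ℝ)))
      ≤ C1 * Real.exp (-C2 * p0) :=
        mul_le_mul hfrac hexp (Real.exp_pos _).le hC1nn
end

section
/- Let C₃ > 0, let ω ∈ (0,1), and let x ∈ [0,1]. Then ∫₀^∞ (1 − e^{−ω x/s}) e^{−C₃ s} ds ≤ ω + 2ω ln(1/ω) + (ω²/C₃) e^{−C₃/ω}. -/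
open MeasureTheory

open Set Real Filter Topology in
lemma exp_int_aux {b : ℝ} (hb : 0 < b) (a : ℝ) :
    ∫ s in Set.Ioi a, Real.exp (-b * s) = Real.exp (-b * a) / b := by
  have h : ∫ s in Set.Ioi a, Real.exp (-b * s) = 0 - (-Real.exp (-b * a) / b) := by
    refine integral_Ioi_of_hasDerivAt_of_tendsto'
      (f := fun s => -Real.exp (-b * s) / b) (fun s _ => ?_)
      (exp_neg_integrableOn_Ioi a hb) ?_
    · have h1 : HasDerivAt (fun s : ℝ => -b * s) (-b) s := by
        simpa using (hasDerivAt_id s).const_mul (-b)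
      have h2 := (h1.exp).neg.div_const b
      convert h2 using 1
      · rfl
      · rfl
      · field_simp
    · have : Tendsto (fun s : ℝ => -Real.exp (-b * s) / b) atTop (𝓝 ((-(0:ℝ)) / b)) := by
        refine Tendsto.div_const (Tendsto.neg ?_) _
        exact tendsto_exp_atBot.comp (tendsto_id.const_mul_atTop_of_neg (by linarith))
      simpa using this
  rw [h]; ring

theorem stmt_10 (C3 : ℝ) (hC3 : 0 < C3) (ω : ℝ) (hω : ω ∈ Set.Ioo (0 : ℝ) 1)
    (x : ℝ) (hx : x ∈ Set.Icc (0 : ℝ) 1) :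
    (∫ s in Set.Ioi (0 : ℝ), (1 - Real.exp (-(ω * x) / s)) * Real.exp (-C3 * s)) ≤
      ω + 2 * ω * Real.log (1 / ω) + ω ^ 2 / C3 * Real.exp (-C3 / ω) := by
  obtain ⟨hω0, hω1⟩ := hω
  obtain ⟨hx0, hx1⟩ := hx
  set f : ℝ → ℝ := fun s => (1 - Real.exp (-(ω * x) / s)) * Real.exp (-C3 * s) with hf
  have hωx : 0 ≤ ω * x := mul_nonneg hω0.le hx0
  have hωinv : ω < ω⁻¹ := by
    have := one_lt_inv_iff₀.2 ⟨hω0, hω1⟩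
    linarith
  -- pointwise bounds
  have hub : ∀ s : ℝ, 0 < s → f s ≤ Real.exp (-C3 * s) := by
    intro s hs
    have h1 : Real.exp (-(ω * x) / s) > 0 := Real.exp_pos _
    have : 1 - Real.exp (-(ω * x) / s) ≤ 1 := by linarith
    calc f s ≤ 1 * Real.exp (-C3 * s) :=
          mul_le_mul_of_nonneg_right this (Real.exp_pos _).le
      _ = Real.exp (-C3 * s) := one_mul _
  have hlb : ∀ s : ℝ, 0 < s → 0 ≤ f s := by
    intro s hs
    have h1 : Real.exp (-(ω * x) / s) ≤ 1 := by
      rw [Real.exp_le_one_iff]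
      exact div_nonpos_of_nonpos_of_nonneg (by linarith) hs.le
    exact mul_nonneg (by linarith) (Real.exp_pos _).le
  have hub2 : ∀ s : ℝ, 0 < s → f s ≤ ω * x / s * Real.exp (-C3 * s) := by
    intro s hs
    have key : 1 - Real.exp (-(ω * x) / s) ≤ ω * x / s := by
      have := Real.add_one_le_exp (-(ω * x) / s)
      have h2 : -(ω * x) / s = -(ω * x / s) := by ring
      rw [h2] at this ⊢
      linarith
    exact mul_le_mul_of_nonneg_right key (Real.exp_pos _).le
  -- measurability / integrability
  have hmeas : Measurable f := by
    apply Measurable.mul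
    · exact (measurable_const.sub ((measurable_const.div measurable_id).exp))
    · exact (measurable_id.const_mul _).exp
  have hint : IntegrableOn f (Set.Ioi 0) := by
    refine Integrable.mono' (exp_neg_integrableOn_Ioi 0 hC3)
      hmeas.aestronglyMeasurable ?_
    filter_upwards [ae_restrict_mem measurableSet_Ioi] with s hs
    rw [Real.norm_eq_abs, abs_of_nonneg (hlb s hs)]
    exact hub s hs
  have hint1 : IntegrableOn f (Set.Ioc 0 ω) :=
    hint.mono_set Set.Ioc_subset_Ioi_self
  have hintIω : IntegrableOn f (Set.Ioi ω) :=
    hint.mono_set (Set.Ioi_subset_Ioi hω0.le)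
  have hint2 : IntegrableOn f (Set.Ioc ω ω⁻¹) :=
    hintIω.mono_set Set.Ioc_subset_Ioi_self
  have hint3 : IntegrableOn f (Set.Ioi ω⁻¹) :=
    hint.mono_set (Set.Ioi_subset_Ioi (by positivity))
  -- split the integral
  have hsplit1 : Set.Ioc (0:ℝ) ω ∪ Set.Ioi ω = Set.Ioi (0:ℝ) :=
    Set.Ioc_union_Ioi_eq_Ioi hω0.le
  have hsplit2 : Set.Ioc ω ω⁻¹ ∪ Set.Ioi ω⁻¹ = Set.Ioi ω :=
    Set.Ioc_union_Ioi_eq_Ioi hωinv.le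
  have heq : (∫ s in Set.Ioi (0:ℝ), f s) =
      (∫ s in Set.Ioc (0:ℝ) ω, f s) + (∫ s in Set.Ioc ω ω⁻¹, f s)
        + (∫ s in Set.Ioi ω⁻¹, f s) := by
    rw [← hsplit1, setIntegral_union (Set.Ioc_disjoint_Ioi le_rfl) measurableSet_Ioi
      hint1 hintIω, ← hsplit2, setIntegral_union (Set.Ioc_disjoint_Ioi le_rfl)
      measurableSet_Ioi hint2 hint3]
    ring
  -- bound piece 1
  have hb1 : (∫ s in Set.Ioc (0:ℝ) ω, f s) ≤ ω := by
    have : (∫ s in Set.Ioc (0:ℝ) ω, f s) ≤ ∫ _ in Set.Ioc (0:ℝ) ω, (1:ℝ) := by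
      refine setIntegral_mono_on hint1 (integrableOn_const ?_)
        measurableSet_Ioc ?_
      · rw [Real.volume_Ioc]; exact ENNReal.ofReal_ne_top
      · intro s hs
        have h1 : Real.exp (-C3 * s) ≤ 1 := by
          rw [Real.exp_le_one_iff]; nlinarith [hs.1]
        calc f s ≤ Real.exp (-C3 * s) := hub s hs.1
          _ ≤ 1 := h1
    rw [setIntegral_const, Real.volume_real_Ioc_of_le (by linarith), smul_eq_mul, mul_one] at this
    linarith
  -- bound piece 2
  have hb2 : (∫ s in Set.Ioc ω ω⁻¹, f s) ≤ 2 * ω * Real.log (1 / ω) := by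
    have hgint : IntegrableOn (fun s : ℝ => ω * s⁻¹) (Set.Ioc ω ω⁻¹) := by
      refine (ContinuousOn.integrableOn_compact isCompact_Icc ?_).mono_set
        Set.Ioc_subset_Icc_self
      refine continuousOn_const.mul (continuousOn_inv₀.mono ?_)
      intro s hs
      exact Set.mem_compl_singleton_iff.2 (ne_of_gt (lt_of_lt_of_le hω0 hs.1))
    have step : (∫ s in Set.Ioc ω ω⁻¹, f s) ≤ ∫ s in Set.Ioc ω ω⁻¹, ω * s⁻¹ := by
      refine setIntegral_mono_on hint2 hgint measurableSet_Ioc ?_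
      intro s hs
      have hs0 : 0 < s := lt_trans hω0 hs.1
      have h1 : Real.exp (-C3 * s) ≤ 1 := by
        rw [Real.exp_le_one_iff]; nlinarith
      calc f s ≤ ω * x / s * Real.exp (-C3 * s) := hub2 s hs0
        _ ≤ ω * x / s * 1 := by
            refine mul_le_mul_of_nonneg_left h1 (by positivity)
        _ = ω * x * s⁻¹ := by ring
        _ ≤ ω * 1 * s⁻¹ := by
            refine mul_le_mul_of_nonneg_right ?_ (by positivity)
            nlinarith
        _ = ω * s⁻¹ := by ring
    have hval : (∫ s in Set.Ioc ω ω⁻¹, ω * s⁻¹) = 2 * ω * Real.log (1 / ω) := by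
      rw [← intervalIntegral.integral_of_le hωinv.le,
        intervalIntegral.integral_const_mul, integral_inv_of_pos hω0 (by positivity)]
      rw [Real.log_div (by positivity) (ne_of_gt hω0), Real.log_inv, one_div,
        Real.log_inv]
      ring
    linarith
  -- bound piece 3
  have hb3 : (∫ s in Set.Ioi ω⁻¹, f s) ≤ ω ^ 2 / C3 * Real.exp (-C3 / ω) := by
    have hgint : IntegrableOn (fun s : ℝ => ω ^ 2 * Real.exp (-C3 * s))
        (Set.Ioi ω⁻¹) := (exp_neg_integrableOn_Ioi ω⁻¹ hC3).const_mul _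
    have step : (∫ s in Set.Ioi ω⁻¹, f s) ≤
        ∫ s in Set.Ioi ω⁻¹, ω ^ 2 * Real.exp (-C3 * s) := by
      refine setIntegral_mono_on hint3 hgint measurableSet_Ioi ?_
      intro s hs
      rw [Set.mem_Ioi] at hs
      have hs0 : 0 < s := lt_trans (by positivity) hs
      have hsinv : s⁻¹ ≤ ω := by
        rw [inv_le_comm₀ hs0 hω0]
        exact hs.le
      calc f s ≤ ω * x / s * Real.exp (-C3 * s) := hub2 s hs0
        _ ≤ ω ^ 2 * Real.exp (-C3 * s) := by
            refine mul_le_mul_of_nonneg_right ?_ (Real.exp_pos _).le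
            have : ω * x / s ≤ ω * 1 * s⁻¹ := by
              rw [div_eq_mul_inv]
              refine mul_le_mul_of_nonneg_right ?_ (by positivity)
              nlinarith
            calc ω * x / s ≤ ω * 1 * s⁻¹ := this
              _ = ω * s⁻¹ := by ring
              _ ≤ ω * ω := mul_le_mul_of_nonneg_left hsinv hω0.le
              _ = ω ^ 2 := by ring
    have hval : (∫ s in Set.Ioi ω⁻¹, ω ^ 2 * Real.exp (-C3 * s)) =
        ω ^ 2 / C3 * Real.exp (-C3 / ω) := by
      rw [MeasureTheory.integral_const_mul, exp_int_aux hC3]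
      rw [div_eq_mul_inv (-C3) ω]
      ring
    linarith
  calc (∫ s in Set.Ioi (0:ℝ), f s)
      = _ + _ + _ := heq
    _ ≤ ω + 2 * ω * Real.log (1 / ω) + ω ^ 2 / C3 * Real.exp (-C3 / ω) := by
        linarith
end

section
/- Let c, m > 0 and write p⁰ = √((cm)² + |p|²) for p ∈ ℝ³. Let C₁, C₂ > 0. Then there exist constants C, C' > 0, depending only on C₁, C₂, c, m, such that for every measurable J : [0,1] × ℝ³ → ℝ with 0 ≤ J(y,p) ≤ C₁ e^{−C₂ p⁰} for all (y,p), every ω ∈ (0,1), and every x ∈ [0,1]: ∫_{p¹>0} (ω/p¹) ∫₀^x e^{−(ω/p¹)(x−y)} J(y,p) dy dp + ∫_{p¹<0} (ω/|p¹|) ∫_x^1 e^{−(ω/|p¹|)(y−x)} J(y,p) dy dp ≤ C(ω ln(1/ω) + ω + ω² e^{−C'/ω}). -/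
open MeasureTheory
open Real Set

lemma exp_int_eval {a x : ℝ} (ha : 0 < a) :
    ∫ y in (0:ℝ)..x, Real.exp (-a * (x - y)) = (1 - Real.exp (-a * x)) / a := by
  rw [intervalIntegral.integral_comp_sub_left (fun u => Real.exp (-a * u)) x]
  simp only [sub_self, sub_zero]
  rw [intervalIntegral.integral_comp_mul_left (fun u => Real.exp u) (by linarith : (-a:ℝ) ≠ 0)]
  rw [integral_exp]
  rw [smul_eq_mul]
  field_simp
  rw [mul_zero, neg_zero, Real.exp_zero]
  ring

lemma key1 {a M x : ℝ} (ha : 0 < a) (hM : 0 ≤ M) (hx0 : 0 ≤ x) (hx1 : x ≤ 1)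
    {K : ℝ → ℝ} (hKm : Measurable K) (hK : ∀ y ∈ Set.Icc 0 x, 0 ≤ K y ∧ K y ≤ M) :
    a * ∫ y in (0:ℝ)..x, Real.exp (-a * (x - y)) * K y ≤ M * min a 1 := by
  have hcont : Continuous fun y => Real.exp (-a * (x - y)) := by continuity
  have hint : IntervalIntegrable (fun y => Real.exp (-a * (x - y)) * K y) volume 0 x := by
    rw [intervalIntegrable_iff_integrableOn_Ioc_of_le hx0]
    refine Measure.integrableOn_of_bounded (M := M) measure_Ioc_lt_top.ne
      (hcont.measurable.mul hKm).aestronglyMeasurable ?_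
    filter_upwards [ae_restrict_mem measurableSet_Ioc] with y hy
    have h1 := hK y ⟨hy.1.le, hy.2⟩
    have he : Real.exp (-a * (x - y)) ≤ 1 := by
      rw [Real.exp_le_one_iff]
      nlinarith [hy.2]
    rw [Real.norm_eq_abs, abs_of_nonneg (mul_nonneg (Real.exp_pos _).le h1.1)]
    nlinarith [Real.exp_pos (-a * (x - y))]
  have hint2 : IntervalIntegrable (fun y => Real.exp (-a * (x - y)) * M) volume 0 x :=
    (hcont.mul continuous_const).intervalIntegrable 0 x
  have hmono : (∫ y in (0:ℝ)..x, Real.exp (-a * (x - y)) * K y)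
      ≤ ∫ y in (0:ℝ)..x, Real.exp (-a * (x - y)) * M := by
    refine intervalIntegral.integral_mono_on hx0 hint hint2 (fun y hy => ?_)
    exact mul_le_mul_of_nonneg_left (hK y hy).2 (Real.exp_pos _).le
  have hval : (∫ y in (0:ℝ)..x, Real.exp (-a * (x - y)) * M)
      = M * ((1 - Real.exp (-a * x)) / a) := by
    rw [intervalIntegral.integral_mul_const, exp_int_eval ha]; ring
  have hfin : a * (M * ((1 - Real.exp (-a * x)) / a)) ≤ M * min a 1 := by
    rw [show a * (M * ((1 - Real.exp (-a * x)) / a)) = M * (1 - Real.exp (-a * x)) by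
      field_simp]
    refine mul_le_mul_of_nonneg_left ?_ hM
    rcases le_total a 1 with h | h
    · rw [min_eq_left h]
      have := Real.add_one_le_exp (-a * x)
      have hax : a * x ≤ a := by nlinarith
      nlinarith
    · rw [min_eq_right h]
      have := Real.exp_pos (-a * x); linarith
  calc a * ∫ y in (0:ℝ)..x, Real.exp (-a * (x - y)) * K y
      ≤ a * ∫ y in (0:ℝ)..x, Real.exp (-a * (x - y)) * M :=
        mul_le_mul_of_nonneg_left hmono ha.le
    _ = a * (M * ((1 - Real.exp (-a * x)) / a)) := by rw [hval]
    _ ≤ M * min a 1 := hfin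

lemma integrable_exp_neg_mul_abs' {b : ℝ} (hb : 0 < b) :
    Integrable (fun t : ℝ => Real.exp (-b * |t|)) := by
  have hpos : IntegrableOn (fun t : ℝ => Real.exp (-b * |t|)) (Ioi 0) :=
    (exp_neg_integrableOn_Ioi 0 hb).congr_fun
      (fun y hy => by rw [abs_of_pos hy]) measurableSet_Ioi
  rw [← integrableOn_univ, ← @Iio_union_Ici _ _ (0 : ℝ), integrableOn_union,
    integrableOn_Ici_iff_integrableOn_Ioi]
  refine ⟨?_, hpos⟩
  rw [← (Measure.measurePreserving_neg (volume : Measure ℝ)).integrableOn_comp_preimage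
      (Homeomorph.neg ℝ).measurableEmbedding]
  simpa [Function.comp_def] using hpos


lemma oneD {b ω : ℝ} (hb : 0 < b) (hω0 : 0 < ω) (hω1 : ω < 1) :
    ∫ t : ℝ, Real.exp (-b * |t|) * min (ω / |t|) 1
      ≤ 2 * (ω * Real.log (1/ω) + ω + ω * ∫ t in Set.Ioi (1:ℝ), Real.exp (-b * t)) := by
  set F : ℝ → ℝ := fun s => Real.exp (-b * s) * min (ω / s) 1 with hF
  have hFm : Measurable F :=
    ((measurable_id.const_mul (-b)).exp).mul
      ((measurable_const.div measurable_id).min measurable_const)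
  have hcomp : ∫ t : ℝ, Real.exp (-b * |t|) * min (ω / |t|) 1 = 2 * ∫ s in Ioi (0:ℝ), F s :=
    integral_comp_abs (f := F)
  rw [hcomp]
  have hFb1 : ∀ s ∈ Ioc (0:ℝ) 1, F s ≤ 1 := by
    intro s hs
    have h1 : Real.exp (-b * s) ≤ 1 := by
      rw [Real.exp_le_one_iff]; nlinarith [hs.1]
    have h2 : min (ω / s) 1 ≤ 1 := min_le_right _ _
    have h3 : 0 ≤ min (ω / s) 1 := le_min (div_nonneg hω0.le hs.1.le) one_pos.le
    show Real.exp (-b * s) * min (ω / s) 1 ≤ 1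
    nlinarith [Real.exp_pos (-b * s)]
  have hF0 : ∀ s ∈ Ioi (0:ℝ), 0 ≤ F s := fun s hs =>
    mul_nonneg (Real.exp_pos _).le (le_min (div_nonneg hω0.le (le_of_lt hs)) one_pos.le)
  have I1 : IntegrableOn F (Ioc 0 ω) := by
    refine Measure.integrableOn_of_bounded (M := 1) measure_Ioc_lt_top.ne
      hFm.aestronglyMeasurable ?_
    filter_upwards [ae_restrict_mem measurableSet_Ioc] with s hs
    rw [Real.norm_eq_abs, abs_of_nonneg (hF0 s hs.1)]
    exact hFb1 s ⟨hs.1, hs.2.trans hω1.le⟩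
  have I2 : IntegrableOn F (Ioc ω 1) := by
    refine Measure.integrableOn_of_bounded (M := 1) measure_Ioc_lt_top.ne
      hFm.aestronglyMeasurable ?_
    filter_upwards [ae_restrict_mem measurableSet_Ioc] with s hs
    rw [Real.norm_eq_abs, abs_of_nonneg (hF0 s (hω0.trans hs.1))]
    exact hFb1 s ⟨hω0.trans hs.1, hs.2⟩
  have I3 : IntegrableOn F (Ioi 1) := by
    refine Integrable.mono' (exp_neg_integrableOn_Ioi 1 hb) hFm.aestronglyMeasurable ?_
    filter_upwards [ae_restrict_mem measurableSet_Ioi] with s hs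
    have hs1 : (1:ℝ) < s := hs
    rw [Real.norm_eq_abs, abs_of_nonneg (hF0 s (by exact lt_trans one_pos hs1))]
    have h3 : 0 ≤ min (ω / s) 1 := le_min (div_nonneg hω0.le (by linarith)) one_pos.le
    show Real.exp (-b * s) * min (ω / s) 1 ≤ Real.exp (-b * s)
    nlinarith [Real.exp_pos (-b * s), min_le_right (ω / s) 1]
  have hsplit2 : Ioc ω 1 ∪ Ioi 1 = Ioi ω := Ioc_union_Ioi_eq_Ioi hω1.le
  have I23 : IntegrableOn F (Ioi ω) := by rw [← hsplit2]; exact I2.union I3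
  have hsplit1 : Ioc 0 ω ∪ Ioi ω = Ioi 0 := Ioc_union_Ioi_eq_Ioi hω0.le
  have heq1 : ∫ s in Ioi (0:ℝ), F s = (∫ s in Ioc 0 ω, F s) + ∫ s in Ioi ω, F s := by
    rw [← hsplit1]
    exact setIntegral_union (Ioc_disjoint_Ioi le_rfl) measurableSet_Ioi I1 I23
  have heq2 : ∫ s in Ioi ω, F s = (∫ s in Ioc ω 1, F s) + ∫ s in Ioi 1, F s := by
    rw [← hsplit2]
    exact setIntegral_union (Ioc_disjoint_Ioi le_rfl) measurableSet_Ioi I2 I3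
  have b1 : ∫ s in Ioc 0 ω, F s ≤ ω := by
    have := setIntegral_mono_on I1 (integrableOn_const measure_Ioc_lt_top.ne)
      measurableSet_Ioc (fun s hs => hFb1 s ⟨hs.1, hs.2.trans hω1.le⟩)
    rwa [setIntegral_const, volume_real_Ioc_of_le hω0.le, smul_eq_mul, mul_one,
      sub_zero] at this
  have b2 : ∫ s in Ioc ω 1, F s ≤ ω * Real.log (1/ω) := by
    have hmono : ∫ s in Ioc ω 1, F s ≤ ∫ s in Ioc ω 1, ω * (1 / s) := by
      refine setIntegral_mono_on I2 ?_ measurableSet_Ioc (fun s hs => ?_)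
      · refine Measure.integrableOn_of_bounded (M := 1) measure_Ioc_lt_top.ne
          ((measurable_const.mul (measurable_const.div measurable_id)).aestronglyMeasurable) ?_
        filter_upwards [ae_restrict_mem measurableSet_Ioc] with s hs
        have hs0 : 0 < s := hω0.trans hs.1
        rw [Real.norm_eq_abs, abs_of_nonneg (by positivity)]
        rw [mul_one_div, div_le_one hs0]
        exact hs.1.le
      · have hs0 : 0 < s := hω0.trans hs.1
        have h1 : Real.exp (-b * s) ≤ 1 := by rw [Real.exp_le_one_iff]; nlinarith
        have h2 : min (ω / s) 1 ≤ ω / s := min_le_left _ _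
        have h3 : 0 ≤ min (ω / s) 1 := le_min (by positivity) one_pos.le
        calc F s ≤ 1 * (ω / s) := by
              show Real.exp (-b * s) * min (ω / s) 1 ≤ 1 * (ω / s)
              nlinarith [Real.exp_pos (-b * s)]
          _ = ω * (1 / s) := by ring
    have hval : ∫ s in Ioc ω 1, ω * (1 / s) = ω * Real.log (1/ω) := by
      rw [← intervalIntegral.integral_of_le hω1.le, intervalIntegral.integral_const_mul,
        integral_one_div (by
          rw [Set.uIcc_of_le hω1.le]
          exact fun h => lt_irrefl 0 (lt_of_lt_of_le hω0 h.1))]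
    linarith [hmono, hval.le, hval.ge]
  have b3 : ∫ s in Ioi 1, F s ≤ ω * ∫ t in Ioi (1:ℝ), Real.exp (-b * t) := by
    rw [← integral_const_mul]
    refine setIntegral_mono_on I3 ((exp_neg_integrableOn_Ioi 1 hb).const_mul ω)
      measurableSet_Ioi (fun s hs => ?_)
    have hs1 : (1:ℝ) < s := hs
    have h2 : min (ω / s) 1 ≤ ω / s := min_le_left _ _
    have h4 : ω / s ≤ ω := by
      rw [div_le_iff₀ (by linarith)]; nlinarith
    calc F s ≤ Real.exp (-b * s) * (ω / s) := by
          exact mul_le_mul_of_nonneg_left h2 (Real.exp_pos _).le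
      _ ≤ ω * Real.exp (-b * s) := by
          rw [mul_comm]; exact mul_le_mul_of_nonneg_right h4 (Real.exp_pos _).le
  have : ∫ s in Ioi (0:ℝ), F s
      ≤ ω * Real.log (1/ω) + ω + ω * ∫ t in Ioi (1:ℝ), Real.exp (-b * t) := by
    rw [heq1, heq2]; linarith
  linarith



lemma key2 {a M x : ℝ} (ha : 0 < a) (hM : 0 ≤ M) (hx0 : 0 ≤ x) (hx1 : x ≤ 1)
    {K : ℝ → ℝ} (hKm : Measurable K) (hK : ∀ y ∈ Set.Icc x 1, 0 ≤ K y ∧ K y ≤ M) :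
    a * ∫ y in x..(1:ℝ), Real.exp (-a * (y - x)) * K y ≤ M * min a 1 := by
  have hKm' : Measurable fun u => K (1 - u) := hKm.comp (measurable_const.sub measurable_id)
  have hK' : ∀ u ∈ Set.Icc 0 (1 - x), 0 ≤ K (1 - u) ∧ K (1 - u) ≤ M := fun u hu =>
    hK (1 - u) ⟨by linarith [hu.2], by linarith [hu.1]⟩
  have h := key1 (x := 1 - x) ha hM (by linarith) (by linarith) hKm' hK'
  have heq : (∫ u in (0:ℝ)..(1 - x), Real.exp (-a * ((1 - x) - u)) * K (1 - u))
      = ∫ y in x..(1:ℝ), Real.exp (-a * (y - x)) * K y := by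
    have h2 := intervalIntegral.integral_comp_sub_left
      (a := (0:ℝ)) (b := 1 - x) (fun y => Real.exp (-a * (y - x)) * K y) 1
    simp only [sub_sub_cancel, sub_zero] at h2
    rw [← h2]
    congr 1
    funext u
    congr 2
    ring
  rwa [heq] at h


lemma threeD (g : Fin 3 → ℝ → ℝ) (hg : ∀ i, Integrable (g i)) :
    (Integrable (fun p : EuclideanSpace ℝ (Fin 3) => g 0 (p 0) * g 1 (p 1) * g 2 (p 2))) ∧
    ∫ p : EuclideanSpace ℝ (Fin 3), g 0 (p 0) * g 1 (p 1) * g 2 (p 2)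
      = (∫ t, g 0 t) * (∫ t, g 1 t) * (∫ t, g 2 t) := by
  set e := (MeasurableEquiv.toLp 2 (Fin 3 → ℝ)).symm with he
  have hmp : MeasurePreserving e := EuclideanSpace.volume_preserving_symm_measurableEquiv_toLp (Fin 3)
  set G : (Fin 3 → ℝ) → ℝ := fun q => ∏ i, g i (q i) with hG
  have hGint : Integrable G := Integrable.fintype_prod (fun i => hg i)
  have hcomp : (fun p : EuclideanSpace ℝ (Fin 3) => g 0 (p 0) * g 1 (p 1) * g 2 (p 2))
      = G ∘ e := by
    funext p
    simp [hG, Fin.prod_univ_three]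
    rfl
  constructor
  · rw [hcomp]
    exact (hmp.integrable_comp_emb e.measurableEmbedding).mpr hGint
  · have h1 : ∫ p : EuclideanSpace ℝ (Fin 3), g 0 (p 0) * g 1 (p 1) * g 2 (p 2)
        = ∫ q : Fin 3 → ℝ, G q := by
      rw [hcomp]
      exact hmp.integral_comp e.measurableEmbedding G
    rw [h1, hG]
    rw [MeasureTheory.integral_fintype_prod_volume_eq_prod g, Fin.prod_univ_three]


lemma coord_bound (p : EuclideanSpace ℝ (Fin 3)) (i : Fin 3) : |p i| ≤ ‖p‖ := by
  rw [EuclideanSpace.norm_eq]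
  rw [show |p i| = Real.sqrt (‖p i‖ ^ 2) by
    rw [Real.sqrt_sq_eq_abs]; simp [Real.norm_eq_abs]]
  apply Real.sqrt_le_sqrt
  exact Finset.single_le_sum (f := fun j => ‖p j‖ ^ 2) (fun j _ => by positivity)
    (Finset.mem_univ i)

lemma exp_bound {C2 : ℝ} (hC2 : 0 < C2) (cm : ℝ) (p : EuclideanSpace ℝ (Fin 3)) :
    Real.exp (-C2 * Real.sqrt (cm ^ 2 + ‖p‖ ^ 2)) ≤
      Real.exp (-(C2/3) * |p 0|) * (Real.exp (-(C2/3) * |p 1|) * Real.exp (-(C2/3) * |p 2|)) := by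
  rw [← Real.exp_add, ← Real.exp_add, Real.exp_le_exp]
  have h1 : ‖p‖ ≤ Real.sqrt (cm ^ 2 + ‖p‖ ^ 2) := by
    have h0 := Real.sqrt_le_sqrt (show ‖p‖ ^ 2 ≤ cm ^ 2 + ‖p‖ ^ 2 by nlinarith [sq_nonneg cm])
    rwa [Real.sqrt_sq (norm_nonneg p)] at h0
  have h2 := coord_bound p 0
  have h3 := coord_bound p 1
  have h4 := coord_bound p 2
  nlinarith



theorem stmt_11 (c m C1 C2 : ℝ) (hc : 0 < c) (hm : 0 < m)
    (hC1 : 0 < C1) (hC2 : 0 < C2) :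
    ∃ C > 0, ∃ C' > 0, ∀ J : ℝ → EuclideanSpace ℝ (Fin 3) → ℝ,
      Measurable (fun q : ℝ × EuclideanSpace ℝ (Fin 3) => J q.1 q.2) →
      (∀ y ∈ Set.Icc (0 : ℝ) 1, ∀ p : EuclideanSpace ℝ (Fin 3),
        0 ≤ J y p ∧ J y p ≤ C1 * Real.exp (-C2 * Real.sqrt ((c * m) ^ 2 + ‖p‖ ^ 2))) →
      ∀ ω ∈ Set.Ioo (0 : ℝ) 1, ∀ x ∈ Set.Icc (0 : ℝ) 1,
        (∫ p in {p : EuclideanSpace ℝ (Fin 3) | 0 < p 0},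
            (ω / p 0) * ∫ y in (0 : ℝ)..x, Real.exp (-(ω / p 0) * (x - y)) * J y p) +
        (∫ p in {p : EuclideanSpace ℝ (Fin 3) | p 0 < 0},
            (ω / |p 0|) * ∫ y in x..(1 : ℝ), Real.exp (-(ω / |p 0|) * (y - x)) * J y p) ≤
        C * (ω * Real.log (1 / ω) + ω + ω ^ 2 * Real.exp (-C' / ω)) := by
  set b : ℝ := C2 / 3 with hbdef
  have hb : 0 < b := by positivity
  set ψ : ℝ → ℝ := fun t => Real.exp (-b * |t|) with hψdef
  have hψint : Integrable ψ := integrable_exp_neg_mul_abs' hb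
  set E : ℝ := ∫ t, ψ t with hEdef
  have hE : 0 < E := by
    rw [hEdef]
    rw [integral_pos_iff_support_of_nonneg (fun t => (Real.exp_pos _).le) hψint]
    have : Function.support ψ = Set.univ := by
      ext t; simp [hψdef, Function.mem_support, (Real.exp_pos _).ne']
    rw [this]
    simp
  set B : ℝ := ∫ t in Ioi (1:ℝ), Real.exp (-b * t) with hBdef
  have hB : 0 ≤ B := setIntegral_nonneg measurableSet_Ioi (fun t _ => (Real.exp_pos _).le)
  refine ⟨4 * C1 * (E * E) * (1 + B), by positivity, 1, one_pos, ?_⟩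
  intro J hJm hJb ω hω x hx
  obtain ⟨hω0, hω1⟩ := hω
  obtain ⟨hx0, hx1⟩ := hx
  -- the dominating product function
  set φ : ℝ → ℝ := fun t => Real.exp (-b * |t|) * min (ω / |t|) 1 with hφdef
  have hφm : Measurable φ :=
    ((measurable_id.abs.const_mul (-b)).exp).mul
      ((measurable_const.div measurable_id.abs).min measurable_const)
  have hφ0 : ∀ t, 0 ≤ φ t := fun t =>
    mul_nonneg (Real.exp_pos _).le (le_min (div_nonneg hω0.le (abs_nonneg _)) one_pos.le)
  have hφint : Integrable φ := by
    refine hψint.mono' hφm.aestronglyMeasurable (ae_of_all _ (fun t => ?_))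
    rw [Real.norm_eq_abs, abs_of_nonneg (hφ0 t)]
    have h2 : min (ω / |t|) 1 ≤ 1 := min_le_right _ _
    have h3 : 0 ≤ min (ω / |t|) 1 := le_min (div_nonneg hω0.le (abs_nonneg _)) one_pos.le
    show Real.exp (-b * |t|) * min (ω / |t|) 1 ≤ Real.exp (-b * |t|)
    nlinarith [Real.exp_pos (-b * |t|)]
  set g : Fin 3 → ℝ → ℝ := fun i => if i = 0 then (fun t => C1 * φ t) else ψ with hgdef
  have hg : ∀ i, Integrable (g i) := by
    intro i
    rw [hgdef]
    by_cases hi : i = 0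
    · simp only [hi, if_pos rfl]
      exact hφint.const_mul C1
    · simp only [if_neg hi]
      exact hψint
  obtain ⟨hHint, hHval⟩ := threeD g hg
  set H : EuclideanSpace ℝ (Fin 3) → ℝ := fun p => g 0 (p 0) * g 1 (p 1) * g 2 (p 2) with hHdef
  have hHp : ∀ p : EuclideanSpace ℝ (Fin 3),
      H p = C1 * (Real.exp (-b * |p 0|) * min (ω / |p 0|) 1)
        * Real.exp (-b * |p 1|) * Real.exp (-b * |p 2|) := by
    intro p
    simp only [hHdef, hgdef, if_pos rfl, if_neg (by decide : (1 : Fin 3) ≠ 0),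
      if_neg (by decide : (2 : Fin 3) ≠ 0), hφdef, hψdef]
  have hH0 : ∀ p, 0 ≤ H p := by
    intro p
    rw [hHp p]
    have := hφ0 (p 0)
    positivity
  have hm0 : Measurable fun p : EuclideanSpace ℝ (Fin 3) => p 0 :=
    (measurable_pi_apply 0).comp (MeasurableEquiv.toLp 2 (Fin 3 → ℝ)).symm.measurable
  have hS1 : MeasurableSet {p : EuclideanSpace ℝ (Fin 3) | 0 < p 0} :=
    measurableSet_lt measurable_const hm0
  have hS2 : MeasurableSet {p : EuclideanSpace ℝ (Fin 3) | p 0 < 0} :=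
    measurableSet_lt hm0 measurable_const
  have hKm : ∀ p : EuclideanSpace ℝ (Fin 3), Measurable fun y => J y p :=
    fun p => hJm.comp (measurable_id.prodMk measurable_const)
  have hMle : ∀ p : EuclideanSpace ℝ (Fin 3),
      C1 * Real.exp (-C2 * Real.sqrt ((c * m) ^ 2 + ‖p‖ ^ 2)) * min (ω / |p 0|) 1 ≤ H p := by
    intro p
    rw [hHp p]
    have hexp := exp_bound hC2 (c * m) p
    have hmin : 0 ≤ min (ω / |p 0|) 1 :=
      le_min (div_nonneg hω0.le (abs_nonneg _)) one_pos.le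
    have h1 : C1 * Real.exp (-C2 * Real.sqrt ((c * m) ^ 2 + ‖p‖ ^ 2))
        ≤ C1 * (Real.exp (-(C2/3) * |p 0|) * (Real.exp (-(C2/3) * |p 1|)
          * Real.exp (-(C2/3) * |p 2|))) := mul_le_mul_of_nonneg_left hexp hC1.le
    calc C1 * Real.exp (-C2 * Real.sqrt ((c * m) ^ 2 + ‖p‖ ^ 2)) * min (ω / |p 0|) 1
        ≤ C1 * (Real.exp (-(C2/3) * |p 0|) * (Real.exp (-(C2/3) * |p 1|)
          * Real.exp (-(C2/3) * |p 2|))) * min (ω / |p 0|) 1 :=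
          mul_le_mul_of_nonneg_right h1 hmin
      _ = C1 * (Real.exp (-b * |p 0|) * min (ω / |p 0|) 1)
          * Real.exp (-b * |p 1|) * Real.exp (-b * |p 2|) := by
          rw [hbdef]; ring
  -- bound for the first set integral
  have hbd1 : ∀ p ∈ {p : EuclideanSpace ℝ (Fin 3) | 0 < p 0},
      (ω / p 0) * ∫ y in (0 : ℝ)..x, Real.exp (-(ω / p 0) * (x - y)) * J y p ≤ H p := by
    intro p hp
    have hp0 : 0 < p 0 := hp
    have ha : 0 < ω / p 0 := div_pos hω0 hp0
    have hMnn : 0 ≤ C1 * Real.exp (-C2 * Real.sqrt ((c * m) ^ 2 + ‖p‖ ^ 2)) := by positivity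
    have hk := key1 (a := ω / p 0) (x := x) ha hMnn hx0 hx1 (hKm p)
      (fun y hy => hJb y ⟨hy.1, hy.2.trans hx1⟩ p)
    refine hk.trans ?_
    rw [show ω / p 0 = ω / |p 0| from by rw [abs_of_pos hp0]]
    exact hMle p
  have hbd2 : ∀ p ∈ {p : EuclideanSpace ℝ (Fin 3) | p 0 < 0},
      (ω / |p 0|) * ∫ y in x..(1 : ℝ), Real.exp (-(ω / |p 0|) * (y - x)) * J y p ≤ H p := by
    intro p hp
    have hp0 : p 0 < 0 := hp
    have ha : 0 < ω / |p 0| := div_pos hω0 (abs_pos.mpr hp0.ne)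
    have hMnn : 0 ≤ C1 * Real.exp (-C2 * Real.sqrt ((c * m) ^ 2 + ‖p‖ ^ 2)) := by positivity
    have hk := key2 (a := ω / |p 0|) (x := x) ha hMnn hx0 hx1 (hKm p)
      (fun y hy => hJb y ⟨hx0.trans hy.1, hy.2⟩ p)
    exact hk.trans (hMle p)
  have hnn1 : ∀ p ∈ {p : EuclideanSpace ℝ (Fin 3) | 0 < p 0},
      0 ≤ (ω / p 0) * ∫ y in (0 : ℝ)..x, Real.exp (-(ω / p 0) * (x - y)) * J y p := by
    intro p hp
    have hp0 : 0 < p 0 := hp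
    refine mul_nonneg (div_pos hω0 hp0).le ?_
    refine intervalIntegral.integral_nonneg hx0 (fun y hy => ?_)
    exact mul_nonneg (Real.exp_pos _).le (hJb y ⟨hy.1, hy.2.trans hx1⟩ p).1
  have hnn2 : ∀ p ∈ {p : EuclideanSpace ℝ (Fin 3) | p 0 < 0},
      0 ≤ (ω / |p 0|) * ∫ y in x..(1 : ℝ), Real.exp (-(ω / |p 0|) * (y - x)) * J y p := by
    intro p hp
    have hp0 : p 0 < 0 := hp
    refine mul_nonneg (div_pos hω0 (abs_pos.mpr hp0.ne)).le ?_
    refine intervalIntegral.integral_nonneg hx1 (fun y hy => ?_)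
    exact mul_nonneg (Real.exp_pos _).le (hJb y ⟨hx0.trans hy.1, hy.2⟩ p).1
  have hterm1 : (∫ p in {p : EuclideanSpace ℝ (Fin 3) | 0 < p 0},
      (ω / p 0) * ∫ y in (0 : ℝ)..x, Real.exp (-(ω / p 0) * (x - y)) * J y p)
      ≤ ∫ p, H p := by
    refine le_trans (integral_mono_of_nonneg ?_ hHint.integrableOn ?_) ?_
    · filter_upwards [ae_restrict_mem hS1] with p hp using hnn1 p hp
    · filter_upwards [ae_restrict_mem hS1] with p hp using hbd1 p hp
    · exact setIntegral_le_integral hHint (ae_of_all _ hH0)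
  have hterm2 : (∫ p in {p : EuclideanSpace ℝ (Fin 3) | p 0 < 0},
      (ω / |p 0|) * ∫ y in x..(1 : ℝ), Real.exp (-(ω / |p 0|) * (y - x)) * J y p)
      ≤ ∫ p, H p := by
    refine le_trans (integral_mono_of_nonneg ?_ hHint.integrableOn ?_) ?_
    · filter_upwards [ae_restrict_mem hS2] with p hp using hnn2 p hp
    · filter_upwards [ae_restrict_mem hS2] with p hp using hbd2 p hp
    · exact setIntegral_le_integral hHint (ae_of_all _ hH0)
  -- compute/bound ∫ H
  have hg0 : (∫ t, g 0 t) = C1 * ∫ t, φ t := by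
    rw [hgdef]; simp only [if_pos rfl]
    exact integral_const_mul C1 φ
  have hg1 : (∫ t, g 1 t) = E := by
    rw [hgdef]; simp only [if_neg (by decide : (1 : Fin 3) ≠ 0)]
    rfl
  have hg2 : (∫ t, g 2 t) = E := by
    rw [hgdef]; simp only [if_neg (by decide : (2 : Fin 3) ≠ 0)]
    rfl
  have hφbound : (∫ t, φ t) ≤ 2 * (ω * Real.log (1/ω) + ω + ω * B) := oneD hb hω0 hω1
  have hlog : 0 ≤ Real.log (1/ω) := Real.log_nonneg (by rw [le_div_iff₀ hω0]; linarith)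
  have hHbound : (∫ p, H p) ≤ 2 * C1 * (E * E) * (ω * Real.log (1/ω) + ω + ω * B) := by
    rw [hHval, hg0, hg1, hg2]
    have h1 : C1 * (∫ t, φ t) ≤ C1 * (2 * (ω * Real.log (1/ω) + ω + ω * B)) :=
      mul_le_mul_of_nonneg_left hφbound hC1.le
    calc C1 * (∫ t, φ t) * E * E ≤ C1 * (2 * (ω * Real.log (1/ω) + ω + ω * B)) * E * E := by
          exact mul_le_mul_of_nonneg_right (mul_le_mul_of_nonneg_right h1 hE.le) hE.le
      _ = 2 * C1 * (E * E) * (ω * Real.log (1/ω) + ω + ω * B) := by ring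
  have hfinal : 2 * (2 * C1 * (E * E) * (ω * Real.log (1/ω) + ω + ω * B))
      ≤ 4 * C1 * (E * E) * (1 + B) * (ω * Real.log (1/ω) + ω + ω ^ 2 * Real.exp (-1 / ω)) := by
    have hEE : 0 < E * E := by positivity
    have h1 : ω * Real.log (1/ω) + ω + ω * B ≤ (1 + B) * (ω * Real.log (1/ω) + ω) := by
      nlinarith [mul_nonneg hω0.le hlog]
    have h2 : (4 * C1 * (E * E)) * (ω * Real.log (1/ω) + ω + ω * B)
        ≤ (4 * C1 * (E * E)) * ((1 + B) * (ω * Real.log (1/ω) + ω)) :=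
      mul_le_mul_of_nonneg_left h1 (by positivity)
    have h3 : 0 ≤ ω ^ 2 * Real.exp (-1 / ω) := by positivity
    calc 2 * (2 * C1 * (E * E) * (ω * Real.log (1/ω) + ω + ω * B))
        = (4 * C1 * (E * E)) * (ω * Real.log (1/ω) + ω + ω * B) := by ring
      _ ≤ (4 * C1 * (E * E)) * ((1 + B) * (ω * Real.log (1/ω) + ω)) := h2
      _ = (4 * C1 * (E * E) * (1 + B)) * (ω * Real.log (1/ω) + ω) := by ring
      _ ≤ (4 * C1 * (E * E) * (1 + B))
            * (ω * Real.log (1/ω) + ω + ω ^ 2 * Real.exp (-1 / ω)) := by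
          refine mul_le_mul_of_nonneg_left (by linarith) (by positivity)
  linarith [hterm1, hterm2, hHbound]
end

section
/- Let c, m > 0 and write p⁰ = √((cm)² + |p|²) for p ∈ ℝ³. Let f_L, f_R : ℝ³ → [0,∞) be integrable, set f_LR(p) = f_L(p)·1_{p¹>0} + f_R(p)·1_{p¹<0}, a_ℓ = (1/4)∫ f_LR(p)/p⁰ dp, a_u = 2∫ f_LR(p) dp, and assume a_ℓ > 0. Let C₁, C₂ > 0. Then there exists ε > 0 such that for every ω ∈ (0, ε) and every measurable J : [0,1]×ℝ³ → ℝ with 0 ≤ J(y,p) ≤ C₁ e^{−C₂ p⁰}, the function Ψ(x,p) = (e^{−(ω/|p¹|)x} f_L(p) + (ω/|p¹|)∫₀^x e^{−(ω/|p¹|)(x−y)} J(y,p) dy)·1_{p¹>0} + (e^{−(ω/|p¹|)(1−x)} f_R(p) + (ω/|p¹|)∫_x^1 e^{−(ω/|p¹|)(y−x)} J(y,p) dy)·1_{p¹<0} satisfies, for every x ∈ [0,1]: Ψ(x,·) ≥ 0, ∫ Ψ(x,p)/p⁰ dp ≥ a_ℓ, and ∫ Ψ(x,p) dp ≤ a_u.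 -/
open MeasureTheory Real Filter Set

private lemma aux_coord_le (p : EuclideanSpace ℝ (Fin 3)) : |p 0| ≤ ‖p‖ := by
  rw [EuclideanSpace.norm_eq]
  have h : |p 0| = Real.sqrt (‖p 0‖ ^ 2) := by
    rw [Real.sqrt_sq_eq_abs]; simp
  rw [h]
  exact Real.sqrt_le_sqrt (Finset.single_le_sum (fun i _ => sq_nonneg ‖p i‖) (Finset.mem_univ 0))

private lemma aux_exp_integrable {a : ℝ} (ha : 0 < a) :
    Integrable (fun p : EuclideanSpace ℝ (Fin 3) => Real.exp (-(a * ‖p‖))) := by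
  have hfr : (Module.finrank ℝ (EuclideanSpace ℝ (Fin 3)) : ℝ) < 4 := by
    simp [finrank_euclideanSpace]; norm_num
  have hint := integrable_one_add_norm (E := EuclideanSpace ℝ (Fin 3)) (μ := volume) hfr
  refine (hint.const_mul ((1 + 4/a)^4)).mono' ?_ ?_
  · exact (Real.continuous_exp.comp (continuous_const.mul continuous_norm : Continuous fun p : EuclideanSpace ℝ (Fin 3) => a * ‖p‖).neg).aestronglyMeasurable
  · refine ae_of_all _ fun p => ?_
    set t := ‖p‖ with htdef
    have ht : 0 ≤ t := norm_nonneg p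
    have h2 : 1 + a*t/4 ≤ Real.exp (a*t/4) := by
      have := Real.add_one_le_exp (a*t/4); linarith
    have h1 : 1 + t ≤ (1 + 4/a) * Real.exp (a*t/4) := by
      have h4 : (1 + 4/a) * (1 + a*t/4) = 1 + a*t/4 + 4/a + t := by field_simp; ring
      nlinarith [div_pos (by norm_num : (0:ℝ) < 4) ha, mul_nonneg (mul_nonneg ha.le ht) (by norm_num : (0:ℝ) ≤ 1)]
    have hexp4 : Real.exp (a*t/4)^4 = Real.exp (a*t) := by
      rw [← Real.exp_nat_mul]; congr 1; ring
    have h3 : (1+t)^4 ≤ (1+4/a)^4 * Real.exp (a*t) := by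
      calc (1+t)^4 ≤ ((1 + 4/a) * Real.exp (a*t/4))^4 :=
            pow_le_pow_left₀ (by linarith) h1 4
        _ = (1+4/a)^4 * Real.exp (a*t) := by rw [mul_pow, hexp4]
    rw [Real.norm_eq_abs, abs_of_pos (Real.exp_pos _),
      show (-4:ℝ) = -((4:ℕ):ℝ) by norm_num, Real.rpow_neg (by positivity), Real.rpow_natCast,
      Real.exp_neg, inv_eq_one_div, ← div_eq_mul_inv, div_le_div_iff₀ (Real.exp_pos _) (by positivity)]
    nlinarith [h3]

private lemma aux_exp_p0_integrable {A C2 : ℝ} (hA : 0 ≤ A) (hC2 : 0 < C2) :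
    Integrable (fun p : EuclideanSpace ℝ (Fin 3) => Real.exp (-C2 * Real.sqrt (A + ‖p‖^2))) := by
  refine (aux_exp_integrable hC2).mono' ?_ ?_
  · exact (Real.continuous_exp.comp (continuous_const.mul (Real.continuous_sqrt.comp
      (continuous_const.add (continuous_norm.pow 2))))).aestronglyMeasurable
  · refine ae_of_all _ fun p => ?_
    rw [Real.norm_eq_abs, abs_of_pos (Real.exp_pos _), Real.exp_le_exp]
    have h1 : ‖p‖ ≤ Real.sqrt (A + ‖p‖^2) := by
      rw [Real.le_sqrt (norm_nonneg p) (by positivity)]; linarith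
    nlinarith


set_option maxHeartbeats 1600000 in
theorem stmt_13 (c m : ℝ) (hc : 0 < c) (hm : 0 < m)
    (fL fR : EuclideanSpace ℝ (Fin 3) → ℝ)
    (hfL : Integrable fL) (hfR : Integrable fR)
    (hLnn : ∀ p, 0 ≤ fL p) (hRnn : ∀ p, 0 ≤ fR p)
    (fLR : EuclideanSpace ℝ (Fin 3) → ℝ)
    (hfLR : fLR = fun p => (if 0 < p 0 then fL p else 0) + (if p 0 < 0 then fR p else 0))
    (al au : ℝ)
    (hal : al = (1 / 4) * ∫ p, fLR p / Real.sqrt ((c * m) ^ 2 + ‖p‖ ^ 2))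
    (hau : au = 2 * ∫ p, fLR p)
    (halpos : 0 < al)
    (C1 C2 : ℝ) (hC1 : 0 < C1) (hC2 : 0 < C2) :
    ∃ ε > (0 : ℝ), ∀ ω ∈ Set.Ioo (0 : ℝ) ε,
      ∀ J : ℝ → EuclideanSpace ℝ (Fin 3) → ℝ,
        Measurable (fun q : ℝ × EuclideanSpace ℝ (Fin 3) => J q.1 q.2) →
        (∀ y ∈ Set.Icc (0 : ℝ) 1, ∀ p : EuclideanSpace ℝ (Fin 3),
          0 ≤ J y p ∧ J y p ≤ C1 * Real.exp (-C2 * Real.sqrt ((c * m) ^ 2 + ‖p‖ ^ 2))) →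
        ∀ Ψ : ℝ → EuclideanSpace ℝ (Fin 3) → ℝ,
          (Ψ = fun x p =>
            (if 0 < p 0 then
              Real.exp (-(ω / |p 0|) * x) * fL p +
                (ω / |p 0|) * ∫ y in (0 : ℝ)..x, Real.exp (-(ω / |p 0|) * (x - y)) * J y p
            else 0) +
            (if p 0 < 0 then
              Real.exp (-(ω / |p 0|) * (1 - x)) * fR p +
                (ω / |p 0|) * ∫ y in x..(1 : ℝ), Real.exp (-(ω / |p 0|) * (y - x)) * J y p
            else 0)) →
          ∀ x ∈ Set.Icc (0 : ℝ) 1,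
            (∀ p, 0 ≤ Ψ x p) ∧
            al ≤ (∫ p, Ψ x p / Real.sqrt ((c * m) ^ 2 + ‖p‖ ^ 2)) ∧
            (∫ p, Ψ x p) ≤ au := by
  have hcm : 0 < c * m := mul_pos hc hm
  set p0 : EuclideanSpace ℝ (Fin 3) → ℝ := fun p => Real.sqrt ((c*m)^2 + ‖p‖^2) with hp0def
  have hp0pos : ∀ p, 0 < p0 p := fun p => Real.sqrt_pos.2 (by positivity)
  have hp0cm : ∀ p, c * m ≤ p0 p := fun p => by
    rw [hp0def, Real.le_sqrt hcm.le (by positivity)]; nlinarith [sq_nonneg ‖p‖]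
  have hcont0 : Continuous fun p : EuclideanSpace ℝ (Fin 3) => p 0 := by
    simpa [PiLp.proj_apply] using
      (EuclideanSpace.proj (0 : Fin 3) : EuclideanSpace ℝ (Fin 3) →L[ℝ] ℝ).continuous
  have hmeas0 : Measurable fun p : EuclideanSpace ℝ (Fin 3) => p 0 := hcont0.measurable
  have hcontp0 : Continuous p0 :=
    Real.continuous_sqrt.comp (continuous_const.add (continuous_norm.pow 2))
  have msPos : MeasurableSet {p : EuclideanSpace ℝ (Fin 3) | 0 < p 0} :=
    measurableSet_lt measurable_const hmeas0
  have msNeg : MeasurableSet {p : EuclideanSpace ℝ (Fin 3) | p 0 < 0} :=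
    measurableSet_lt hmeas0 measurable_const
  have hfLReq : fLR = fun p => Set.indicator {q : EuclideanSpace ℝ (Fin 3) | 0 < q 0} fL p
      + Set.indicator {q : EuclideanSpace ℝ (Fin 3) | q 0 < 0} fR p := by
    funext p; simp [hfLR, Set.indicator_apply, Set.mem_setOf_eq]
  have hfLRint : Integrable fLR := by
    rw [hfLReq]; exact (hfL.indicator msPos).add (hfR.indicator msNeg)
  have hfLRnn : ∀ p, 0 ≤ fLR p := by
    intro p; rw [hfLR]
    refine add_nonneg ?_ ?_ <;> split <;> first | exact hLnn p | exact hRnn p | exact le_refl 0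
  have hfLR0 : ∀ p, p 0 = 0 → fLR p = 0 := by
    intro p hp; simp [hfLR, hp]
  have hexpint : Integrable (fun p => C1 * Real.exp (-C2 * p0 p)) :=
    (aux_exp_p0_integrable (by positivity) hC2).const_mul C1
  have hHint : Integrable (fun p => fLR p + C1 * Real.exp (-C2 * p0 p)) :=
    hfLRint.add hexpint
  have hinvcont : Continuous fun p => (p0 p)⁻¹ := hcontp0.inv₀ fun p => (hp0pos p).ne'
  have hquotaesm : AEStronglyMeasurable (fun p => fLR p / p0 p) volume :=
    (hfLRint.aestronglyMeasurable.mul hinvcont.aestronglyMeasurable).congr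
      (ae_of_all _ fun p => (div_eq_mul_inv _ _).symm)
  have hquotint : Integrable (fun p => fLR p / p0 p) := by
    refine (hfLRint.div_const (c*m)).mono' hquotaesm (ae_of_all _ fun p => ?_)
    rw [Real.norm_eq_abs, abs_of_nonneg (div_nonneg (hfLRnn p) (hp0pos p).le)]
    exact div_le_div_of_nonneg_left (hfLRnn p) hcm (hp0cm p)
  have hLpos : 0 < ∫ p, fLR p / p0 p := by
    have : al = (1/4) * ∫ p, fLR p / p0 p := hal
    linarith
  have hIpos : 0 < ∫ p, fLR p := by
    have h1 : ∫ p, fLR p / p0 p ≤ ∫ p, fLR p / (c*m) :=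
      integral_mono hquotint (hfLRint.div_const _) fun p =>
        div_le_div_of_nonneg_left (hfLRnn p) hcm (hp0cm p)
    have h2 : ∫ p, fLR p / (c*m) = (∫ p, fLR p) / (c*m) := integral_div _ _
    rw [h2, le_div_iff₀ hcm] at h1
    nlinarith [mul_pos hLpos hcm]
  -- dominated convergence 1
  have hT1 : Tendsto (fun ε => ∫ p, Real.exp (-(ε / |p 0|)) * (fLR p / p0 p)) (nhdsWithin 0 (Set.Ioi 0))
      (nhds (∫ p, fLR p / p0 p)) := by
    apply tendsto_integral_filter_of_dominated_convergence (fun p => fLR p / p0 p)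
    · filter_upwards with ε
      exact ((Real.measurable_exp.comp
        ((measurable_const.div hmeas0.abs).neg)).aestronglyMeasurable).mul hquotaesm
    · filter_upwards [self_mem_nhdsWithin] with ε (hε : ε ∈ Set.Ioi (0:ℝ))
      refine ae_of_all _ fun p => ?_
      rw [Real.norm_eq_abs, abs_mul, abs_of_pos (Real.exp_pos _),
        abs_of_nonneg (div_nonneg (hfLRnn p) (hp0pos p).le)]
      exact mul_le_of_le_one_left (div_nonneg (hfLRnn p) (hp0pos p).le)
        (Real.exp_le_one_iff.2 (neg_nonpos.2 (div_nonneg (le_of_lt hε) (abs_nonneg _))))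
    · exact hquotint
    · refine ae_of_all _ fun p => ?_
      by_cases hp : p 0 = 0
      · simp only [hfLR0 p hp, zero_div, mul_zero]
        exact tendsto_const_nhds
      · have hco : Continuous fun ε : ℝ => Real.exp (-(ε / |p 0|)) * (fLR p / p0 p) :=
          ((Real.continuous_exp.comp (continuous_id.div_const _).neg).mul continuous_const)
        have := hco.tendsto 0
        simp only [zero_div, neg_zero, Real.exp_zero, one_mul] at this
        exact this.mono_left nhdsWithin_le_nhds
  -- dominated convergence 2
  have hT2 : Tendsto (fun ε => ∫ p, C1 * Real.exp (-C2 * p0 p) * min 1 (ε / |p 0|))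
      (nhdsWithin 0 (Set.Ioi 0)) (nhds 0) := by
    have key : Tendsto (fun ε => ∫ p, C1 * Real.exp (-C2 * p0 p) * min 1 (ε / |p 0|))
        (nhdsWithin 0 (Set.Ioi 0)) (nhds (∫ _p : EuclideanSpace ℝ (Fin 3), (0:ℝ))) := by
      apply tendsto_integral_filter_of_dominated_convergence (fun p => C1 * Real.exp (-C2 * p0 p))
      · filter_upwards with ε
        exact (((continuous_const.mul (Real.continuous_exp.comp
          (continuous_const.mul hcontp0))).measurable).mul
          (measurable_const.min (measurable_const.div hmeas0.abs))).aestronglyMeasurable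
      · filter_upwards [self_mem_nhdsWithin] with ε (hε : ε ∈ Set.Ioi (0:ℝ))
        refine ae_of_all _ fun p => ?_
        have hmnn : 0 ≤ min 1 (ε / |p 0|) :=
          le_min zero_le_one (div_nonneg (le_of_lt hε) (abs_nonneg _))
        rw [Real.norm_eq_abs, abs_mul, abs_of_nonneg hmnn,
          abs_of_pos (mul_pos hC1 (Real.exp_pos _))]
        exact mul_le_of_le_one_right (mul_pos hC1 (Real.exp_pos _)).le (min_le_left _ _)
      · exact hexpint
      · refine ae_of_all _ fun p => ?_
        by_cases hp : p 0 = 0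
        · have heq : (fun ε : ℝ => C1 * Real.exp (-C2 * p0 p) * min 1 (ε / |p 0|))
              = fun _ => (0:ℝ) := by
            funext ε; rw [hp]; simp
          rw [heq]; exact tendsto_const_nhds
        · have hco : Continuous fun ε : ℝ => C1 * Real.exp (-C2 * p0 p) * min 1 (ε / |p 0|) :=
            continuous_const.mul (continuous_const.min (continuous_id.div_const _))
          have := hco.tendsto 0
          have h00 : min (1:ℝ) ((0:ℝ) / |p 0|) = 0 := by
            rw [zero_div]; exact min_eq_right zero_le_one
          rw [h00, mul_zero] at this
          exact this.mono_left nhdsWithin_le_nhds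
    rwa [integral_zero] at key
  have halL : al = (1/4) * ∫ p, fLR p / p0 p := hal
  have hev := (hT1.eventually (eventually_gt_nhds (show al < ∫ p, fLR p / p0 p by
      linarith))).and (hT2.eventually (eventually_lt_nhds hIpos))
  obtain ⟨εu, hεu, hsub⟩ := mem_nhdsGT_iff_exists_Ioo_subset.1 hev
  refine ⟨εu, hεu, ?_⟩
  intro ω hω J hJmeas hJbd Ψ hΨ x hx
  obtain ⟨hω0, hωu⟩ := hω
  obtain ⟨hkey1, hkey2⟩ := hsub ⟨hω0, hωu⟩
  have hΨfun : Ψ x = fun p : EuclideanSpace ℝ (Fin 3) =>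
      (if 0 < p 0 then
        Real.exp (-(ω / |p 0|) * x) * fL p +
          (ω / |p 0|) * ∫ y in (0 : ℝ)..x, Real.exp (-(ω / |p 0|) * (x - y)) * J y p
      else 0) +
      (if p 0 < 0 then
        Real.exp (-(ω / |p 0|) * (1 - x)) * fR p +
          (ω / |p 0|) * ∫ y in x..(1 : ℝ), Real.exp (-(ω / |p 0|) * (y - x)) * J y p
      else 0) := by rw [hΨ]
  have hΨxp : ∀ p : EuclideanSpace ℝ (Fin 3), Ψ x p =
      (if 0 < p 0 then
        Real.exp (-(ω / |p 0|) * x) * fL p +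
          (ω / |p 0|) * ∫ y in (0 : ℝ)..x, Real.exp (-(ω / |p 0|) * (x - y)) * J y p
      else 0) +
      (if p 0 < 0 then
        Real.exp (-(ω / |p 0|) * (1 - x)) * fR p +
          (ω / |p 0|) * ∫ y in x..(1 : ℝ), Real.exp (-(ω / |p 0|) * (y - x)) * J y p
      else 0) := fun p => by rw [hΨ]
  have hKnn : ∀ p : EuclideanSpace ℝ (Fin 3), 0 ≤ ω / |p 0| :=
    fun p => div_nonneg hω0.le (abs_nonneg _)
  have hint1nn : ∀ p, 0 ≤ ∫ y in (0:ℝ)..x, Real.exp (-(ω / |p 0|) * (x - y)) * J y p :=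
    fun p => intervalIntegral.integral_nonneg hx.1 fun y hy =>
      mul_nonneg (Real.exp_nonneg _) ((hJbd y ⟨hy.1, hy.2.trans hx.2⟩ p).1)
  have hint2nn : ∀ p, 0 ≤ ∫ y in x..(1:ℝ), Real.exp (-(ω / |p 0|) * (y - x)) * J y p :=
    fun p => intervalIntegral.integral_nonneg hx.2 fun y hy =>
      mul_nonneg (Real.exp_nonneg _) ((hJbd y ⟨hx.1.trans hy.1, hy.2⟩ p).1)
  have hΨnn : ∀ p, 0 ≤ Ψ x p := by
    intro p
    rw [hΨxp p]
    refine add_nonneg ?_ ?_ <;> split_ifs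
    · exact add_nonneg (mul_nonneg (Real.exp_nonneg _) (hLnn p))
        (mul_nonneg (hKnn p) (hint1nn p))
    · exact le_refl 0
    · exact add_nonneg (mul_nonneg (Real.exp_nonneg _) (hRnn p))
        (mul_nonneg (hKnn p) (hint2nn p))
    · exact le_refl 0
  have hmJ : ∀ p : EuclideanSpace ℝ (Fin 3), Measurable fun y => J y p :=
    fun p => hJmeas.comp (measurable_id.prodMk measurable_const)
  -- bound for the first Duhamel integral
  have hbd1 : ∀ p, 0 < p 0 →
      (ω / |p 0|) * ∫ y in (0:ℝ)..x, Real.exp (-(ω / |p 0|) * (x - y)) * J y p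
        ≤ C1 * Real.exp (-C2 * p0 p) * min 1 (ω / |p 0|) := by
    intro p hp
    set K := ω / |p 0| with hKdef
    have hKpos : 0 < K := div_pos hω0 (abs_pos.2 (ne_of_gt hp))
    set B := C1 * Real.exp (-C2 * p0 p) with hBdef
    have hBpos : 0 < B := mul_pos hC1 (Real.exp_pos _)
    have hexple : ∀ y : ℝ, y ≤ x → Real.exp (-K * (x - y)) ≤ 1 :=
      fun y hy => Real.exp_le_one_iff.2 (by nlinarith [hKpos.le])
    have hcontE : Continuous fun y => Real.exp (-K * (x - y)) :=
      Real.continuous_exp.comp (continuous_const.mul (continuous_const.sub continuous_id))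
    have hii : IntervalIntegrable (fun y => Real.exp (-K * (x - y)) * J y p) volume 0 x := by
      rw [intervalIntegrable_iff_integrableOn_Ioc_of_le hx.1]
      refine Integrable.mono' (g := fun _ => B)
        (integrableOn_const (C := B) measure_Ioc_lt_top.ne)
        ((hcontE.measurable.mul (hmJ p)).aestronglyMeasurable.restrict) ?_
      rw [ae_restrict_iff' measurableSet_Ioc]
      refine ae_of_all _ fun y hy => ?_
      have h1 := hJbd y ⟨hy.1.le, hy.2.trans hx.2⟩ p
      rw [Real.norm_eq_abs, abs_of_nonneg (mul_nonneg (Real.exp_nonneg _) h1.1)]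
      calc Real.exp (-K * (x - y)) * J y p ≤ 1 * B :=
            mul_le_mul (hexple y hy.2) h1.2 h1.1 zero_le_one
        _ = B := one_mul B
    have hiic : IntervalIntegrable (fun y => Real.exp (-K * (x - y)) * B) volume 0 x :=
      (hcontE.mul continuous_const).intervalIntegrable 0 x
    have hmono := intervalIntegral.integral_mono_on hx.1 hii hiic
      (fun y hy => mul_le_mul_of_nonneg_left (hJbd y ⟨hy.1, hy.2.trans hx.2⟩ p).2
        (Real.exp_nonneg _))
    have hE : ∫ y in (0:ℝ)..x, Real.exp (-K * (x - y)) = (1 - Real.exp (-K * x)) / K := by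
      have hder : ∀ y ∈ Set.uIcc (0:ℝ) x,
          HasDerivAt (fun y => Real.exp (-K * (x - y)) / K) (Real.exp (-K * (x - y))) y := by
        intro y _
        have h1 : HasDerivAt (fun y : ℝ => -K * (x - y)) K y := by
          simpa using ((hasDerivAt_id y).const_sub x).const_mul (-K)
        have h2 := (h1.exp).div_const K
        refine h2.congr_deriv ?_
        field_simp [hKpos.ne']
      rw [intervalIntegral.integral_eq_sub_of_hasDerivAt hder (hcontE.intervalIntegrable 0 x)]
      rw [sub_self, mul_zero, Real.exp_zero, sub_zero]
      ring
    have hEm : ∫ y in (0:ℝ)..x, Real.exp (-K * (x - y)) * B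
        = ((1 - Real.exp (-K * x)) / K) * B := by
      rw [intervalIntegral.integral_mul_const, hE]
    have h1m : 1 - Real.exp (-K * x) ≤ min 1 K := by
      refine le_min (by linarith [Real.exp_pos (-K * x)]) ?_
      have h2 := Real.add_one_le_exp (-K * x)
      nlinarith [mul_nonneg hKpos.le (sub_nonneg.2 hx.2)]
    calc K * ∫ y in (0:ℝ)..x, Real.exp (-K * (x - y)) * J y p
        ≤ K * (((1 - Real.exp (-K * x)) / K) * B) := by
          rw [← hEm]; exact mul_le_mul_of_nonneg_left hmono hKpos.le
      _ = (1 - Real.exp (-K * x)) * B := by field_simp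
      _ ≤ min 1 K * B := mul_le_mul_of_nonneg_right h1m hBpos.le
      _ = B * min 1 K := mul_comm _ _
  -- bound for the second Duhamel integral
  have hbd2 : ∀ p, p 0 < 0 →
      (ω / |p 0|) * ∫ y in x..(1:ℝ), Real.exp (-(ω / |p 0|) * (y - x)) * J y p
        ≤ C1 * Real.exp (-C2 * p0 p) * min 1 (ω / |p 0|) := by
    intro p hp
    set K := ω / |p 0| with hKdef
    have hKpos : 0 < K := div_pos hω0 (abs_pos.2 (ne_of_lt hp))
    set B := C1 * Real.exp (-C2 * p0 p) with hBdef
    have hBpos : 0 < B := mul_pos hC1 (Real.exp_pos _)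
    have hexple : ∀ y : ℝ, x ≤ y → Real.exp (-K * (y - x)) ≤ 1 :=
      fun y hy => Real.exp_le_one_iff.2 (by nlinarith [hKpos.le])
    have hcontE : Continuous fun y => Real.exp (-K * (y - x)) :=
      Real.continuous_exp.comp (continuous_const.mul (continuous_id.sub continuous_const))
    have hii : IntervalIntegrable (fun y => Real.exp (-K * (y - x)) * J y p) volume x 1 := by
      rw [intervalIntegrable_iff_integrableOn_Ioc_of_le hx.2]
      refine Integrable.mono' (g := fun _ => B)
        (integrableOn_const (C := B) measure_Ioc_lt_top.ne)
        ((hcontE.measurable.mul (hmJ p)).aestronglyMeasurable.restrict) ?_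
      rw [ae_restrict_iff' measurableSet_Ioc]
      refine ae_of_all _ fun y hy => ?_
      have h1 := hJbd y ⟨hx.1.trans hy.1.le, hy.2⟩ p
      rw [Real.norm_eq_abs, abs_of_nonneg (mul_nonneg (Real.exp_nonneg _) h1.1)]
      calc Real.exp (-K * (y - x)) * J y p ≤ 1 * B :=
            mul_le_mul (hexple y hy.1.le) h1.2 h1.1 zero_le_one
        _ = B := one_mul B
    have hiic : IntervalIntegrable (fun y => Real.exp (-K * (y - x)) * B) volume x 1 :=
      (hcontE.mul continuous_const).intervalIntegrable x 1
    have hmono := intervalIntegral.integral_mono_on hx.2 hii hiic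
      (fun y hy => mul_le_mul_of_nonneg_left (hJbd y ⟨hx.1.trans hy.1, hy.2⟩ p).2
        (Real.exp_nonneg _))
    have hE : ∫ y in x..(1:ℝ), Real.exp (-K * (y - x))
        = (1 - Real.exp (-K * (1 - x))) / K := by
      have hder : ∀ y ∈ Set.uIcc x (1:ℝ),
          HasDerivAt (fun y => -(Real.exp (-K * (y - x)) / K)) (Real.exp (-K * (y - x))) y := by
        intro y _
        have h1 : HasDerivAt (fun y : ℝ => -K * (y - x)) (-K) y := by
          simpa using ((hasDerivAt_id y).sub_const x).const_mul (-K)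
        have h2 := ((h1.exp).div_const K).neg
        refine h2.congr_deriv ?_
        rw [mul_neg, neg_div, neg_neg, mul_div_assoc, div_self hKpos.ne', mul_one]
      rw [intervalIntegral.integral_eq_sub_of_hasDerivAt hder (hcontE.intervalIntegrable x 1)]
      rw [sub_self, mul_zero, Real.exp_zero]
      ring
    have hEm : ∫ y in x..(1:ℝ), Real.exp (-K * (y - x)) * B
        = ((1 - Real.exp (-K * (1 - x))) / K) * B := by
      rw [intervalIntegral.integral_mul_const, hE]
    have h1m : 1 - Real.exp (-K * (1 - x)) ≤ min 1 K := by
      refine le_min (by linarith [Real.exp_pos (-K * (1 - x))]) ?_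
      have h2 := Real.add_one_le_exp (-K * (1 - x))
      nlinarith [mul_nonneg hKpos.le hx.1]
    calc K * ∫ y in x..(1:ℝ), Real.exp (-K * (y - x)) * J y p
        ≤ K * (((1 - Real.exp (-K * (1 - x))) / K) * B) := by
          rw [← hEm]; exact mul_le_mul_of_nonneg_left hmono hKpos.le
      _ = (1 - Real.exp (-K * (1 - x))) * B := by field_simp
      _ ≤ min 1 K * B := mul_le_mul_of_nonneg_right h1m hBpos.le
      _ = B * min 1 K := mul_comm _ _
  -- pointwise upper bound
  have hub : ∀ p, Ψ x p ≤ fLR p + C1 * Real.exp (-C2 * p0 p) * min 1 (ω / |p 0|) := by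
    intro p
    rw [hΨxp p]
    rcases lt_trichotomy (p 0) 0 with hp | hp | hp
    · rw [if_neg (not_lt.2 hp.le), if_pos hp, zero_add]
      have hfl : fLR p = fR p := by rw [hfLR]; simp [hp, asymm hp]
      have hexp1 : Real.exp (-(ω / |p 0|) * (1 - x)) ≤ 1 :=
        Real.exp_le_one_iff.2 (by nlinarith [hKnn p, hx.2])
      rw [hfl]
      exact add_le_add (mul_le_of_le_one_left (hRnn p) hexp1) (hbd2 p hp)
    · rw [if_neg (by simp [hp]), if_neg (by simp [hp]), add_zero]
      exact add_nonneg (hfLRnn p)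
        (mul_nonneg (mul_pos hC1 (Real.exp_pos _)).le (le_min zero_le_one (hKnn p)))
    · rw [if_pos hp, if_neg (asymm hp), add_zero]
      have hfl : fLR p = fL p := by rw [hfLR]; simp [hp, asymm hp]
      have hexp1 : Real.exp (-(ω / |p 0|) * x) ≤ 1 :=
        Real.exp_le_one_iff.2 (by nlinarith [hKnn p, hx.1])
      rw [hfl]
      exact add_le_add (mul_le_of_le_one_left (hLnn p) hexp1) (hbd1 p hp)
  -- pointwise lower bound
  have hlb : ∀ p, Real.exp (-(ω / |p 0|)) * fLR p ≤ Ψ x p := by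
    intro p
    rw [hΨxp p]
    rcases lt_trichotomy (p 0) 0 with hp | hp | hp
    · rw [if_neg (not_lt.2 hp.le), if_pos hp, zero_add]
      have hfl : fLR p = fR p := by rw [hfLR]; simp [hp, asymm hp]
      have h1 : Real.exp (-(ω / |p 0|)) ≤ Real.exp (-(ω / |p 0|) * (1 - x)) :=
        Real.exp_le_exp.2 (by nlinarith [mul_nonneg (hKnn p) hx.1])
      rw [hfl]
      calc Real.exp (-(ω / |p 0|)) * fR p
          ≤ Real.exp (-(ω / |p 0|) * (1 - x)) * fR p :=
            mul_le_mul_of_nonneg_right h1 (hRnn p)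
        _ ≤ _ := le_add_of_nonneg_right (mul_nonneg (hKnn p) (hint2nn p))
    · rw [if_neg (by simp [hp]), if_neg (by simp [hp]), add_zero]
      rw [hfLR0 p hp, mul_zero]
    · rw [if_pos hp, if_neg (asymm hp), add_zero]
      have hfl : fLR p = fL p := by rw [hfLR]; simp [hp, asymm hp]
      have h1 : Real.exp (-(ω / |p 0|)) ≤ Real.exp (-(ω / |p 0|) * x) :=
        Real.exp_le_exp.2 (by nlinarith [mul_nonneg (hKnn p) (sub_nonneg.2 hx.2)])
      rw [hfl]
      calc Real.exp (-(ω / |p 0|)) * fL p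
          ≤ Real.exp (-(ω / |p 0|) * x) * fL p :=
            mul_le_mul_of_nonneg_right h1 (hLnn p)
        _ ≤ _ := le_add_of_nonneg_right (mul_nonneg (hKnn p) (hint1nn p))
  -- measurability of Ψ x
  have hAESM : AEStronglyMeasurable (Ψ x) volume := by
    rw [hΨfun]
    have hA : AEStronglyMeasurable (fun p : EuclideanSpace ℝ (Fin 3) =>
        Real.exp (-(ω / |p 0|) * x) * fL p +
          (ω / |p 0|) * ∫ y in (0:ℝ)..x, Real.exp (-(ω / |p 0|) * (x - y)) * J y p)
        volume := by
      refine AEStronglyMeasurable.add (AEStronglyMeasurable.mul ?_ hfL.aestronglyMeasurable)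
        (AEStronglyMeasurable.mul ?_ ?_)
      · exact (Real.measurable_exp.comp
          (((measurable_const.div hmeas0.abs).neg).mul_const x)).aestronglyMeasurable
      · exact (measurable_const.div hmeas0.abs).aestronglyMeasurable
      · have heq : (fun p : EuclideanSpace ℝ (Fin 3) =>
            ∫ y in (0:ℝ)..x, Real.exp (-(ω / |p 0|) * (x - y)) * J y p)
            = fun p => ∫ y in Set.Ioc (0:ℝ) x, Real.exp (-(ω / |p 0|) * (x - y)) * J y p := by
          funext p; rw [intervalIntegral.integral_of_le hx.1]
        rw [heq]
        have hunc : Measurable fun q : EuclideanSpace ℝ (Fin 3) × ℝ =>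
            Real.exp (-(ω / |q.1 0|) * (x - q.2)) * J q.2 q.1 :=
          (Real.measurable_exp.comp
            (((measurable_const.div ((hmeas0.comp measurable_fst).abs)).neg).mul
              (measurable_const.sub measurable_snd))).mul
            (hJmeas.comp (measurable_snd.prodMk measurable_fst))
        exact hunc.stronglyMeasurable.integral_prod_right'.aestronglyMeasurable
    have hB : AEStronglyMeasurable (fun p : EuclideanSpace ℝ (Fin 3) =>
        Real.exp (-(ω / |p 0|) * (1 - x)) * fR p +
          (ω / |p 0|) * ∫ y in x..(1:ℝ), Real.exp (-(ω / |p 0|) * (y - x)) * J y p)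
        volume := by
      refine AEStronglyMeasurable.add (AEStronglyMeasurable.mul ?_ hfR.aestronglyMeasurable)
        (AEStronglyMeasurable.mul ?_ ?_)
      · exact (Real.measurable_exp.comp
          (((measurable_const.div hmeas0.abs).neg).mul_const (1 - x))).aestronglyMeasurable
      · exact (measurable_const.div hmeas0.abs).aestronglyMeasurable
      · have heq : (fun p : EuclideanSpace ℝ (Fin 3) =>
            ∫ y in x..(1:ℝ), Real.exp (-(ω / |p 0|) * (y - x)) * J y p)
            = fun p => ∫ y in Set.Ioc x (1:ℝ), Real.exp (-(ω / |p 0|) * (y - x)) * J y p := by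
          funext p; rw [intervalIntegral.integral_of_le hx.2]
        rw [heq]
        have hunc : Measurable fun q : EuclideanSpace ℝ (Fin 3) × ℝ =>
            Real.exp (-(ω / |q.1 0|) * (q.2 - x)) * J q.2 q.1 :=
          (Real.measurable_exp.comp
            (((measurable_const.div ((hmeas0.comp measurable_fst).abs)).neg).mul
              (measurable_snd.sub measurable_const))).mul
            (hJmeas.comp (measurable_snd.prodMk measurable_fst))
        exact hunc.stronglyMeasurable.integral_prod_right'.aestronglyMeasurable
    have hind : (fun p : EuclideanSpace ℝ (Fin 3) =>
        (if 0 < p 0 then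
          Real.exp (-(ω / |p 0|) * x) * fL p +
            (ω / |p 0|) * ∫ y in (0:ℝ)..x, Real.exp (-(ω / |p 0|) * (x - y)) * J y p
        else 0) +
        (if p 0 < 0 then
          Real.exp (-(ω / |p 0|) * (1 - x)) * fR p +
            (ω / |p 0|) * ∫ y in x..(1:ℝ), Real.exp (-(ω / |p 0|) * (y - x)) * J y p
        else 0))
        = fun p => Set.indicator {q : EuclideanSpace ℝ (Fin 3) | 0 < q 0}
            (fun p => Real.exp (-(ω / |p 0|) * x) * fL p +
              (ω / |p 0|) * ∫ y in (0:ℝ)..x, Real.exp (-(ω / |p 0|) * (x - y)) * J y p) p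
          + Set.indicator {q : EuclideanSpace ℝ (Fin 3) | q 0 < 0}
            (fun p => Real.exp (-(ω / |p 0|) * (1 - x)) * fR p +
              (ω / |p 0|) * ∫ y in x..(1:ℝ), Real.exp (-(ω / |p 0|) * (y - x)) * J y p) p := by
      funext p
      simp [Set.indicator_apply, Set.mem_setOf_eq]
    rw [hind]
    exact (hA.indicator msPos).add (hB.indicator msNeg)
  have hub' : ∀ p, Ψ x p ≤ fLR p + C1 * Real.exp (-C2 * p0 p) := by
    intro p
    refine (hub p).trans ?_
    have h1 : C1 * Real.exp (-C2 * p0 p) * min 1 (ω / |p 0|)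
        ≤ C1 * Real.exp (-C2 * p0 p) * 1 :=
      mul_le_mul_of_nonneg_left (min_le_left _ _) (mul_pos hC1 (Real.exp_pos _)).le
    linarith
  have hΨint : Integrable (Ψ x) := by
    refine hHint.mono' hAESM (ae_of_all _ fun p => ?_)
    rw [Real.norm_eq_abs, abs_of_nonneg (hΨnn p)]
    exact hub' p
  refine ⟨hΨnn, ?_, ?_⟩
  · -- lower moment bound
    have hqaesm : AEStronglyMeasurable (fun p => Ψ x p / p0 p) volume :=
      (hAESM.mul hinvcont.aestronglyMeasurable).congr
        (ae_of_all _ fun p => (div_eq_mul_inv _ _).symm)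
    have hqint : Integrable (fun p => Ψ x p / p0 p) := by
      refine (hHint.div_const (c*m)).mono' hqaesm (ae_of_all _ fun p => ?_)
      rw [Real.norm_eq_abs, abs_of_nonneg (div_nonneg (hΨnn p) (hp0pos p).le)]
      exact div_le_div₀ (add_nonneg (hfLRnn p) (mul_pos hC1 (Real.exp_pos _)).le)
        (hub' p) hcm (hp0cm p)
    have hcomp : ∫ p, Real.exp (-(ω / |p 0|)) * (fLR p / p0 p) ≤ ∫ p, Ψ x p / p0 p := by
      refine integral_mono_of_nonneg
        (ae_of_all _ fun p => mul_nonneg (Real.exp_nonneg _)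
          (div_nonneg (hfLRnn p) (hp0pos p).le)) hqint (ae_of_all _ fun p => ?_)
      beta_reduce
      rw [← mul_div_assoc]
      exact (div_le_div_iff_of_pos_right (hp0pos p)).2 (hlb p)
    show al ≤ ∫ p, Ψ x p / p0 p
    linarith
  · -- upper moment bound
    have hminint : Integrable
        (fun p => C1 * Real.exp (-C2 * p0 p) * min 1 (ω / |p 0|)) := by
      refine hexpint.mono'
        ((((continuous_const.mul (Real.continuous_exp.comp
          (continuous_const.mul hcontp0))).measurable).mul
          (measurable_const.min (measurable_const.div hmeas0.abs))).aestronglyMeasurable)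
        (ae_of_all _ fun p => ?_)
      rw [Real.norm_eq_abs, abs_mul, abs_of_pos (mul_pos hC1 (Real.exp_pos _)),
        abs_of_nonneg (le_min zero_le_one (hKnn p))]
      exact mul_le_of_le_one_right (mul_pos hC1 (Real.exp_pos _)).le (min_le_left _ _)
    have h2 : ∫ p, Ψ x p
        ≤ ∫ p, (fLR p + C1 * Real.exp (-C2 * p0 p) * min 1 (ω / |p 0|)) :=
      integral_mono_of_nonneg (ae_of_all _ hΨnn) (hfLRint.add hminint) (ae_of_all _ hub)
    rw [integral_add hfLRint hminint] at h2
    linarith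
end

section
/- Let N ≥ 1, c > 0, and for i = 1,…,N let m_i, ω_i > 0, a_{i,ℓ} > 0, a_{i,u} > 0, writing p_i⁰ = √((c·m_i)² + |p|²). For an N-tuple f = (f_1,…,f_N) of nonnegative integrable functions on ℝ³ with a_{i,ℓ} ≤ ∫ f_i/p_i⁰ dp and ∫ f_i dp ≤ a_{i,u} for each i, define A⃗_f = Σ_i ω_i ∫ (p/p_i⁰) f_i dp, A⁰_f = Σ_i ω_i ∫ f_i dp, and Ũ_f = c·A⃗_f/√((A⁰_f)² − |A⃗_f|²) ∈ ℝ³. Then there exists a constant C > 0, depending only on N, c, and the m_i, ω_i, a_{i,ℓ}, a_{i,u}, such that for any two such tuples f and g: |Ũ_f − Ũ_g| ≤ C Σ_{i=1}^N ‖f_i − g_i‖_{L¹(ℝ³)}. -/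
open MeasureTheory
open scoped RealInnerProductSpace
namespace S16
noncomputable abbrev E3 := EuclideanSpace ℝ (Fin 3)
variable {cm : ℝ}



lemma P_pos (h : 0 < cm) (p : E3) : 0 < Real.sqrt (cm^2 + ‖p‖^2) :=
  Real.sqrt_pos.2 (by nlinarith [sq_nonneg ‖p‖])

lemma P_sq (h : 0 < cm) (p : E3) : (Real.sqrt (cm^2 + ‖p‖^2))^2 = cm^2 + ‖p‖^2 :=
  Real.sq_sqrt (by positivity)

lemma cm_le_P (h : 0 < cm) (p : E3) : cm ≤ Real.sqrt (cm^2 + ‖p‖^2) := by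
  nlinarith [P_sq h p, (P_pos h p).le, norm_nonneg p, sq_nonneg ‖p‖]

lemma norm_le_P (h : 0 < cm) (p : E3) : ‖p‖ ≤ Real.sqrt (cm^2 + ‖p‖^2) := by
  nlinarith [P_sq h p, (P_pos h p).le, norm_nonneg p, sq_nonneg cm]

lemma P_cont : Continuous (fun p : E3 => Real.sqrt (cm^2 + ‖p‖^2)) := by
  continuity

lemma P_asm : AEStronglyMeasurable (fun p : E3 => (Real.sqrt (cm^2 + ‖p‖^2))⁻¹) volume :=
  (P_cont.measurable.inv).aestronglyMeasurable

lemma integrable_div_P (h : 0 < cm) {f : E3 → ℝ} (hf : Integrable f) :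
    Integrable (fun p => f p / Real.sqrt (cm^2 + ‖p‖^2)) := by
  simp only [div_eq_mul_inv]
  refine (hf.mul_const cm⁻¹).mono (hf.1.mul P_asm) (Filter.Eventually.of_forall fun p => ?_)
  have h1 := P_pos h p
  have h2 := cm_le_P h p
  rw [Real.norm_eq_abs, Real.norm_eq_abs, abs_mul, abs_mul, abs_inv, abs_inv,
    abs_of_pos h1, abs_of_pos h]
  have : (Real.sqrt (cm^2 + ‖p‖^2))⁻¹ ≤ cm⁻¹ := inv_anti₀ h h2
  exact mul_le_mul_of_nonneg_left this (abs_nonneg _)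

lemma integrable_smul_P (h : 0 < cm) {f : E3 → ℝ} (hf : Integrable f) :
    Integrable (fun p : E3 => (f p / Real.sqrt (cm^2 + ‖p‖^2)) • p) := by
  have hm : AEStronglyMeasurable (fun p : E3 => (f p / Real.sqrt (cm^2 + ‖p‖^2)) • p) volume := by
    simp only [div_eq_mul_inv]
    exact (hf.1.mul P_asm).smul aestronglyMeasurable_id
  refine hf.mono hm (Filter.Eventually.of_forall fun p => ?_)
  have h1 := P_pos h p
  rw [norm_smul, Real.norm_eq_abs (f p / _), abs_div, abs_of_pos h1,
    div_mul_eq_mul_div, div_le_iff₀ h1, Real.norm_eq_abs]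
  exact mul_le_mul_of_nonneg_left (norm_le_P h p) (abs_nonneg _)

lemma integrable_mul_norm_div_P (h : 0 < cm) {f : E3 → ℝ} (hf : Integrable f) :
    Integrable (fun p : E3 => f p * ‖p‖ / Real.sqrt (cm^2 + ‖p‖^2)) := by
  have hm : AEStronglyMeasurable (fun p : E3 => f p * ‖p‖ / Real.sqrt (cm^2 + ‖p‖^2)) volume := by
    simp only [div_eq_mul_inv]
    exact (hf.1.mul continuous_norm.aestronglyMeasurable).mul P_asm
  refine hf.mono hm (Filter.Eventually.of_forall fun p => ?_)
  have h1 := P_pos h p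
  rw [Real.norm_eq_abs (_ / _), abs_div, abs_mul, abs_of_pos h1, abs_norm,
    div_le_iff₀ h1, Real.norm_eq_abs]
  exact mul_le_mul_of_nonneg_left (norm_le_P h p) (abs_nonneg _)

lemma norm_integral_smul_le (h : 0 < cm) {f : E3 → ℝ} (hf : Integrable f) :
    ‖∫ p : E3, (f p / Real.sqrt (cm^2 + ‖p‖^2)) • p‖ ≤ ∫ p : E3, |f p| := by
  refine (norm_integral_le_integral_norm _).trans (integral_mono
    (integrable_smul_P h hf).norm hf.abs fun p => ?_)
  have h1 := P_pos h p
  rw [norm_smul, Real.norm_eq_abs (_ / _), abs_div, abs_of_pos h1,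
    div_mul_eq_mul_div, div_le_iff₀ h1]
  exact mul_le_mul_of_nonneg_left (norm_le_P h p) (abs_nonneg _)


lemma key_sq (h : 0 < cm) {f : E3 → ℝ} (hf : Integrable f) (hf0 : ∀ p, 0 ≤ f p)
    (hI : Integrable (fun p : E3 => f p * ‖p‖ / Real.sqrt (cm^2 + ‖p‖^2)))
    (hγ : Integrable (fun p : E3 => f p / Real.sqrt (cm^2 + ‖p‖^2))) :
    (∫ p : E3, f p * ‖p‖ / Real.sqrt (cm^2 + ‖p‖^2))^2 +
      (cm * ∫ p : E3, f p / Real.sqrt (cm^2 + ‖p‖^2))^2 ≤ (∫ p : E3, f p)^2 := by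
  set x : E3 → ℝ := fun p => f p * ‖p‖ / Real.sqrt (cm^2 + ‖p‖^2) with hx
  set y : E3 → ℝ := fun p => cm * (f p / Real.sqrt (cm^2 + ‖p‖^2)) with hy
  have hyint : Integrable y := hγ.const_mul cm
  set v : E3 → ℂ := fun p => (x p : ℂ) + (y p : ℂ) * Complex.I with hv
  have hnv : ∀ p, ‖v p‖ = f p := by
    intro p
    have h1 := P_pos h p
    have h2 := P_sq h p
    rw [hv, Complex.norm_add_mul_I]
    have : (x p)^2 + (y p)^2 = (f p)^2 := by
      rw [hx, hy]
      have h1' : Real.sqrt (cm^2 + ‖p‖^2) ≠ 0 := ne_of_gt h1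
      field_simp
      nlinarith [h2]
    rw [this, Real.sqrt_sq (hf0 p)]
  have hvint : Integrable v := by
    refine hf.mono ?_ (Filter.Eventually.of_forall fun p => by rw [hnv p, Real.norm_eq_abs]; exact le_abs_self _)
    exact (hI.ofReal.add (hyint.ofReal.mul_const Complex.I)).1
  have hint : (∫ p, v p) = ((∫ p, x p : ℝ) : ℂ) + ((∫ p, y p : ℝ) : ℂ) * Complex.I := by
    have hxc : Integrable (fun p : E3 => ((x p : ℂ))) := hI.ofReal
    have hyc : Integrable (fun p : E3 => ((y p : ℂ) * Complex.I)) := hyint.ofReal.mul_const _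
    have e1 : (∫ p : E3, ((x p : ℂ))) = ((∫ p, x p : ℝ) : ℂ) := integral_ofReal
    have e2 : (∫ p : E3, ((y p : ℂ))) = ((∫ p, y p : ℝ) : ℂ) := integral_ofReal
    simp only [hv]
    rw [integral_add hxc hyc, integral_mul_const, e1, e2]
  have hle : ‖∫ p, v p‖ ≤ ∫ p, f p := by
    refine (norm_integral_le_integral_norm v).trans ?_
    refine le_of_eq (integral_congr_ae (Filter.Eventually.of_forall fun p => hnv p))
  rw [hint, Complex.norm_add_mul_I] at hle
  have hXY : (∫ p, x p)^2 + (∫ p, y p)^2 ≤ (∫ p, f p)^2 := by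
    have h0 : 0 ≤ (∫ p, x p)^2 + (∫ p, y p)^2 := by positivity
    nlinarith [Real.sq_sqrt h0, Real.sqrt_nonneg ((∫ p, x p)^2 + (∫ p, y p)^2)]
  have : (∫ p, y p) = cm * ∫ p, f p / Real.sqrt (cm^2 + ‖p‖^2) := by
    rw [hy]; exact integral_const_mul cm _
  rw [this] at hXY
  exact hXY

-- pure algebra two-index lemma
lemma pair_ineq {αi αj si sj Ii Ij bi : ℝ} (hαi : 0 ≤ αi) (hαj : 0 ≤ αj)
    (hsi : 0 ≤ si) (hsj : 0 ≤ sj) (hIi : 0 ≤ Ii) (hIj : 0 ≤ Ij)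
    (hbi : bi ≤ Ii * Ij) (hki : Ii^2 + si^2 ≤ αi^2) (hkj : Ij^2 + sj^2 ≤ αj^2) :
    si * sj ≤ αi * αj - bi := by
  nlinarith [sq_nonneg (Ii * sj - Ij * si), sq_nonneg (Ii*Ij + si*sj), mul_nonneg hαi hαj,
    mul_nonneg hIi hIj, mul_nonneg hsi hsj, sq_nonneg (αi*αj - Ii*Ij - si*sj)]

lemma sum_lower {N : ℕ} (ω α s I : Fin N → ℝ) (β : Fin N → E3)
    (hω : ∀ i, 0 ≤ ω i) (hα : ∀ i, 0 ≤ α i) (hs : ∀ i, 0 ≤ s i) (hI : ∀ i, 0 ≤ I i)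
    (hβ : ∀ i, ‖β i‖ ≤ I i) (hkey : ∀ i, (I i)^2 + (s i)^2 ≤ (α i)^2) :
    (∑ i, ω i * s i)^2 ≤ (∑ i, ω i * α i)^2 - ‖∑ i, ω i • β i‖^2 := by
  have hb : ‖∑ i, ω i • β i‖^2 = ∑ i, ∑ j, (ω i * ω j) * ⟪β i, β j⟫ := by
    rw [← real_inner_self_eq_norm_sq, sum_inner]
    refine Finset.sum_congr rfl fun i _ => ?_
    rw [inner_sum]
    refine Finset.sum_congr rfl fun j _ => ?_
    rw [real_inner_smul_left, real_inner_smul_right]; ring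
  have ha : (∑ i, ω i * α i)^2 = ∑ i, ∑ j, (ω i * α i) * (ω j * α j) := by
    rw [sq, Finset.sum_mul_sum]
  have hss : (∑ i, ω i * s i)^2 = ∑ i, ∑ j, (ω i * s i) * (ω j * s j) := by
    rw [sq, Finset.sum_mul_sum]
  rw [hb, ha, hss, ← Finset.sum_sub_distrib]
  refine Finset.sum_le_sum fun i _ => ?_
  rw [← Finset.sum_sub_distrib]
  refine Finset.sum_le_sum fun j _ => ?_
  have h1 : ⟪β i, β j⟫ ≤ I i * I j :=
    (real_inner_le_norm _ _).trans (mul_le_mul (hβ i) (hβ j) (norm_nonneg _) (hI i))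
  have h2 := pair_ineq (hα i) (hα j) (hs i) (hs j) (hI i) (hI j) h1 (hkey i) (hkey j)
  nlinarith [mul_nonneg (hω i) (hω j)]

lemma norm_smul_eq (h : 0 < cm) {f : E3 → ℝ} (hf0 : ∀ p, 0 ≤ f p) (p : E3) :
    ‖(f p / Real.sqrt (cm^2 + ‖p‖^2)) • p‖ = f p * ‖p‖ / Real.sqrt (cm^2 + ‖p‖^2) := by
  rw [norm_smul, Real.norm_eq_abs, abs_div, abs_of_pos (P_pos h p), abs_of_nonneg (hf0 p),
    div_mul_eq_mul_div]

lemma norm_beta_le (h : 0 < cm) {f : E3 → ℝ} (hf0 : ∀ p, 0 ≤ f p) :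
    ‖∫ p : E3, (f p / Real.sqrt (cm^2 + ‖p‖^2)) • p‖ ≤
      ∫ p : E3, f p * ‖p‖ / Real.sqrt (cm^2 + ‖p‖^2) := by
  refine (norm_integral_le_integral_norm _).trans (le_of_eq ?_)
  exact integral_congr_ae (Filter.Eventually.of_forall fun p => norm_smul_eq h hf0 p)

lemma I_le_alpha (h : 0 < cm) {f : E3 → ℝ} (hf : Integrable f) (hf0 : ∀ p, 0 ≤ f p)
    (hI : Integrable (fun p : E3 => f p * ‖p‖ / Real.sqrt (cm^2 + ‖p‖^2))) :
    (∫ p : E3, f p * ‖p‖ / Real.sqrt (cm^2 + ‖p‖^2)) ≤ ∫ p : E3, f p := by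
  refine integral_mono hI hf fun p => ?_
  rw [div_le_iff₀ (P_pos h p)]
  exact mul_le_mul_of_nonneg_left (norm_le_P h p) (hf0 p)

lemma tuple_bound {N : ℕ} (c : ℝ) (hc : 0 < c) (m ω al au : Fin N → ℝ)
    (hm : ∀ i, 0 < m i) (hω : ∀ i, 0 < ω i) (hal : ∀ i, 0 < al i)
    (f : Fin N → E3 → ℝ) (hf : ∀ i, Integrable (f i)) (hf0 : ∀ i p, 0 ≤ f i p)
    (hfal : ∀ i, al i ≤ ∫ p, f i p / Real.sqrt ((c * m i) ^ 2 + ‖p‖ ^ 2))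
    (hfau : ∀ i, (∫ p, f i p) ≤ au i) :
    (c * ∑ i, ω i * (m i * al i))^2 ≤
        (∑ i, ω i * ∫ p, f i p)^2 -
        ‖∑ i, ω i • ∫ p : E3, (f i p / Real.sqrt ((c * m i) ^ 2 + ‖p‖ ^ 2)) • p‖^2 ∧
      (∑ i, ω i * ∫ p, f i p) ≤ (∑ i, ω i * au i) ∧
      ‖∑ i, ω i • ∫ p : E3, (f i p / Real.sqrt ((c * m i) ^ 2 + ‖p‖ ^ 2)) • p‖ ≤
        (∑ i, ω i * au i) ∧
      0 ≤ (∑ i, ω i * ∫ p, f i p) := by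
  have hcm : ∀ i, 0 < c * m i := fun i => mul_pos hc (hm i)
  set α : Fin N → ℝ := fun i => ∫ p, f i p with hα
  set γ : Fin N → ℝ := fun i => ∫ p, f i p / Real.sqrt ((c * m i) ^ 2 + ‖p‖ ^ 2) with hγ
  set I : Fin N → ℝ := fun i => ∫ p : E3, f i p * ‖p‖ / Real.sqrt ((c * m i) ^ 2 + ‖p‖ ^ 2)
    with hIdef
  set β : Fin N → E3 := fun i => ∫ p : E3, (f i p / Real.sqrt ((c * m i) ^ 2 + ‖p‖ ^ 2)) • p
    with hβdef
  set s : Fin N → ℝ := fun i => (c * m i) * γ i with hs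
  have hα0 : ∀ i, 0 ≤ α i := fun i => integral_nonneg (hf0 i)
  have hI0 : ∀ i, 0 ≤ I i := fun i => integral_nonneg fun p =>
    div_nonneg (mul_nonneg (hf0 i p) (norm_nonneg p)) (Real.sqrt_nonneg _)
  have hγ0 : ∀ i, 0 ≤ γ i := fun i => integral_nonneg fun p =>
    div_nonneg (hf0 i p) (Real.sqrt_nonneg _)
  have hs0 : ∀ i, 0 ≤ s i := fun i => mul_nonneg (hcm i).le (hγ0 i)
  have hβI : ∀ i, ‖β i‖ ≤ I i := fun i => norm_beta_le (hcm i) (hf0 i)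
  have hkey : ∀ i, (I i)^2 + (s i)^2 ≤ (α i)^2 := fun i =>
    key_sq (hcm i) (hf i) (hf0 i) (integrable_mul_norm_div_P (hcm i) (hf i))
      (integrable_div_P (hcm i) (hf i))
  have hIα : ∀ i, I i ≤ α i := fun i =>
    I_le_alpha (hcm i) (hf i) (hf0 i) (integrable_mul_norm_div_P (hcm i) (hf i))
  have main := sum_lower ω α s I β (fun i => (hω i).le) hα0 hs0 hI0 hβI hkey
  refine ⟨?_, ?_, ?_, ?_⟩
  · refine le_trans ?_ main
    have h1 : c * ∑ i, ω i * (m i * al i) ≤ ∑ i, ω i * s i := by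
      rw [Finset.mul_sum]
      refine Finset.sum_le_sum fun i _ => ?_
      have hγi : al i ≤ γ i := hfal i
      calc c * (ω i * (m i * al i)) ≤ c * (ω i * (m i * γ i)) := by
            nlinarith [mul_le_mul_of_nonneg_left hγi
              (mul_nonneg (mul_nonneg hc.le (hω i).le) (hm i).le)]
        _ = ω i * s i := by simp only [hs]; ring
    have h0 : 0 ≤ c * ∑ i, ω i * (m i * al i) := by
      refine mul_nonneg hc.le (Finset.sum_nonneg fun i _ =>
        mul_nonneg (hω i).le (mul_nonneg (hm i).le (hal i).le))
    exact pow_le_pow_left₀ h0 h1 2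
  · exact Finset.sum_le_sum fun i _ => mul_le_mul_of_nonneg_left (hfau i) (hω i).le
  · refine (norm_sum_le _ _).trans (Finset.sum_le_sum fun i _ => ?_)
    rw [norm_smul, Real.norm_eq_abs, abs_of_pos (hω i)]
    exact mul_le_mul_of_nonneg_left (((hβI i).trans (hIα i)).trans (hfau i)) (hω i).le
  · exact Finset.sum_nonneg fun i _ => mul_nonneg (hω i).le (hα0 i)

end S16

lemma scalar_final (c κ M S af ag nbf nbg rf rg db W : ℝ)
    (hc : 0 < c) (hκ : 0 < κ) (hS : 0 ≤ S)
    (hrf : κ ≤ rf) (hrg : κ ≤ rg)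
    (hafM : af ≤ M) (hagM : ag ≤ M) (haf0 : 0 ≤ af) (hag0 : 0 ≤ ag)
    (hnbf : nbf ≤ M) (hnbg : nbg ≤ M) (hnbf0 : 0 ≤ nbf) (hnbg0 : 0 ≤ nbg)
    (hrf2 : rf^2 = af^2 - nbf^2) (hrg2 : rg^2 = ag^2 - nbg^2)
    (hda : |af - ag| ≤ W*S) (hdb : db ≤ W*S) (hdb0 : 0 ≤ db)
    (hdn : |nbf - nbg| ≤ db) (hWS : 0 ≤ W*S) :
    (c/rf)*db + |c/rf - c/rg| *nbg ≤ (W*(c/κ + 2*c*M^2/κ^3))*S := by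
  have hrf0 : 0 < rf := lt_of_lt_of_le hκ hrf
  have hrg0 : 0 < rg := lt_of_lt_of_le hκ hrg
  have hM0 : 0 ≤ M := le_trans haf0 hafM
  have e2 : |c/rf - c/rg| = c*|rg - rf|/(rf*rg) := by
    have h : c/rf - c/rg = c*(rg-rf)/(rf*rg) := by field_simp
    rw [h, abs_div, abs_mul, abs_of_pos hc, abs_of_pos (mul_pos hrf0 hrg0)]
  have e3 : |rf^2 - rg^2| ≤ 4*M*(W*S) := by
    have h1 : |af^2 - ag^2| ≤ 2*M*(W*S) := by
      have h : af^2 - ag^2 = (af+ag)*(af-ag) := by ring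
      rw [h, abs_mul, abs_of_nonneg (by linarith : (0:ℝ) ≤ af+ag)]
      exact mul_le_mul (by linarith) hda (abs_nonneg _) (by linarith)
    have h2 : |nbf^2 - nbg^2| ≤ 2*M*(W*S) := by
      have h : nbf^2 - nbg^2 = (nbf+nbg)*(nbf-nbg) := by ring
      rw [h, abs_mul, abs_of_nonneg (by linarith : (0:ℝ) ≤ nbf+nbg)]
      exact mul_le_mul (by linarith) (hdn.trans hdb) (abs_nonneg _) (by linarith)
    have h : rf^2 - rg^2 = (af^2-ag^2) - (nbf^2-nbg^2) := by rw [hrf2, hrg2]; ring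
    calc |rf^2 - rg^2| ≤ |af^2-ag^2| + |nbf^2-nbg^2| := by rw [h]; exact abs_sub _ _
      _ ≤ 4*M*(W*S) := by linarith
  have e5 : |rf - rg| ≤ 2*M*(W*S)/κ := by
    have heq : |rf-rg| *(rf+rg) = |rf^2-rg^2| := by
      rw [← abs_of_pos (show (0:ℝ) < rf+rg by linarith), ← abs_mul]
      congr 1; ring
    have hm : |rf-rg| *(2*κ) ≤ |rf-rg| *(rf+rg) :=
      mul_le_mul_of_nonneg_left (by linarith) (abs_nonneg _)
    rw [le_div_iff₀ hκ]
    nlinarith [heq, e3, hm]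
  have t1 : (c/rf)*db ≤ (c/κ)*(W*S) := by
    have : c/rf ≤ c/κ := by gcongr
    exact mul_le_mul this hdb hdb0 (by positivity)
  have t2 : |c/rf - c/rg| ≤ c*(2*M*(W*S)/κ)/(κ*κ) := by
    rw [e2, abs_sub_comm]
    have h2 : κ*κ ≤ rf*rg := mul_le_mul hrf hrg hκ.le hrf0.le
    have hnum : c * |rf-rg| ≤ c * (2*M*(W*S)/κ) := mul_le_mul_of_nonneg_left e5 hc.le
    exact div_le_div₀ (by positivity) hnum (by positivity) h2
  calc (c/rf)*db + |c/rf - c/rg| *nbg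
      ≤ (c/κ)*(W*S) + (c*(2*M*(W*S)/κ)/(κ*κ))*M := by
        refine add_le_add t1 (mul_le_mul t2 hnbg hnbg0 (by positivity))
    _ = (W*(c/κ + 2*c*M^2/κ^3))*S := by field_simp

open scoped BigOperators

theorem stmt_16 (N : ℕ) (hN : 1 ≤ N) (c : ℝ) (hc : 0 < c)
    (m ω al au : Fin N → ℝ) (hm : ∀ i, 0 < m i) (hω : ∀ i, 0 < ω i)
    (hal : ∀ i, 0 < al i) (hau : ∀ i, 0 < au i) :
    ∃ C > (0 : ℝ), ∀ f g : Fin N → EuclideanSpace ℝ (Fin 3) → ℝ,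
      (∀ i, Integrable (f i)) → (∀ i p, 0 ≤ f i p) →
      (∀ i, al i ≤ ∫ p, f i p / Real.sqrt ((c * m i) ^ 2 + ‖p‖ ^ 2)) →
      (∀ i, (∫ p, f i p) ≤ au i) →
      (∀ i, Integrable (g i)) → (∀ i p, 0 ≤ g i p) →
      (∀ i, al i ≤ ∫ p, g i p / Real.sqrt ((c * m i) ^ 2 + ‖p‖ ^ 2)) →
      (∀ i, (∫ p, g i p) ≤ au i) →
      ‖(c / Real.sqrt ((∑ i, ω i * ∫ p, f i p) ^ 2 -
            ‖∑ i, ω i • ∫ p : EuclideanSpace ℝ (Fin 3),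
              (f i p / Real.sqrt ((c * m i) ^ 2 + ‖p‖ ^ 2)) • p‖ ^ 2)) •
          (∑ i, ω i • ∫ p : EuclideanSpace ℝ (Fin 3),
            (f i p / Real.sqrt ((c * m i) ^ 2 + ‖p‖ ^ 2)) • p) -
        (c / Real.sqrt ((∑ i, ω i * ∫ p, g i p) ^ 2 -
            ‖∑ i, ω i • ∫ p : EuclideanSpace ℝ (Fin 3),
              (g i p / Real.sqrt ((c * m i) ^ 2 + ‖p‖ ^ 2)) • p‖ ^ 2)) •
          (∑ i, ω i • ∫ p : EuclideanSpace ℝ (Fin 3),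
            (g i p / Real.sqrt ((c * m i) ^ 2 + ‖p‖ ^ 2)) • p)‖ ≤
      C * ∑ i, ∫ p, |f i p - g i p| := by
  haveI : Nonempty (Fin N) := ⟨⟨0, hN⟩⟩
  have hκpos : 0 < c * ∑ i, ω i * (m i * al i) :=
    mul_pos hc (Finset.sum_pos (fun i _ => mul_pos (hω i) (mul_pos (hm i) (hal i)))
      Finset.univ_nonempty)
  have hWpos : 0 < ∑ i, ω i := Finset.sum_pos (fun i _ => hω i) Finset.univ_nonempty
  refine ⟨(∑ i, ω i) * (c/(c * ∑ i, ω i * (m i * al i)) +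
      2*c*(∑ i, ω i * au i)^2/(c * ∑ i, ω i * (m i * al i))^3), ?_, ?_⟩
  · refine mul_pos hWpos (lt_of_lt_of_le (div_pos hc hκpos) (le_add_of_nonneg_right ?_))
    exact div_nonneg (by positivity) (pow_nonneg hκpos.le 3)
  intro f g hf hf0 hfal hfau hg hg0 hgal hgau
  obtain ⟨hf1, hf2, hf3, hf4⟩ :=
    S16.tuple_bound c hc m ω al au hm hω hal f hf hf0 hfal hfau
  obtain ⟨hg1, hg2, hg3, hg4⟩ :=
    S16.tuple_bound c hc m ω al au hm hω hal g hg hg0 hgal hgau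
  set κ := c * ∑ i, ω i * (m i * al i) with hκdef
  set M := ∑ i, ω i * au i with hMdef
  set W := ∑ i, ω i with hWdef
  set S := ∑ i, ∫ p, |f i p - g i p| with hSdef
  have hS0 : 0 ≤ S := Finset.sum_nonneg fun i _ => integral_nonneg fun p => abs_nonneg _
  set af := ∑ i, ω i * ∫ p, f i p with hafdef
  set ag := ∑ i, ω i * ∫ p, g i p with hagdef
  set bf := ∑ i, ω i • ∫ p : EuclideanSpace ℝ (Fin 3),
    (f i p / Real.sqrt ((c * m i) ^ 2 + ‖p‖ ^ 2)) • p with hbfdef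
  set bg := ∑ i, ω i • ∫ p : EuclideanSpace ℝ (Fin 3),
    (g i p / Real.sqrt ((c * m i) ^ 2 + ‖p‖ ^ 2)) • p with hbgdef
  set rf := Real.sqrt (af ^ 2 - ‖bf‖ ^ 2) with hrfdef
  set rg := Real.sqrt (ag ^ 2 - ‖bg‖ ^ 2) with hrgdef
  have hsubf : κ^2 ≤ af^2 - ‖bf‖^2 := hf1
  have hsubg : κ^2 ≤ ag^2 - ‖bg‖^2 := hg1
  have hrf_le : κ ≤ rf := by
    calc κ = Real.sqrt (κ^2) := (Real.sqrt_sq hκpos.le).symm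
      _ ≤ rf := Real.sqrt_le_sqrt hsubf
  have hrg_le : κ ≤ rg := by
    calc κ = Real.sqrt (κ^2) := (Real.sqrt_sq hκpos.le).symm
      _ ≤ rg := Real.sqrt_le_sqrt hsubg
  have hrf2 : rf^2 = af^2 - ‖bf‖^2 := Real.sq_sqrt (le_trans (by positivity) hsubf)
  have hrg2 : rg^2 = ag^2 - ‖bg‖^2 := Real.sq_sqrt (le_trans (by positivity) hsubg)
  have hrf0 : 0 < rf := lt_of_lt_of_le hκpos hrf_le
  have hrg0 : 0 < rg := lt_of_lt_of_le hκpos hrg_le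
  have hωW : ∀ i, ω i ≤ W := fun i =>
    Finset.single_le_sum (f := ω) (fun j _ => (hω j).le) (Finset.mem_univ i)
  -- difference of the scalar moments
  have hda : |af - ag| ≤ W * S := by
    rw [hafdef, hagdef, ← Finset.sum_sub_distrib, hSdef, Finset.mul_sum]
    refine (Finset.abs_sum_le_sum_abs _ _).trans (Finset.sum_le_sum fun i _ => ?_)
    rw [← mul_sub, abs_mul, abs_of_pos (hω i), ← integral_sub (hf i) (hg i)]
    have h1 : |∫ p, (f i p - g i p)| ≤ ∫ p, |f i p - g i p| := by
      simpa [Real.norm_eq_abs] using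
        norm_integral_le_integral_norm (μ := volume) (fun p => f i p - g i p)
    have h2 : 0 ≤ ∫ p, |f i p - g i p| := integral_nonneg fun p => abs_nonneg _
    calc ω i * |∫ p, (f i p - g i p)| ≤ ω i * ∫ p, |f i p - g i p| :=
          mul_le_mul_of_nonneg_left h1 (hω i).le
      _ ≤ W * ∫ p, |f i p - g i p| := mul_le_mul_of_nonneg_right (hωW i) h2
  -- difference of the vector moments
  have hdb : ‖bf - bg‖ ≤ W * S := by
    rw [hbfdef, hbgdef, ← Finset.sum_sub_distrib, hSdef, Finset.mul_sum]
    refine (norm_sum_le _ _).trans (Finset.sum_le_sum fun i _ => ?_)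
    have hcm : 0 < c * m i := mul_pos hc (hm i)
    rw [← smul_sub, norm_smul, Real.norm_eq_abs, abs_of_pos (hω i)]
    have hdiff : (∫ p : EuclideanSpace ℝ (Fin 3),
          (f i p / Real.sqrt ((c * m i) ^ 2 + ‖p‖ ^ 2)) • p) -
        (∫ p : EuclideanSpace ℝ (Fin 3),
          (g i p / Real.sqrt ((c * m i) ^ 2 + ‖p‖ ^ 2)) • p) =
        ∫ p : EuclideanSpace ℝ (Fin 3),
          ((f i p - g i p) / Real.sqrt ((c * m i) ^ 2 + ‖p‖ ^ 2)) • p := by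
      rw [← integral_sub (S16.integrable_smul_P hcm (hf i)) (S16.integrable_smul_P hcm (hg i))]
      refine integral_congr_ae (Filter.Eventually.of_forall fun p => ?_)
      simp only [sub_div, sub_smul]
    rw [hdiff]
    have h1 : ‖∫ p : EuclideanSpace ℝ (Fin 3),
        ((f i p - g i p) / Real.sqrt ((c * m i) ^ 2 + ‖p‖ ^ 2)) • p‖ ≤
        ∫ p, |f i p - g i p| := S16.norm_integral_smul_le hcm ((hf i).sub (hg i))
    have h2 : 0 ≤ ∫ p, |f i p - g i p| := integral_nonneg fun p => abs_nonneg _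
    calc ω i * ‖_‖ ≤ ω i * ∫ p, |f i p - g i p| := mul_le_mul_of_nonneg_left h1 (hω i).le
      _ ≤ W * ∫ p, |f i p - g i p| := mul_le_mul_of_nonneg_right (hωW i) h2
  -- split the difference
  have split : ‖(c/rf) • bf - (c/rg) • bg‖ ≤ (c/rf)*‖bf - bg‖ + |c/rf - c/rg| * ‖bg‖ := by
    have h : (c/rf) • bf - (c/rg) • bg = (c/rf) • (bf - bg) + (c/rf - c/rg) • bg := by
      module
    rw [h]
    refine (norm_add_le _ _).trans (le_of_eq ?_)
    rw [norm_smul, norm_smul, Real.norm_eq_abs, Real.norm_eq_abs,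
      abs_of_pos (div_pos hc hrf0)]
  refine split.trans (scalar_final c κ M S af ag ‖bf‖ ‖bg‖ rf rg ‖bf - bg‖ W hc hκpos hS0
    hrf_le hrg_le hf2 hg2 hf4 hg4 hf3 hg3 (norm_nonneg _) (norm_nonneg _) hrf2 hrg2
    hda hdb (norm_nonneg _) (abs_norm_sub_norm_le _ _) (mul_nonneg hWpos.le hS0))
end

section
/- Let c, m > 0 and write p⁰ = √((cm)² + |p|²) for p ∈ ℝ³. Let 0 < β_ℓ ≤ β_u, U_u ≥ 0, a_u > 0. For α ≥ 0, β > 0, U ∈ ℝ³ define J(α, β, U)(p) = (α/∫ e^{−cβ q⁰} dq/q⁰) · e^{−β(√(c²+|U|²)·p⁰ − ⟨U,p⟩)}. Then there exist constants C, C' > 0, depending only on c, m, β_ℓ, β_u, U_u, a_u, such that for all α₁, α₂ ∈ [0, a_u], all β₁, β₂ ∈ [β_ℓ, β_u], all U₁, U₂ ∈ ℝ³ with |U₁|, |U₂| ≤ U_u, and all p ∈ ℝ³: |J(α₁,β₁,U₁)(p) − J(α₂,β₂,U₂)(p)| ≤ C e^{−C' p⁰} (|α₁ − α₂| + |β₁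 − β₂| + |U₁ − U₂|). -/
open MeasureTheory

lemma aux_exp_diff (a b : ℝ) :
    |Real.exp (-a) - Real.exp (-b)| ≤ Real.exp (-min a b) * |a - b| := by
  wlog hab : a ≤ b generalizing a b
  · rw [abs_sub_comm, min_comm, abs_sub_comm a b]; exact this b a (le_of_not_ge hab)
  rw [min_eq_left hab, abs_of_nonneg (sub_nonneg.2 (Real.exp_le_exp.2 (neg_le_neg hab))),
    abs_of_nonpos (sub_nonpos.2 hab)]
  have key : Real.exp (-b) = Real.exp (-a) * Real.exp (a - b) := by
    rw [← Real.exp_add]; ring_nf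
  nlinarith [Real.add_one_le_exp (a - b), Real.exp_pos (-a)]

lemma aux_t_exp {a t : ℝ} (ha : 0 < a) (ht : 0 ≤ t) :
    t * Real.exp (-(a * t)) ≤ (2 / a) * Real.exp (-(a / 2 * t)) := by
  have h1 : t ≤ (2 / a) * Real.exp (a / 2 * t) := by
    have h2 : a / 2 * t ≤ Real.exp (a / 2 * t) := by
      nlinarith [Real.add_one_le_exp (a / 2 * t)]
    calc t = (2 / a) * (a / 2 * t) := by field_simp
      _ ≤ (2 / a) * Real.exp (a / 2 * t) := by
          apply mul_le_mul_of_nonneg_left h2; positivity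
  calc t * Real.exp (-(a * t)) ≤ (2 / a) * Real.exp (a / 2 * t) * Real.exp (-(a * t)) := by
        apply mul_le_mul_of_nonneg_right h1 (Real.exp_pos _).le
    _ = (2 / a) * Real.exp (-(a / 2 * t)) := by
        rw [mul_assoc, ← Real.exp_add]; ring_nf

lemma aux_sqrt_lip (c x y : ℝ) (hx : 0 ≤ x) (hy : 0 ≤ y) :
    Real.sqrt (c ^ 2 + x ^ 2) ≤ Real.sqrt (c ^ 2 + y ^ 2) + |x - y| := by
  set S := Real.sqrt (c ^ 2 + y ^ 2) with hS
  have hS2 : S ^ 2 = c ^ 2 + y ^ 2 := Real.sq_sqrt (by positivity)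
  have hSnn : 0 ≤ S := Real.sqrt_nonneg _
  have hyS : y ≤ S := by
    rw [hS]
    calc y = Real.sqrt (y ^ 2) := (Real.sqrt_sq hy).symm
      _ ≤ _ := Real.sqrt_le_sqrt (by nlinarith)
  have hd : 0 ≤ |x - y| := abs_nonneg _
  have hxy : x ≤ y + |x - y| := by
    cases abs_cases (x - y) with
    | inl h => linarith [h.1]
    | inr h => linarith [h.1]
  calc Real.sqrt (c ^ 2 + x ^ 2) ≤ Real.sqrt ((S + |x - y|) ^ 2) := by
        apply Real.sqrt_le_sqrt; nlinarith
    _ = S + |x - y| := Real.sqrt_sq (by positivity)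

set_option maxHeartbeats 1600000 in
lemma aux_core (Zl Z₁ Z₂ α₁ α₂ β₁ β₂ W₁ W₂ P δ D KM dU au βl βu : ℝ)
    (hZl : 0 < Zl) (hZ₁ : Zl ≤ Z₁) (hZ₂ : Zl ≤ Z₂)
    (hKM0 : 0 ≤ KM) (hD0 : 0 ≤ D)
    (hZd : |Z₁ - Z₂| ≤ KM * |β₁ - β₂|)
    (hα₁ : α₁ ∈ Set.Icc 0 au) (hα₂ : α₂ ∈ Set.Icc 0 au)
    (hβ₁ : β₁ ∈ Set.Icc βl βu) (hβ₂ : β₂ ∈ Set.Icc βl βu) (hβl : 0 < βl)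
    (hδ : 0 < δ) (hP : 0 ≤ P) (hdU : 0 ≤ dU)
    (hW₁l : δ * P ≤ W₁) (hW₂l : δ * P ≤ W₂)
    (hW₁u : W₁ ≤ D * P) (hWd : |W₁ - W₂| ≤ 2 * dU * P) :
    |α₁ / Z₁ * Real.exp (-β₁ * W₁) - α₂ / Z₂ * Real.exp (-β₂ * W₂)| ≤
      (1 / Zl + au * KM / Zl ^ 2 + au / Zl * D * (2 / (βl * δ)) +
        au / Zl * (2 * βu) * (2 / (βl * δ))) *
        Real.exp (-(βl * δ / 2) * P) * (|α₁ - α₂| + |β₁ - β₂| + dU) := by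
  simp only [neg_mul]
  obtain ⟨hα₁0, hα₁u⟩ := hα₁
  obtain ⟨hα₂0, hα₂u⟩ := hα₂
  obtain ⟨hβ₁l, hβ₁u⟩ := hβ₁
  obtain ⟨hβ₂l, hβ₂u⟩ := hβ₂
  have hau : 0 ≤ au := le_trans hα₂0 hα₂u
  have hβu0 : 0 ≤ βu := le_trans hβl.le (le_trans hβ₁l hβ₁u)
  set a := βl * δ with ha
  have hapos : 0 < a := mul_pos hβl hδ
  have hZ₁p : 0 < Z₁ := lt_of_lt_of_le hZl hZ₁
  have hZ₂p : 0 < Z₂ := lt_of_lt_of_le hZl hZ₂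
  have hW₁0 : 0 ≤ W₁ := le_trans (by positivity) hW₁l
  have hW₂0 : 0 ≤ W₂ := le_trans (by positivity) hW₂l
  have hβW₁ : a * P ≤ β₁ * W₁ := by nlinarith
  have hβW₁' : a * P ≤ β₂ * W₁ := by nlinarith
  have hβW₂' : a * P ≤ β₂ * W₂ := by nlinarith
  have hZZ : Zl ^ 2 ≤ Z₁ * Z₂ := by
    rw [sq]; exact mul_le_mul hZ₁ hZ₂ hZl.le (le_trans hZl.le hZ₁)
  set e11 := Real.exp (-(β₁ * W₁)) with he11
  set e21 := Real.exp (-(β₂ * W₁)) with he21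
  set e22 := Real.exp (-(β₂ * W₂)) with he22
  set EP := Real.exp (-(a * P)) with hEP
  set EH := Real.exp (-(a / 2 * P)) with hEH
  have hEPH : EP ≤ EH := Real.exp_le_exp.2 (by nlinarith)
  have hEH0 : 0 < EH := Real.exp_pos _
  have hEP0 : 0 < EP := Real.exp_pos _
  have he110 : 0 < e11 := Real.exp_pos _
  have he11E : e11 ≤ EH := le_trans (Real.exp_le_exp.2 (by linarith)) hEPH
  have hPE : P * EP ≤ (2 / a) * EH := aux_t_exp hapos hP
  have hd3 : |e11 - e21| ≤ EP * (|β₁ - β₂| * (D * P)) := by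
    calc |e11 - e21| ≤ Real.exp (-min (β₁ * W₁) (β₂ * W₁)) * |β₁ * W₁ - β₂ * W₁| :=
          aux_exp_diff _ _
      _ ≤ EP * (|β₁ - β₂| * (D * P)) := by
          apply mul_le_mul (Real.exp_le_exp.2 (neg_le_neg (le_min hβW₁ hβW₁')))
            ?_ (abs_nonneg _) hEP0.le
          rw [show β₁ * W₁ - β₂ * W₁ = (β₁ - β₂) * W₁ by ring, abs_mul,
            abs_of_nonneg hW₁0]
          exact mul_le_mul_of_nonneg_left hW₁u (abs_nonneg _)
  have hd4 : |e21 - e22| ≤ EP * (βu * (2 * dU * P)) := by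
    calc |e21 - e22| ≤ Real.exp (-min (β₂ * W₁) (β₂ * W₂)) * |β₂ * W₁ - β₂ * W₂| :=
          aux_exp_diff _ _
      _ ≤ EP * (βu * (2 * dU * P)) := by
          apply mul_le_mul (Real.exp_le_exp.2 (neg_le_neg (le_min hβW₁' hβW₂')))
            ?_ (abs_nonneg _) hEP0.le
          rw [show β₂ * W₁ - β₂ * W₂ = β₂ * (W₁ - W₂) by ring, abs_mul,
            abs_of_nonneg (le_trans hβl.le hβ₂l)]
          exact mul_le_mul hβ₂u hWd (abs_nonneg _) hβu0
  clear_value e11 e21 e22 EP EH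
  have hαZ : α₂ / Z₂ ≤ au / Zl := div_le_div₀ hau hα₂u hZl hZ₂
  have hαZ0 : 0 ≤ α₂ / Z₂ := by positivity
  -- term 1
  have h1 : |(α₁ - α₂) / Z₁ * e11| ≤ 1 / Zl * EH * |α₁ - α₂| := by
    rw [abs_mul, abs_div, abs_of_pos hZ₁p, abs_of_pos he110]
    calc |α₁ - α₂| / Z₁ * e11 ≤ |α₁ - α₂| / Zl * EH :=
          mul_le_mul (div_le_div_of_nonneg_left (abs_nonneg _) hZl hZ₁) he11E he110.le
            (by positivity)
      _ = 1 / Zl * EH * |α₁ - α₂| := by ring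
  -- term 2
  have h2 : |α₂ * (1 / Z₁ - 1 / Z₂) * e11| ≤ au * KM / Zl ^ 2 * EH * |β₁ - β₂| := by
    have hinv : |1 / Z₁ - 1 / Z₂| ≤ KM * |β₁ - β₂| / Zl ^ 2 := by
      have heq : 1 / Z₁ - 1 / Z₂ = (Z₂ - Z₁) / (Z₁ * Z₂) := by
        field_simp
      rw [heq, abs_div, abs_of_pos (mul_pos hZ₁p hZ₂p), abs_sub_comm]
      exact div_le_div₀ (by positivity) hZd (by positivity) hZZ
    rw [abs_mul, abs_mul, abs_of_nonneg hα₂0, abs_of_pos he110]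
    calc α₂ * |1 / Z₁ - 1 / Z₂| * e11 ≤ au * (KM * |β₁ - β₂| / Zl ^ 2) * EH :=
          mul_le_mul (mul_le_mul hα₂u hinv (abs_nonneg _) hau) he11E he110.le (by positivity)
      _ = au * KM / Zl ^ 2 * EH * |β₁ - β₂| := by ring
  -- term 3
  have h3 : |α₂ / Z₂ * (e11 - e21)| ≤ au / Zl * D * (2 / a) * EH * |β₁ - β₂| := by
    rw [abs_mul, abs_of_nonneg hαZ0]
    calc α₂ / Z₂ * |e11 - e21| ≤ au / Zl * (EP * (|β₁ - β₂| * (D * P))) :=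
          mul_le_mul hαZ hd3 (abs_nonneg _) (by positivity)
      _ = au / Zl * |β₁ - β₂| * D * (P * EP) := by ring
      _ ≤ au / Zl * |β₁ - β₂| * D * ((2 / a) * EH) := by
          apply mul_le_mul_of_nonneg_left hPE (by positivity)
      _ = au / Zl * D * (2 / a) * EH * |β₁ - β₂| := by ring
  -- term 4
  have h4 : |α₂ / Z₂ * (e21 - e22)| ≤ au / Zl * (2 * βu) * (2 / a) * EH * dU := by
    rw [abs_mul, abs_of_nonneg hαZ0]
    calc α₂ / Z₂ * |e21 - e22| ≤ au / Zl * (EP * (βu * (2 * dU * P))) :=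
          mul_le_mul hαZ hd4 (abs_nonneg _) (by positivity)
      _ = au / Zl * (2 * βu) * dU * (P * EP) := by ring
      _ ≤ au / Zl * (2 * βu) * dU * ((2 / a) * EH) := by
          apply mul_le_mul_of_nonneg_left hPE (by positivity)
      _ = au / Zl * (2 * βu) * (2 / a) * EH * dU := by ring
  have hsplit : α₁ / Z₁ * e11 - α₂ / Z₂ * e22 =
      (α₁ - α₂) / Z₁ * e11 + α₂ * (1 / Z₁ - 1 / Z₂) * e11 +
        α₂ / Z₂ * (e11 - e21) + α₂ / Z₂ * (e21 - e22) := by ring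
  set S := |α₁ - α₂| + |β₁ - β₂| + dU with hSd
  have ha1 : 0 ≤ |α₁ - α₂| := abs_nonneg _
  have ha2 : 0 ≤ |β₁ - β₂| := abs_nonneg _
  have hS1 : |α₁ - α₂| ≤ S := by simp only [hSd]; linarith
  have hS2 : |β₁ - β₂| ≤ S := by simp only [hSd]; linarith
  have hS3 : dU ≤ S := by simp only [hSd]; linarith
  have b1 : 1 / Zl * EH * |α₁ - α₂| ≤ 1 / Zl * EH * S :=
    mul_le_mul_of_nonneg_left hS1 (by positivity)
  have b2 : au * KM / Zl ^ 2 * EH * |β₁ - β₂| ≤ au * KM / Zl ^ 2 * EH * S :=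
    mul_le_mul_of_nonneg_left hS2 (by positivity)
  have b3 : au / Zl * D * (2 / a) * EH * |β₁ - β₂| ≤ au / Zl * D * (2 / a) * EH * S :=
    mul_le_mul_of_nonneg_left hS2 (by positivity)
  have b4 : au / Zl * (2 * βu) * (2 / a) * EH * dU ≤ au / Zl * (2 * βu) * (2 / a) * EH * S :=
    mul_le_mul_of_nonneg_left hS3 (by positivity)
  calc |α₁ / Z₁ * e11 - α₂ / Z₂ * e22|
      ≤ |(α₁ - α₂) / Z₁ * e11 + α₂ * (1 / Z₁ - 1 / Z₂) * e11 + α₂ / Z₂ * (e11 - e21)| +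
          |α₂ / Z₂ * (e21 - e22)| := by rw [hsplit]; exact abs_add_le _ _
    _ ≤ (|(α₁ - α₂) / Z₁ * e11 + α₂ * (1 / Z₁ - 1 / Z₂) * e11| + |α₂ / Z₂ * (e11 - e21)|) +
          |α₂ / Z₂ * (e21 - e22)| := by
        exact add_le_add_left (abs_add_le _ _) _
    _ ≤ ((|(α₁ - α₂) / Z₁ * e11| + |α₂ * (1 / Z₁ - 1 / Z₂) * e11|) + |α₂ / Z₂ * (e11 - e21)|) +
          |α₂ / Z₂ * (e21 - e22)| := by
        exact add_le_add_left (add_le_add_left (abs_add_le _ _) _) _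
    _ ≤ 1 / Zl * EH * S + au * KM / Zl ^ 2 * EH * S + au / Zl * D * (2 / a) * EH * S +
          au / Zl * (2 * βu) * (2 / a) * EH * S := by
        have := le_trans h1 b1
        have := le_trans h2 b2
        have := le_trans h3 b3
        have := le_trans h4 b4
        linarith
    _ = (1 / Zl + au * KM / Zl ^ 2 + au / Zl * D * (2 / a) + au / Zl * (2 * βu) * (2 / a)) *
          EH * S := by ring

lemma aux_int_norm {a : ℝ} (ha : 0 < a) :
    Integrable (fun q : EuclideanSpace ℝ (Fin 3) => Real.exp (-(a * ‖q‖))) := by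
  have h4 : (Module.finrank ℝ (EuclideanSpace ℝ (Fin 3)) : ℝ) < 4 := by
    simp [finrank_euclideanSpace]; norm_num
  refine ((integrable_one_add_norm (μ := volume) h4).const_mul
    (Real.exp a * 24 / a ^ 4)).mono'
    ((Real.continuous_exp.comp (continuous_const.mul continuous_norm : Continuous fun q : EuclideanSpace ℝ (Fin 3) => a * ‖q‖).neg).aestronglyMeasurable)
    (Filter.Eventually.of_forall fun q => ?_)
  rw [Real.norm_eq_abs, abs_of_pos (Real.exp_pos _)]
  set t := ‖q‖ with hts
  have ht : 0 ≤ t := norm_nonneg q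
  have key : (a * (1 + t)) ^ 4 / 24 ≤ Real.exp (a * (1 + t)) := by
    have := Real.pow_div_factorial_le_exp (x := a * (1 + t)) (by positivity) 4
    norm_num [Nat.factorial] at this ⊢
    linarith
  have h3 : Real.exp (-(a * t)) * ((a * (1 + t)) ^ 4 / 24) ≤ Real.exp a := by
    calc _ ≤ Real.exp (-(a * t)) * Real.exp (a * (1 + t)) :=
          mul_le_mul_of_nonneg_left key (Real.exp_pos _).le
      _ = Real.exp a := by rw [← Real.exp_add]; ring_nf
  have h5 : (0:ℝ) < (1 + t) ^ 4 := by positivity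
  rw [show (-4 : ℝ) = -(4 : ℕ) by norm_num, Real.rpow_neg (by positivity),
    Real.rpow_natCast, ← div_eq_mul_inv, le_div_iff₀ h5]
  rw [le_div_iff₀ (pow_pos ha 4)]
  nlinarith [h3]

lemma aux_int_exp {k a : ℝ} (ha : 0 < a) :
    Integrable (fun q : EuclideanSpace ℝ (Fin 3) =>
      Real.exp (-(a * Real.sqrt (k ^ 2 + ‖q‖ ^ 2)))) := by
  refine (aux_int_norm ha).mono'
    ((Real.continuous_exp.comp
      (continuous_const.mul (continuous_const.add (continuous_norm.pow 2)).sqrt).neg).aestronglyMeasurable)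
    (Filter.Eventually.of_forall fun q => ?_)
  rw [Real.norm_eq_abs, abs_of_pos (Real.exp_pos _), Real.exp_le_exp]
  have : ‖q‖ ≤ Real.sqrt (k ^ 2 + ‖q‖ ^ 2) := by
    calc ‖q‖ = Real.sqrt (‖q‖ ^ 2) := (Real.sqrt_sq (norm_nonneg q)).symm
      _ ≤ _ := Real.sqrt_le_sqrt (by nlinarith)
  nlinarith

lemma aux_int_div {k a : ℝ} (hk : 0 < k) (ha : 0 < a) :
    Integrable (fun q : EuclideanSpace ℝ (Fin 3) =>
      Real.exp (-(a * Real.sqrt (k ^ 2 + ‖q‖ ^ 2))) / Real.sqrt (k ^ 2 + ‖q‖ ^ 2)) := by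
  have hsq : ∀ q : EuclideanSpace ℝ (Fin 3), k ≤ Real.sqrt (k ^ 2 + ‖q‖ ^ 2) := fun q => by
    calc k = Real.sqrt (k ^ 2) := (Real.sqrt_sq hk.le).symm
      _ ≤ _ := Real.sqrt_le_sqrt (by nlinarith [sq_nonneg ‖q‖])
  have hc : Continuous fun q : EuclideanSpace ℝ (Fin 3) =>
      Real.sqrt (k ^ 2 + ‖q‖ ^ 2) := (continuous_const.add (continuous_norm.pow 2)).sqrt
  refine ((aux_int_exp (k := k) ha).const_mul (1 / k)).mono'
    ((Real.continuous_exp.comp (continuous_const.mul hc).neg).div hc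
      (fun q => by have := hsq q; positivity)).aestronglyMeasurable
    (Filter.Eventually.of_forall fun q => ?_)
  have h1 := hsq q
  have h2 : (0:ℝ) < Real.sqrt (k ^ 2 + ‖q‖ ^ 2) := lt_of_lt_of_le hk h1
  rw [Real.norm_eq_abs, abs_of_pos (by positivity), one_div, mul_comm k⁻¹,
    div_eq_mul_inv]
  exact mul_le_mul_of_nonneg_left (inv_anti₀ hk h1) (Real.exp_pos _).le

lemma aux_point (c βl β₁ β₂ t : ℝ) (hc : 0 < c) (hβl : 0 < βl) (ht : 0 < t)
    (h₁ : βl ≤ β₁) (h₂ : βl ≤ β₂) :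
    |Real.exp (-(c * β₁ * t)) / t - Real.exp (-(c * β₂ * t)) / t| ≤
      c * |β₁ - β₂| * Real.exp (-(c * βl * t)) := by
  rw [div_sub_div_same, abs_div, abs_of_pos ht, div_le_iff₀ ht]
  have hmin : c * βl * t ≤ min (c * β₁ * t) (c * β₂ * t) :=
    le_min (mul_le_mul_of_nonneg_right (mul_le_mul_of_nonneg_left h₁ hc.le) ht.le)
      (mul_le_mul_of_nonneg_right (mul_le_mul_of_nonneg_left h₂ hc.le) ht.le)
  have hE : Real.exp (-min (c * β₁ * t) (c * β₂ * t)) ≤ Real.exp (-(c * βl * t)) :=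
    Real.exp_le_exp.2 (by linarith)
  have habs : |c * β₁ * t - c * β₂ * t| = c * t * |β₁ - β₂| := by
    rw [show c * β₁ * t - c * β₂ * t = c * t * (β₁ - β₂) by ring, abs_mul,
      abs_of_pos (mul_pos hc ht)]
  calc |Real.exp (-(c * β₁ * t)) - Real.exp (-(c * β₂ * t))|
      ≤ Real.exp (-min (c * β₁ * t) (c * β₂ * t)) * |c * β₁ * t - c * β₂ * t| :=
        aux_exp_diff _ _
    _ = Real.exp (-min (c * β₁ * t) (c * β₂ * t)) * (c * t * |β₁ - β₂|) := by rw [habs]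
    _ ≤ Real.exp (-(c * βl * t)) * (c * t * |β₁ - β₂|) :=
        mul_le_mul_of_nonneg_right hE (by positivity)
    _ = c * |β₁ - β₂| * Real.exp (-(c * βl * t)) * t := by ring

lemma aux_S_diff {c Uu : ℝ} (U₁ U₂ : EuclideanSpace ℝ (Fin 3)) :
    |Real.sqrt (c ^ 2 + ‖U₁‖ ^ 2) - Real.sqrt (c ^ 2 + ‖U₂‖ ^ 2)| ≤ ‖U₁ - U₂‖ := by
  have h1 := aux_sqrt_lip c ‖U₁‖ ‖U₂‖ (norm_nonneg _) (norm_nonneg _)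
  have h2 := aux_sqrt_lip c ‖U₂‖ ‖U₁‖ (norm_nonneg _) (norm_nonneg _)
  have h3 : |‖U₁‖ - ‖U₂‖| ≤ ‖U₁ - U₂‖ := abs_norm_sub_norm_le _ _
  rw [abs_sub_comm ‖U₂‖] at h2
  rw [abs_le]
  constructor <;> [linarith; linarith]

lemma aux_W_bounds (c Uu : ℝ) (hc : 0 < c) (hUu : 0 ≤ Uu)
    (U p : EuclideanSpace ℝ (Fin 3)) (hU : ‖U‖ ≤ Uu) (Pp : ℝ) (hPn : ‖p‖ ≤ Pp) :
    c ^ 2 / (Real.sqrt (c ^ 2 + Uu ^ 2) + Uu) * Pp ≤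
        Real.sqrt (c ^ 2 + ‖U‖ ^ 2) * Pp - (inner ℝ U p : ℝ) ∧
      Real.sqrt (c ^ 2 + ‖U‖ ^ 2) * Pp - (inner ℝ U p : ℝ) ≤
        (Real.sqrt (c ^ 2 + Uu ^ 2) + Uu) * Pp := by
  have hPp : 0 ≤ Pp := le_trans (norm_nonneg _) hPn
  set S := Real.sqrt (c ^ 2 + ‖U‖ ^ 2) with hS
  set SQ := Real.sqrt (c ^ 2 + Uu ^ 2) with hSQ
  have hS2 : S ^ 2 = c ^ 2 + ‖U‖ ^ 2 := Real.sq_sqrt (by positivity)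
  have hSQ2 : SQ ^ 2 = c ^ 2 + Uu ^ 2 := Real.sq_sqrt (by positivity)
  have hS0 : 0 ≤ S := Real.sqrt_nonneg _
  have hSQ0 : 0 ≤ SQ := Real.sqrt_nonneg _
  have hUS : ‖U‖ ≤ S := by
    calc ‖U‖ = Real.sqrt (‖U‖ ^ 2) := (Real.sqrt_sq (norm_nonneg _)).symm
      _ ≤ S := Real.sqrt_le_sqrt (by nlinarith)
  have hSSQ : S ≤ SQ := Real.sqrt_le_sqrt (by nlinarith [norm_nonneg U, mul_self_nonneg (Uu - ‖U‖)])
  have hDpos : 0 < SQ + Uu := by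
    have : c ≤ SQ := by
      calc c = Real.sqrt (c ^ 2) := (Real.sqrt_sq hc.le).symm
        _ ≤ SQ := Real.sqrt_le_sqrt (by nlinarith)
    linarith
  have hinner : |(inner ℝ U p : ℝ)| ≤ ‖U‖ * ‖p‖ := abs_real_inner_le_norm U p
  have hinner1 : (inner ℝ U p : ℝ) ≤ ‖U‖ * Pp := by
    have : ‖U‖ * ‖p‖ ≤ ‖U‖ * Pp := mul_le_mul_of_nonneg_left hPn (norm_nonneg _)
    have := le_abs_self (inner ℝ U p : ℝ)
    linarith
  have hinner2 : -(‖U‖ * Pp) ≤ (inner ℝ U p : ℝ) := by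
    have : ‖U‖ * ‖p‖ ≤ ‖U‖ * Pp := mul_le_mul_of_nonneg_left hPn (norm_nonneg _)
    have := neg_abs_le (inner ℝ U p : ℝ)
    linarith
  constructor
  · have hkey : c ^ 2 / (SQ + Uu) ≤ S - ‖U‖ := by
      rw [div_le_iff₀ hDpos]
      nlinarith
    have : c ^ 2 / (SQ + Uu) * Pp ≤ (S - ‖U‖) * Pp :=
      mul_le_mul_of_nonneg_right hkey hPp
    nlinarith
  · nlinarith [mul_le_mul_of_nonneg_right hSSQ hPp, mul_le_mul_of_nonneg_right hU hPp]

lemma aux_W_diff (c : ℝ) (U₁ U₂ p : EuclideanSpace ℝ (Fin 3)) (Pp : ℝ) (hPn : ‖p‖ ≤ Pp) :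
    |(Real.sqrt (c ^ 2 + ‖U₁‖ ^ 2) * Pp - (inner ℝ U₁ p : ℝ)) -
        (Real.sqrt (c ^ 2 + ‖U₂‖ ^ 2) * Pp - (inner ℝ U₂ p : ℝ))| ≤
      2 * ‖U₁ - U₂‖ * Pp := by
  have hPp : 0 ≤ Pp := le_trans (norm_nonneg _) hPn
  have hS := aux_S_diff (c := c) (Uu := 0) U₁ U₂
  have hi : (inner ℝ U₁ p : ℝ) - (inner ℝ U₂ p : ℝ) = (inner ℝ (U₁ - U₂) p : ℝ) :=
    (inner_sub_left U₁ U₂ p).symm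
  have hi2 : |(inner ℝ (U₁ - U₂) p : ℝ)| ≤ ‖U₁ - U₂‖ * ‖p‖ := abs_real_inner_le_norm _ _
  calc |(Real.sqrt (c ^ 2 + ‖U₁‖ ^ 2) * Pp - (inner ℝ U₁ p : ℝ)) -
        (Real.sqrt (c ^ 2 + ‖U₂‖ ^ 2) * Pp - (inner ℝ U₂ p : ℝ))|
      = |(Real.sqrt (c ^ 2 + ‖U₁‖ ^ 2) - Real.sqrt (c ^ 2 + ‖U₂‖ ^ 2)) * Pp -
          (inner ℝ (U₁ - U₂) p : ℝ)| := by rw [← hi]; ring_nf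
    _ ≤ |(Real.sqrt (c ^ 2 + ‖U₁‖ ^ 2) - Real.sqrt (c ^ 2 + ‖U₂‖ ^ 2)) * Pp| +
          |(inner ℝ (U₁ - U₂) p : ℝ)| := abs_sub _ _
    _ ≤ ‖U₁ - U₂‖ * Pp + ‖U₁ - U₂‖ * ‖p‖ := by
        apply add_le_add _ hi2
        rw [abs_mul, abs_of_nonneg hPp]
        exact mul_le_mul_of_nonneg_right hS hPp
    _ ≤ 2 * ‖U₁ - U₂‖ * Pp := by
        have : ‖U₁ - U₂‖ * ‖p‖ ≤ ‖U₁ - U₂‖ * Pp :=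
          mul_le_mul_of_nonneg_left hPn (norm_nonneg _)
        linarith

set_option maxHeartbeats 1600000 in
theorem stmt_18 (c m : ℝ) (hc : 0 < c) (hm : 0 < m)
    (βl βu : ℝ) (hβl : 0 < βl) (hβlu : βl ≤ βu)
    (Uu au : ℝ) (hUu : 0 ≤ Uu) (hau : 0 < au)
    (J : ℝ → ℝ → EuclideanSpace ℝ (Fin 3) → EuclideanSpace ℝ (Fin 3) → ℝ)
    (hJ : ∀ (α β : ℝ) (U p : EuclideanSpace ℝ (Fin 3)),
      J α β U p = (α / ∫ q : EuclideanSpace ℝ (Fin 3),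
          Real.exp (-(c * β) * Real.sqrt ((c * m) ^ 2 + ‖q‖ ^ 2)) /
            Real.sqrt ((c * m) ^ 2 + ‖q‖ ^ 2)) *
        Real.exp (-β * (Real.sqrt (c ^ 2 + ‖U‖ ^ 2) *
          Real.sqrt ((c * m) ^ 2 + ‖p‖ ^ 2) - (inner ℝ U p : ℝ)))) :
    ∃ C > (0 : ℝ), ∃ C' > (0 : ℝ),
      ∀ α₁ ∈ Set.Icc (0 : ℝ) au, ∀ α₂ ∈ Set.Icc (0 : ℝ) au,
      ∀ β₁ ∈ Set.Icc βl βu, ∀ β₂ ∈ Set.Icc βl βu,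
      ∀ U₁ U₂ : EuclideanSpace ℝ (Fin 3), ‖U₁‖ ≤ Uu → ‖U₂‖ ≤ Uu →
      ∀ p : EuclideanSpace ℝ (Fin 3),
        |J α₁ β₁ U₁ p - J α₂ β₂ U₂ p| ≤
          C * Real.exp (-C' * Real.sqrt ((c * m) ^ 2 + ‖p‖ ^ 2)) *
            (|α₁ - α₂| + |β₁ - β₂| + ‖U₁ - U₂‖) := by
  have hcm : 0 < c * m := mul_pos hc hm
  have hPk : ∀ q : EuclideanSpace ℝ (Fin 3),
      c * m ≤ Real.sqrt ((c * m) ^ 2 + ‖q‖ ^ 2) := fun q => by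
    calc c * m = Real.sqrt ((c * m) ^ 2) := (Real.sqrt_sq hcm.le).symm
      _ ≤ _ := Real.sqrt_le_sqrt (by nlinarith [sq_nonneg ‖q‖])
  have hPpos : ∀ q : EuclideanSpace ℝ (Fin 3),
      0 < Real.sqrt ((c * m) ^ 2 + ‖q‖ ^ 2) := fun q => lt_of_lt_of_le hcm (hPk q)
  have hPn : ∀ q : EuclideanSpace ℝ (Fin 3),
      ‖q‖ ≤ Real.sqrt ((c * m) ^ 2 + ‖q‖ ^ 2) := fun q => by
    calc ‖q‖ = Real.sqrt (‖q‖ ^ 2) := (Real.sqrt_sq (norm_nonneg _)).symm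
      _ ≤ _ := Real.sqrt_le_sqrt (by nlinarith [sq_nonneg (c * m)])
  set Z : ℝ → ℝ := fun β => ∫ q : EuclideanSpace ℝ (Fin 3),
      Real.exp (-(c * β) * Real.sqrt ((c * m) ^ 2 + ‖q‖ ^ 2)) /
        Real.sqrt ((c * m) ^ 2 + ‖q‖ ^ 2) with hZdef
  have hint : ∀ β, βl ≤ β → Integrable (fun q : EuclideanSpace ℝ (Fin 3) =>
      Real.exp (-(c * β) * Real.sqrt ((c * m) ^ 2 + ‖q‖ ^ 2)) /
        Real.sqrt ((c * m) ^ 2 + ‖q‖ ^ 2)) := fun β hβ => by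
    have := aux_int_div (k := c * m) hcm (mul_pos hc (lt_of_lt_of_le hβl hβ))
    simpa [neg_mul] using this
  have hZlpos : 0 < Z βu := by
    rw [hZdef]
    refine (integral_pos_iff_support_of_nonneg
      (fun q => le_of_lt (div_pos (Real.exp_pos _) (hPpos q))) (hint βu hβlu)).mpr ?_
    have hsupp : (Function.support fun q : EuclideanSpace ℝ (Fin 3) =>
        Real.exp (-(c * βu) * Real.sqrt ((c * m) ^ 2 + ‖q‖ ^ 2)) /
          Real.sqrt ((c * m) ^ 2 + ‖q‖ ^ 2)) = Set.univ :=
      Set.eq_univ_iff_forall.mpr fun q =>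
        Function.mem_support.mpr (ne_of_gt (div_pos (Real.exp_pos _) (hPpos q)))
    rw [hsupp]
    exact isOpen_univ.measure_pos volume ⟨0, trivial⟩
  have hZmono : ∀ β ∈ Set.Icc βl βu, Z βu ≤ Z β := fun β hβ => by
    simp only [hZdef]
    refine integral_mono (hint βu hβlu) (hint β hβ.1) fun q => ?_
    have h1 : Real.exp (-(c * βu) * Real.sqrt ((c * m) ^ 2 + ‖q‖ ^ 2)) ≤
        Real.exp (-(c * β) * Real.sqrt ((c * m) ^ 2 + ‖q‖ ^ 2)) := by
      apply Real.exp_le_exp.2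
      have hh := mul_le_mul_of_nonneg_right (mul_le_mul_of_nonneg_left hβ.2 hc.le)
        (hPpos q).le
      nlinarith [hh]
    exact (div_le_div_iff_of_pos_right (hPpos q)).2 h1
  set M : ℝ := ∫ q : EuclideanSpace ℝ (Fin 3),
      Real.exp (-(c * βl) * Real.sqrt ((c * m) ^ 2 + ‖q‖ ^ 2)) with hMdef
  have hMint : Integrable (fun q : EuclideanSpace ℝ (Fin 3) =>
      Real.exp (-(c * βl) * Real.sqrt ((c * m) ^ 2 + ‖q‖ ^ 2))) := by
    simpa [neg_mul] using aux_int_exp (k := c * m) (mul_pos hc hβl)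
  have hM0 : 0 ≤ M := by
    rw [hMdef]; exact integral_nonneg fun q => (Real.exp_pos _).le
  have hZsub : ∀ β₁ ∈ Set.Icc βl βu, ∀ β₂ ∈ Set.Icc βl βu,
      |Z β₁ - Z β₂| ≤ c * M * |β₁ - β₂| := fun β₁ h₁ β₂ h₂ => by
    simp only [hZdef]
    rw [← integral_sub (hint β₁ h₁.1) (hint β₂ h₂.1)]
    have hb := (hint β₁ h₁.1).sub (hint β₂ h₂.1)
    calc |∫ q : EuclideanSpace ℝ (Fin 3),
          (Real.exp (-(c * β₁) * Real.sqrt ((c * m) ^ 2 + ‖q‖ ^ 2)) /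
              Real.sqrt ((c * m) ^ 2 + ‖q‖ ^ 2) -
            Real.exp (-(c * β₂) * Real.sqrt ((c * m) ^ 2 + ‖q‖ ^ 2)) /
              Real.sqrt ((c * m) ^ 2 + ‖q‖ ^ 2))|
        = ‖∫ q : EuclideanSpace ℝ (Fin 3),
            (Real.exp (-(c * β₁) * Real.sqrt ((c * m) ^ 2 + ‖q‖ ^ 2)) /
                Real.sqrt ((c * m) ^ 2 + ‖q‖ ^ 2) -
              Real.exp (-(c * β₂) * Real.sqrt ((c * m) ^ 2 + ‖q‖ ^ 2)) /
                Real.sqrt ((c * m) ^ 2 + ‖q‖ ^ 2))‖ := (Real.norm_eq_abs _).symm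
      _ ≤ ∫ q : EuclideanSpace ℝ (Fin 3),
            ‖Real.exp (-(c * β₁) * Real.sqrt ((c * m) ^ 2 + ‖q‖ ^ 2)) /
                Real.sqrt ((c * m) ^ 2 + ‖q‖ ^ 2) -
              Real.exp (-(c * β₂) * Real.sqrt ((c * m) ^ 2 + ‖q‖ ^ 2)) /
                Real.sqrt ((c * m) ^ 2 + ‖q‖ ^ 2)‖ := norm_integral_le_integral_norm _
      _ ≤ ∫ q : EuclideanSpace ℝ (Fin 3),
            c * |β₁ - β₂| * Real.exp (-(c * βl) * Real.sqrt ((c * m) ^ 2 + ‖q‖ ^ 2)) := by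
          refine integral_mono hb.norm (hMint.const_mul _) fun q => ?_
          rw [Real.norm_eq_abs]
          simp only [neg_mul]
          exact aux_point c βl β₁ β₂ (Real.sqrt ((c * m) ^ 2 + ‖q‖ ^ 2)) hc hβl
            (hPpos q) h₁.1 h₂.1
      _ = c * M * |β₁ - β₂| := by rw [integral_const_mul, ← hMdef]; ring
  set SQ := Real.sqrt (c ^ 2 + Uu ^ 2) with hSQdef
  have hSQc : c ≤ SQ := by
    rw [hSQdef]
    calc c = Real.sqrt (c ^ 2) := (Real.sqrt_sq hc.le).symm
      _ ≤ _ := Real.sqrt_le_sqrt (by nlinarith)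
  have hDpos : 0 < SQ + Uu := by linarith
  set δ := c ^ 2 / (SQ + Uu) with hδdef
  have hδpos : 0 < δ := div_pos (by positivity) hDpos
  have hKM0 : 0 ≤ c * M := mul_nonneg hc.le hM0
  have hβu0 : 0 < βu := lt_of_lt_of_le hβl hβlu
  refine ⟨1 / Z βu + au * (c * M) / Z βu ^ 2 + au / Z βu * (SQ + Uu) * (2 / (βl * δ)) +
      au / Z βu * (2 * βu) * (2 / (βl * δ)), ?_, βl * δ / 2,
      div_pos (mul_pos hβl hδpos) two_pos, ?_⟩
  · have h1 : 0 < 1 / Z βu := div_pos one_pos hZlpos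
    have h2 : 0 ≤ au * (c * M) / Z βu ^ 2 :=
      div_nonneg (mul_nonneg hau.le hKM0) (sq_nonneg _)
    have hq : 0 ≤ 2 / (βl * δ) := div_nonneg (by norm_num) (mul_pos hβl hδpos).le
    have h3 : 0 ≤ au / Z βu * (SQ + Uu) * (2 / (βl * δ)) :=
      mul_nonneg (mul_nonneg (div_nonneg hau.le hZlpos.le) hDpos.le) hq
    have h4 : 0 ≤ au / Z βu * (2 * βu) * (2 / (βl * δ)) :=
      mul_nonneg (mul_nonneg (div_nonneg hau.le hZlpos.le) (by positivity)) hq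
    linarith
  intro α₁ hα₁ α₂ hα₂ β₁ hβ₁ β₂ hβ₂ U₁ U₂ hU₁ hU₂ p
  rw [hJ, hJ]
  exact aux_core (Z βu) (Z β₁) (Z β₂) α₁ α₂ β₁ β₂
    (Real.sqrt (c ^ 2 + ‖U₁‖ ^ 2) * Real.sqrt ((c * m) ^ 2 + ‖p‖ ^ 2) - (inner ℝ U₁ p : ℝ))
    (Real.sqrt (c ^ 2 + ‖U₂‖ ^ 2) * Real.sqrt ((c * m) ^ 2 + ‖p‖ ^ 2) - (inner ℝ U₂ p : ℝ))
    (Real.sqrt ((c * m) ^ 2 + ‖p‖ ^ 2)) δ (SQ + Uu) (c * M) ‖U₁ - U₂‖ au βl βu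
    hZlpos (hZmono β₁ hβ₁) (hZmono β₂ hβ₂) hKM0 hDpos.le
    (hZsub β₁ hβ₁ β₂ hβ₂) hα₁ hα₂ hβ₁ hβ₂ hβl hδpos (Real.sqrt_nonneg _) (norm_nonneg _)
    (aux_W_bounds c Uu hc hUu U₁ p hU₁ _ (hPn p)).1
    (aux_W_bounds c Uu hc hUu U₂ p hU₂ _ (hPn p)).1
    (aux_W_bounds c Uu hc hUu U₁ p hU₁ _ (hPn p)).2
    (aux_W_diff c U₁ U₂ p _ (hPn p))
end
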